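/- arXiv:1611.03442 — 4 statements merged into one kernel-verified Lean document; each statement's English description precedes it below -/
import Mathlib

section
/- Let W be a finite real reflection group on V and let u, v ∈ W with uv = vu and ℓ_T(uv) = ℓ_T(u) + ℓ_T(v). Then Mov(v) ⊆ V^u, i.e., every vector in the moved space of v is fixed by u. -/
/-- The minimal length of an expression of `w` as a product of elements of `T`. -/
noncomputable def wordLength {G : Type*} [Group G] (T : Set G) (w : G) : ℕ :=
  sInf {n | ∃ l : List G, (∀ t ∈ l, t ∈ T) ∧ l.length = n ∧ l.prod = w}

variable {V : Type*} [NormedAddCommGroup V] [InnerProductSpace ℝ V] [FiniteDimensional ℝ V]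

/-- The fixed space `V^f` of a linear isometry. -/
noncomputable def fixedSpace (f : V ≃ₗᵢ[ℝ] V) : Submodule ℝ V :=
  LinearMap.ker (f.toLinearEquiv.toLinearMap - LinearMap.id)

/-- The moved space `Mov(f) = im (f - 1)` of a linear isometry. -/
noncomputable def movedSpace (f : V ≃ₗᵢ[ℝ] V) : Submodule ℝ V :=
  LinearMap.range (f.toLinearEquiv.toLinearMap - LinearMap.id)

/-- `f` is an (orthogonal, hyperplane) reflection: the orthogonal reflection in the
hyperplane orthogonal to some nonzero vector `α` (a root of `f`). -/
noncomputable def IsHypReflection (f : V ≃ₗᵢ[ℝ] V) : Prop :=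
  ∃ α : V, α ≠ 0 ∧ f = Submodule.reflection (ℝ ∙ α)ᗮ

open Module Submodule FiniteDimensional
open scoped RealInnerProductSpace
set_option linter.unusedSectionVars false

namespace CarterProof

/-- short name for hyperplane reflection along a root -/
noncomputable abbrev rf (α : V) : V ≃ₗᵢ[ℝ] V := reflection (ℝ ∙ α)ᗮ

lemma reflection_congr {K K' : Submodule ℝ V} [HasOrthogonalProjection K] [HasOrthogonalProjection K'] (h : K = K') :
    (reflection K : V ≃ₗᵢ[ℝ] V) = reflection K' := by subst h; rfl

lemma mem_fixedSpace {f : V ≃ₗᵢ[ℝ] V} {x : V} : x ∈ fixedSpace f ↔ f x = x := by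
  simp only [fixedSpace, LinearMap.mem_ker, LinearMap.sub_apply, LinearMap.id_apply,
    sub_eq_zero]
  exact Iff.rfl

lemma mem_movedSpace {f : V ≃ₗᵢ[ℝ] V} {z : V} : z ∈ movedSpace f ↔ ∃ y, f y - y = z := by
  simp only [movedSpace, LinearMap.mem_range, LinearMap.sub_apply, LinearMap.id_apply]
  exact Iff.rfl

lemma movedSpace_eq_orthogonal (f : V ≃ₗᵢ[ℝ] V) : movedSpace f = (fixedSpace f)ᗮ := by
  have hle : movedSpace f ≤ (fixedSpace f)ᗮ := by
    rintro z hz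
    obtain ⟨y, rfl⟩ := mem_movedSpace.1 hz
    intro u hu
    have hu' : f u = u := mem_fixedSpace.1 hu
    have : ⟪u, f y⟫ = ⟪u, y⟫ := by
      conv_lhs => rw [← hu']
      exact f.inner_map_map u y
    rw [inner_sub_right, this, sub_self]
  have h1 : finrank ℝ (movedSpace f) + finrank ℝ (fixedSpace f) = finrank ℝ V := by
    have := LinearMap.finrank_range_add_finrank_ker
      (f.toLinearEquiv.toLinearMap - LinearMap.id (R := ℝ) (M := V))
    exact this
  have h2 : finrank ℝ (fixedSpace f) + finrank ℝ (fixedSpace f)ᗮ = finrank ℝ V :=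
    Submodule.finrank_add_finrank_orthogonal _
  exact Submodule.eq_of_le_of_finrank_eq hle (by omega)

lemma fixedSpace_rf (α : V) : fixedSpace (rf α) = (ℝ ∙ α)ᗮ := by
  ext y
  rw [mem_fixedSpace]
  exact reflection_eq_self_iff y

lemma movedSpace_rf (α : V) : movedSpace (rf α) = ℝ ∙ α := by
  rw [movedSpace_eq_orthogonal, fixedSpace_rf, Submodule.orthogonal_orthogonal]

lemma rf_mul_self (α : V) : rf α * rf α = 1 := reflection_mul_reflection _

lemma rf_inv (α : V) : (rf α)⁻¹ = rf α := reflection_inv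

lemma rf_neg (α : V) : rf (-α) = rf α := by
  unfold rf
  congr 1
  rw [show (-α) = (-1 : ℝ) • α by simp]
  exact congrArg _ (Submodule.span_singleton_smul_eq (by simp : IsUnit (-1 : ℝ)) α)

lemma rf_smul {c : ℝ} (hc : c ≠ 0) (α : V) : rf (c • α) = rf α := by
  unfold rf
  congr 1
  exact congrArg _ (Submodule.span_singleton_smul_eq (isUnit_iff_ne_zero.2 hc) α)

/-- conjugation of a reflection -/
lemma rf_conj (g : V ≃ₗᵢ[ℝ] V) (α : V) : g * rf α * g⁻¹ = rf (g α) := by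
  have hmap : (ℝ ∙ g α)ᗮ = ((ℝ ∙ α)ᗮ).map (g.toLinearEquiv : V →ₗ[ℝ] V) := by
    ext y
    rw [Submodule.mem_orthogonal_singleton_iff_inner_right, Submodule.mem_map]
    constructor
    · intro h
      refine ⟨g.symm y, Submodule.mem_orthogonal_singleton_iff_inner_right.2 ?_, by simp⟩
      calc ⟪α, g.symm y⟫ = ⟪g α, g (g.symm y)⟫ := (g.inner_map_map α (g.symm y)).symm
        _ = 0 := by rw [g.apply_symm_apply]; exact h
    · rintro ⟨z, hz, rfl⟩
      rw [Submodule.mem_orthogonal_singleton_iff_inner_right] at hz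
      show ⟪g α, g z⟫ = 0
      rw [g.inner_map_map]; exact hz
  ext y
  have h2 := reflection_map_apply g ((ℝ ∙ α)ᗮ) y
  show g (rf α (g⁻¹ y)) = rf (g α) y
  have h3 : rf (g α) = Submodule.reflection (((ℝ ∙ α)ᗮ).map (g.toLinearEquiv : V →ₗ[ℝ] V)) :=
    reflection_congr hmap
  rw [h3, h2]
  rfl

lemma rf_apply_conj (g : V ≃ₗᵢ[ℝ] V) (α : V) (y : V) :
    rf (g α) y = g (rf α (g.symm y)) := by
  have := rf_conj g α
  have h := congrArg (fun (f : V ≃ₗᵢ[ℝ] V) => f y) this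
  simpa using h.symm

end CarterProof

section Bsec
variable {V : Type*} [NormedAddCommGroup V] [InnerProductSpace ℝ V] [FiniteDimensional ℝ V]
open Module Submodule
open scoped RealInnerProductSpace
namespace CarterProof

lemma mul_apply (f g : V ≃ₗᵢ[ℝ] V) (y : V) : (f * g) y = f (g y) := rfl

lemma rf_apply {α : V} (hα : ‖α‖ = 1) (y : V) : rf α y = y - (2 * ⟪α, y⟫) • α := by
  have hproj := starProjection_add_starProjection_orthogonal (K := ℝ ∙ α) y
  have hsing : ((ℝ ∙ α).starProjection y : V) = ⟪α, y⟫ • α :=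
    starProjection_unit_singleton ℝ hα y
  have : rf α y = 2 • ((ℝ ∙ α)ᗮ.starProjection y : V) - y := Submodule.reflection_apply y
  rw [this]
  have h2 : ((ℝ ∙ α)ᗮ.starProjection y : V) = y - ⟪α, y⟫ • α := by
    rw [← hsing]; linear_combination (norm := module) hproj
  rw [h2]
  have : (2 : ℕ) • (y - ⟪α, y⟫ • α) = (2 : ℝ) • (y - ⟪α, y⟫ • α) := by
    simp [two_smul]
  rw [this]
  module

lemma rf_apply_self {α : V} : rf α α = -α :=
  reflection_orthogonalComplement_singleton_eq_neg α

lemma rf_apply_of_inner_eq_zero {α y : V} (h : ⟪α, y⟫ = 0) : rf α y = y :=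
  reflection_mem_subspace_eq_self (Submodule.mem_orthogonal_singleton_iff_inner_right.2 h)

lemma inner_eq_zero_of_mem_moved {w : V ≃ₗᵢ[ℝ] V} {α y : V}
    (hα : α ∈ movedSpace w) (hy : y ∈ fixedSpace w) : ⟪α, y⟫ = 0 := by
  rw [movedSpace_eq_orthogonal] at hα
  rw [real_inner_comm]
  exact hα y hy

lemma fixed_lt_of_mem_moved {w : V ≃ₗᵢ[ℝ] V} {α : V} (hα : α ≠ 0) (h : α ∈ movedSpace w) :
    fixedSpace w < fixedSpace (rf α * w) := by
  obtain ⟨y, hy⟩ := mem_movedSpace.1 h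
  rw [SetLike.lt_iff_le_and_exists]
  constructor
  · intro z hz
    rw [mem_fixedSpace, mul_apply, mem_fixedSpace.1 hz,
      rf_apply_of_inner_eq_zero (inner_eq_zero_of_mem_moved h hz)]
  · refine ⟨y, ?_, ?_⟩
    · rw [mem_fixedSpace, mul_apply]
      have : rf α (w y) = y := by
        rw [← hy]
        exact reflection_sub (w.norm_map y)
      exact this
    · rw [mem_fixedSpace]
      intro hwy
      rw [hwy, sub_self] at hy
      exact hα hy.symm

lemma finrank_moved_add_fixed (w : V ≃ₗᵢ[ℝ] V) :
    finrank ℝ (movedSpace w) + finrank ℝ (fixedSpace w) = finrank ℝ V := by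
  rw [movedSpace_eq_orthogonal]
  have := Submodule.finrank_add_finrank_orthogonal (K := fixedSpace w)
  omega

lemma finrank_moved_mul_lt {w : V ≃ₗᵢ[ℝ] V} {α : V} (hα : α ≠ 0) (h : α ∈ movedSpace w) :
    finrank ℝ (movedSpace (rf α * w)) < finrank ℝ (movedSpace w) := by
  have h1 := finrank_moved_add_fixed w
  have h2 := finrank_moved_add_fixed (rf α * w)
  have h3 : finrank ℝ (fixedSpace w) < finrank ℝ (fixedSpace (rf α * w)) :=
    Submodule.finrank_lt_finrank_of_lt (fixed_lt_of_mem_moved hα h)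
  omega

lemma movedSpace_mul_le (f g : V ≃ₗᵢ[ℝ] V) :
    movedSpace (f * g) ≤ movedSpace f ⊔ movedSpace g := by
  rintro z hz
  obtain ⟨y, rfl⟩ := mem_movedSpace.1 hz
  have : (f * g) y - y = (f (g y) - g y) + (g y - y) := by
    rw [mul_apply]; abel
  rw [this]
  exact Submodule.add_mem_sup (mem_movedSpace.2 ⟨g y, rfl⟩) (mem_movedSpace.2 ⟨y, rfl⟩)

lemma eq_one_of_movedSpace_eq_bot {f : V ≃ₗᵢ[ℝ] V} (h : movedSpace f = ⊥) : f = 1 := by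
  ext y
  have : f y - y ∈ movedSpace f := mem_movedSpace.2 ⟨y, rfl⟩
  rw [h, Submodule.mem_bot, sub_eq_zero] at this
  simpa using this

lemma finrank_movedSpace_rf {α : V} (hα : α ≠ 0) : finrank ℝ (movedSpace (rf α)) = 1 := by
  rw [movedSpace_rf]
  exact finrank_span_singleton hα

lemma finrank_movedSpace_prod_le (L : List (V ≃ₗᵢ[ℝ] V))
    (h : ∀ f ∈ L, IsHypReflection f) :
    finrank ℝ (movedSpace L.prod) ≤ L.length := by
  induction L with
  | nil =>
    simp only [List.prod_nil, List.length_nil, Nat.le_zero]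
    have : movedSpace (1 : V ≃ₗᵢ[ℝ] V) = ⊥ := by
      rw [eq_bot_iff]
      rintro z hz
      obtain ⟨y, rfl⟩ := mem_movedSpace.1 hz
      simp
    exact Submodule.finrank_eq_zero.2 this
  | cons a L ih =>
    obtain ⟨α, hα, rfl⟩ := h a (List.mem_cons_self)
    have h1 := movedSpace_mul_le (rf α) L.prod
    have h2 : finrank ℝ ↥(movedSpace (rf α) ⊔ movedSpace L.prod) ≤
        1 + finrank ℝ (movedSpace L.prod) := by
      have := Submodule.finrank_sup_add_finrank_inf_eq (movedSpace (rf α)) (movedSpace L.prod)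
      have hr := finrank_movedSpace_rf hα
      omega
    have h3 := Submodule.finrank_mono h1
    have h4 := ih (fun f hf => h f (List.mem_cons_of_mem _ hf))
    simp only [List.prod_cons, List.length_cons]
    show finrank ℝ (movedSpace (rf α * L.prod)) ≤ L.length + 1
    omega

end CarterProof
end Bsec
section Csec
variable {V : Type*} [NormedAddCommGroup V] [InnerProductSpace ℝ V] [FiniteDimensional ℝ V]
open Module Submodule
open scoped RealInnerProductSpace
namespace CarterProof

variable (W : Subgroup (V ≃ₗᵢ[ℝ] V))

def RootSet : Set V := {α | ‖α‖ = 1 ∧ rf α ∈ W}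

variable {W}

lemma rootSet_norm {α : V} (h : α ∈ RootSet W) : ‖α‖ = 1 := h.1

lemma rootSet_rf_mem {α : V} (h : α ∈ RootSet W) : rf α ∈ W := h.2

lemma rootSet_ne_zero {α : V} (h : α ∈ RootSet W) : α ≠ 0 := by
  intro e
  have := h.1
  rw [e, norm_zero] at this
  norm_num at this

lemma rootSet_neg {α : V} (h : α ∈ RootSet W) : -α ∈ RootSet W :=
  ⟨by rw [norm_neg]; exact h.1, by rw [rf_neg]; exact h.2⟩

lemma rootSet_apply_mem {g : V ≃ₗᵢ[ℝ] V} (hg : g ∈ W) {α : V} (h : α ∈ RootSet W) :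
    g α ∈ RootSet W := by
  refine ⟨by rw [g.norm_map]; exact h.1, ?_⟩
  rw [← rf_conj]
  exact mul_mem (mul_mem hg h.2) (inv_mem hg)

lemma rootSet_finite [Finite W] : (RootSet W).Finite := by
  classical
  have hsub : RootSet W ⊆ ⋃ t ∈ (W : Set (V ≃ₗᵢ[ℝ] V)), {α : V | rf α = t ∧ ‖α‖ = 1} := by
    intro α hα
    simp only [Set.mem_iUnion, Set.mem_setOf_eq]
    exact ⟨rf α, hα.2, rfl, hα.1⟩
  refine Set.Finite.subset (Set.Finite.biUnion (Set.toFinite _) ?_) hsub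
  intro t _
  rcases Set.eq_empty_or_nonempty {α : V | rf α = t ∧ ‖α‖ = 1} with he | ⟨a, ha⟩
  · rw [he]; exact Set.finite_empty
  · refine Set.Finite.subset ((Set.finite_singleton (-a)).insert a) ?_
    intro β hβ
    have hspan : (ℝ ∙ β) = (ℝ ∙ a) := by
      have h1 : rf β = rf a := by rw [hβ.1, ha.1]
      have h2 := congrArg fixedSpace h1
      rw [fixedSpace_rf, fixedSpace_rf] at h2
      have := congrArg Submodule.orthogonal h2
      rwa [Submodule.orthogonal_orthogonal, Submodule.orthogonal_orthogonal] at this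
    have hmem : β ∈ (ℝ ∙ a) := hspan ▸ Submodule.mem_span_singleton_self β
    obtain ⟨c, rfl⟩ := Submodule.mem_span_singleton.1 hmem
    have hc : |c| = 1 := by
      have h1 : ‖c • a‖ = 1 := hβ.2
      rw [norm_smul, ha.2, mul_one] at h1
      exact h1
    rcases abs_eq (by norm_num : (0:ℝ) ≤ 1) |>.1 hc with h | h
    · rw [h, one_smul]; exact Set.mem_insert _ _
    · rw [h, neg_one_smul]; exact Set.mem_insert_iff.2 (Or.inr rfl)

lemma exists_avoid (F : Submodule ℝ V) (H : V → Submodule ℝ V) (s : Finset V)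
    (hs : ∀ a ∈ s, ¬ F ≤ H a) : ∃ x ∈ F, ∀ a ∈ s, x ∉ H a := by
  classical
  induction s using Finset.induction_on with
  | empty => exact ⟨0, F.zero_mem, by simp⟩
  | @insert a s ha ih =>
    obtain ⟨x, hxF, hx⟩ := ih (fun j hj => hs j (Finset.mem_insert_of_mem hj))
    obtain ⟨y, hyF, hya⟩ := SetLike.not_le_iff_exists.1 (hs a (Finset.mem_insert_self a s))
    by_cases hxa : x ∈ H a
    · set bad : Finset ℝ :=
        insert 0 (s.image fun j => if h : ∃ c : ℝ, x + c • y ∈ H j then h.choose else 0) with hbad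
      obtain ⟨c, hc⟩ := Infinite.exists_notMem_finset bad
      have hc0 : c ≠ 0 := fun e => hc (by rw [e, hbad]; exact Finset.mem_insert_self _ _)
      refine ⟨x + c • y, F.add_mem hxF (F.smul_mem c hyF), ?_⟩
      intro j hj
      rcases Finset.mem_insert.1 hj with rfl | hj
      · intro hmem
        have : c • y ∈ H j := by
          have := (H j).sub_mem hmem hxa
          simpa using this
        have hy' := (H j).smul_mem c⁻¹ this
        rw [smul_smul, inv_mul_cancel₀ hc0, one_smul] at hy'
        exact hya hy'
      · intro hmem
        have hex : ∃ c' : ℝ, x + c' • y ∈ H j := ⟨c, hmem⟩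
        have hch : hex.choose ∈ bad := by
          rw [hbad]
          refine Finset.mem_insert_of_mem (Finset.mem_image.2 ⟨j, hj, ?_⟩)
          rw [dif_pos hex]
        have hne : c ≠ hex.choose := fun e => hc (e ▸ hch)
        have h1 : x + hex.choose • y ∈ H j := hex.choose_spec
        have h2 : (c - hex.choose) • y ∈ H j := by
          have := (H j).sub_mem hmem h1
          have heq : x + c • y - (x + hex.choose • y) = (c - hex.choose) • y := by
            rw [sub_smul]; abel
          rwa [heq] at this
        have hy' : y ∈ H j := by
          have := (H j).smul_mem (c - hex.choose)⁻¹ h2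
          rwa [smul_smul, inv_mul_cancel₀ (sub_ne_zero.2 hne), one_smul] at this
        have : x ∈ H j := by
          have := (H j).sub_mem hmem ((H j).smul_mem c hy')
          simpa using this
        exact hx j hj this
    · exact ⟨x, hxF, fun j hj => by
        rcases Finset.mem_insert.1 hj with rfl | hj
        · exact hxa
        · exact hx j hj⟩

end CarterProof
end Csec
section Esec
variable {V : Type*} [NormedAddCommGroup V] [InnerProductSpace ℝ V] [FiniteDimensional ℝ V]
open Module Submodule Finset
open scoped RealInnerProductSpace
namespace CarterProof

variable (W : Subgroup (V ≃ₗᵢ[ℝ] V)) [Finite W] (x : V)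

noncomputable def rootFinset : Finset V := (rootSet_finite (W := W)).toFinset

lemma mem_rootFinset {α : V} : α ∈ rootFinset W ↔ α ∈ RootSet W :=
  Set.Finite.mem_toFinset _

noncomputable def posR : Finset V := (rootFinset W).filter (fun α => 0 < ⟪α, x⟫)

variable {W x}

lemma mem_posR {α : V} : α ∈ posR W x ↔ α ∈ RootSet W ∧ 0 < ⟪α, x⟫ := by
  rw [posR, Finset.mem_filter, mem_rootFinset]

lemma posR_root {α : V} (h : α ∈ posR W x) : α ∈ RootSet W := (mem_posR.1 h).1

lemma posR_pos {α : V} (h : α ∈ posR W x) : 0 < ⟪α, x⟫ := (mem_posR.1 h).2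

lemma posR_norm {α : V} (h : α ∈ posR W x) : ‖α‖ = 1 := (posR_root h).1

section Reg
variable (hreg : ∀ α ∈ RootSet W, ⟪α, x⟫ ≠ 0)
include hreg

lemma sign_dichotomy {α : V} (h : α ∈ RootSet W) : α ∈ posR W x ∨ -α ∈ posR W x := by
  rcases lt_or_gt_of_ne (hreg α h) with hlt | hgt
  · right
    exact mem_posR.2 ⟨rootSet_neg h, by rw [inner_neg_left]; linarith⟩
  · left
    exact mem_posR.2 ⟨h, hgt⟩

end Reg

lemma posR_not_neg {α : V} (h : α ∈ posR W x) : -α ∉ posR W x := by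
  intro h'
  have h1 := posR_pos h
  have h2 := posR_pos h'
  rw [inner_neg_left] at h2
  linarith

/-- membership in the nonnegative cone spanned by a finite set -/
def InCone (S : Finset V) (γ : V) : Prop :=
  ∃ c : V → ℝ, (∀ v, 0 ≤ c v) ∧ γ = ∑ v ∈ S, c v • v

lemma sum_single_coeff [DecidableEq V] {S : Finset V} {a : V} (h : a ∈ S) (k : ℝ) :
    ∑ v ∈ S, (if v = a then k else 0) • v = k • a := by
  rw [Finset.sum_eq_single_of_mem a h (fun b _ hb => by simp [hb])]
  simp

lemma inCone_self {S : Finset V} {γ : V} (h : γ ∈ S) : InCone S γ := by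
  classical
  refine ⟨fun v => if v = γ then 1 else 0, fun v => by positivity, ?_⟩
  rw [sum_single_coeff h 1, one_smul]

lemma cone_sum_add (S : Finset V) (f g : V → ℝ) :
    ∑ v ∈ S, (f v + g v) • v = (∑ v ∈ S, f v • v) + ∑ v ∈ S, g v • v := by
  rw [← Finset.sum_add_distrib]
  exact Finset.sum_congr rfl fun v _ => add_smul _ _ _

lemma cone_sum_sub (S : Finset V) (f g : V → ℝ) :
    ∑ v ∈ S, (f v - g v) • v = (∑ v ∈ S, f v • v) - ∑ v ∈ S, g v • v := by
  rw [← Finset.sum_sub_distrib]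
  exact Finset.sum_congr rfl fun v _ => sub_smul _ _ _

lemma cone_smul_sum (S : Finset V) (r : ℝ) (f : V → ℝ) :
    r • ∑ v ∈ S, f v • v = ∑ v ∈ S, (r * f v) • v := by
  rw [Finset.smul_sum]
  exact Finset.sum_congr rfl fun v _ => (smul_smul _ _ _)

lemma inner_cone_sum (S : Finset V) (f : V → ℝ) (y : V) :
    ⟪∑ v ∈ S, f v • v, y⟫ = ∑ v ∈ S, f v * ⟪v, y⟫ := by
  rw [sum_inner]
  exact Finset.sum_congr rfl fun v _ => real_inner_smul_left _ _ _

/-- no nontrivial vanishing nonnegative combination of positive roots -/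
lemma relzero {S : Finset V} (hS : S ⊆ posR W x) (c : V → ℝ) (hc : ∀ v ∈ S, 0 ≤ c v)
    {v0 : V} (hv0 : v0 ∈ S) (hv0pos : 0 < c v0)
    (hzero : ∑ v ∈ S, c v • v = 0) : False := by
  have h1 : (0 : ℝ) = ∑ v ∈ S, c v * ⟪v, x⟫ := by
    rw [← inner_cone_sum, hzero, inner_zero_left]
  have h2 : 0 < ∑ v ∈ S, c v * ⟪v, x⟫ := by
    refine Finset.sum_pos' (fun v hv => mul_nonneg (hc v hv) (le_of_lt (posR_pos (hS hv)))) ?_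
    exact ⟨v0, hv0, mul_pos hv0pos (posR_pos (hS hv0))⟩
  linarith

/-- substitution into cone representations -/
lemma inCone_subst [DecidableEq V] {Δ : Finset V} {δ0 : V} (hδ0 : δ0 ∈ Δ)
    (hrep : InCone (Δ.erase δ0) δ0) {γ : V} (hγ : InCone Δ γ) :
    InCone (Δ.erase δ0) γ := by
  obtain ⟨e, he, heq⟩ := hrep
  obtain ⟨c, hc, hceq⟩ := hγ
  refine ⟨fun v => c v + c δ0 * e v, fun v => add_nonneg (hc v) (mul_nonneg (hc δ0) (he v)), ?_⟩
  have hsplit : γ = c δ0 • δ0 + ∑ v ∈ Δ.erase δ0, c v • v := by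
    rw [hceq, ← Finset.add_sum_erase _ _ hδ0]
  rw [cone_sum_add, ← cone_smul_sum, ← heq, add_comm]
  exact hsplit

end CarterProof
end Esec
section E2sec
variable {V : Type*} [NormedAddCommGroup V] [InnerProductSpace ℝ V] [FiniteDimensional ℝ V]
open Module Submodule Finset
open scoped RealInnerProductSpace
namespace CarterProof

variable {W : Subgroup (V ≃ₗᵢ[ℝ] V)} [Finite W] {x : V}

variable (W x) in
/-- a simple system : a minimal positive-cone generating subset of the positive roots -/
def IsSimple [DecidableEq V] (Δ : Finset V) : Prop :=
  Δ ⊆ posR W x ∧ (∀ α ∈ posR W x, InCone Δ α) ∧ ∀ δ ∈ Δ, ¬ InCone (Δ.erase δ) δ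

lemma exists_simple [DecidableEq V] : ∃ Δ : Finset V, IsSimple W x Δ := by
  classical
  set cands := (posR W x).powerset.filter (fun S => ∀ α ∈ posR W x, InCone S α) with hcands
  have hne : cands.Nonempty := by
    refine ⟨posR W x, Finset.mem_filter.2 ⟨Finset.mem_powerset_self _, ?_⟩⟩
    exact fun α hα => inCone_self hα
  obtain ⟨Δ, hΔmem, hΔmin⟩ := Finset.exists_min_image cands Finset.card hne
  have hΔp := Finset.mem_filter.1 hΔmem
  have hΔsub : Δ ⊆ posR W x := Finset.mem_powerset.1 hΔp.1
  refine ⟨Δ, hΔsub, hΔp.2, ?_⟩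
  intro δ hδ hcone
  have hc : Δ.erase δ ∈ cands := by
    refine Finset.mem_filter.2 ⟨Finset.mem_powerset.2 ((Finset.erase_subset _ _).trans hΔsub), ?_⟩
    exact fun α hα => inCone_subst hδ hcone (hΔp.2 α hα)
  have := hΔmin _ hc
  have hlt : (Δ.erase δ).card < Δ.card := Finset.card_erase_lt_of_mem hδ
  omega

section withSimple
variable [DecidableEq V] {Δ : Finset V}
variable (hreg : ∀ α ∈ RootSet W, ⟪α, x⟫ ≠ 0) (hS : IsSimple W x Δ)
include hreg hS

lemma simple_obtuse {α β : V} (hα : α ∈ Δ) (hβ : β ∈ Δ) (hne : α ≠ β) : ⟪α, β⟫ ≤ 0 := by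
  by_contra hpos
  push_neg at hpos
  obtain ⟨hΔsub, hP, hind⟩ := hS
  have hαR : α ∈ RootSet W := posR_root (hΔsub hα)
  have hβR : β ∈ RootSet W := posR_root (hΔsub hβ)
  set k := 2 * ⟪α, β⟫ with hk
  have hkpos : 0 < k := by rw [hk]; linarith
  have hγ : rf α β = β - k • α := rf_apply hαR.1 β
  have hγR : rf α β ∈ RootSet W := rootSet_apply_mem hαR.2 hβR
  rcases sign_dichotomy hreg hγR with hsgn | hsgn
  · obtain ⟨d, hd, hdeq⟩ := hP _ hsgn
    have hβeq : β = k • α + ∑ v ∈ Δ, d v • v := by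
      rw [← hdeq]
      rw [hγ]
      abel
    by_cases hd1 : d β < 1
    · refine hind β hβ ?_
      have hαerase : α ∈ Δ.erase β := Finset.mem_erase.2 ⟨hne, hα⟩
      have hid : (1 - d β) • β = k • α + ∑ v ∈ Δ.erase β, d v • v := by
        have hsplit : ∑ v ∈ Δ, d v • v = d β • β + ∑ v ∈ Δ.erase β, d v • v :=
          (Finset.add_sum_erase _ _ hβ).symm
        rw [hsplit] at hβeq
        linear_combination (norm := module) hβeq
      have hpos1 : (0:ℝ) < 1 - d β := by linarith
      refine ⟨fun v => (1 - d β)⁻¹ * ((if v = α then k else 0) + d v), fun v => ?_, ?_⟩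
      · refine mul_nonneg (le_of_lt (inv_pos.2 hpos1)) (add_nonneg ?_ (hd v))
        split <;> [exact le_of_lt hkpos; exact le_rfl]
      · have h2 : ∑ v ∈ Δ.erase β, ((if v = α then k else 0) + d v) • v =
            k • α + ∑ v ∈ Δ.erase β, d v • v := by
          rw [cone_sum_add, sum_single_coeff hαerase k]
        calc β = (1 - d β)⁻¹ • ((1 - d β) • β) := by
              rw [smul_smul, inv_mul_cancel₀ (ne_of_gt hpos1), one_smul]
          _ = (1 - d β)⁻¹ • ∑ v ∈ Δ.erase β, ((if v = α then k else 0) + d v) • v := by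
              rw [hid, ← h2]
          _ = ∑ v ∈ Δ.erase β, ((1 - d β)⁻¹ * ((if v = α then k else 0) + d v)) • v :=
              cone_smul_sum _ _ _
    · push_neg at hd1
      refine relzero (S := Δ) hΔsub
        (fun v => (if v = α then k else 0) + d v - (if v = β then 1 else 0))
        ?_ hα ?_ ?_
      · intro v hv
        by_cases hvβ : v = β
        · subst hvβ
          rw [if_neg (fun h => hne (h.symm)), if_pos rfl]
          linarith [hd v]
        · rw [if_neg hvβ]
          have : (0:ℝ) ≤ (if v = α then k else 0) := by
            split <;> [exact le_of_lt hkpos; exact le_rfl]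
          linarith [hd v]
      · rw [if_pos rfl, if_neg hne]
        have := hd α
        linarith
      · rw [cone_sum_sub, cone_sum_add, sum_single_coeff hα k, sum_single_coeff hβ 1, one_smul]
        linear_combination (norm := module) -hβeq
  · obtain ⟨d, hd, hdeq⟩ := hP _ hsgn
    have hkeq : k • α = β + ∑ v ∈ Δ, d v • v := by
      rw [← hdeq, hγ]
      abel
    by_cases hdα : d α < k
    · refine hind α hα ?_
      have hβerase : β ∈ Δ.erase α := Finset.mem_erase.2 ⟨fun h => hne h.symm, hβ⟩
      have hid : (k - d α) • α = β + ∑ v ∈ Δ.erase α, d v • v := by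
        have hsplit : ∑ v ∈ Δ, d v • v = d α • α + ∑ v ∈ Δ.erase α, d v • v :=
          (Finset.add_sum_erase _ _ hα).symm
        rw [hsplit] at hkeq
        linear_combination (norm := module) hkeq
      have hpos1 : (0:ℝ) < k - d α := by linarith
      refine ⟨fun v => (k - d α)⁻¹ * ((if v = β then 1 else 0) + d v), fun v => ?_, ?_⟩
      · refine mul_nonneg (le_of_lt (inv_pos.2 hpos1)) (add_nonneg ?_ (hd v))
        split <;> norm_num
      · have h2 : ∑ v ∈ Δ.erase α, ((if v = β then 1 else 0) + d v) • v =
            β + ∑ v ∈ Δ.erase α, d v • v := by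
          rw [cone_sum_add, sum_single_coeff hβerase 1, one_smul]
        calc α = (k - d α)⁻¹ • ((k - d α) • α) := by
              rw [smul_smul, inv_mul_cancel₀ (ne_of_gt hpos1), one_smul]
          _ = (k - d α)⁻¹ • ∑ v ∈ Δ.erase α, ((if v = β then 1 else 0) + d v) • v := by
              rw [hid, ← h2]
          _ = ∑ v ∈ Δ.erase α, ((k - d α)⁻¹ * ((if v = β then 1 else 0) + d v)) • v :=
              cone_smul_sum _ _ _
    · push_neg at hdα
      refine relzero (S := Δ) hΔsub
        (fun v => (if v = β then 1 else 0) + d v - (if v = α then k else 0))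
        ?_ hβ ?_ ?_
      · intro v hv
        by_cases hvα : v = α
        · subst hvα
          rw [if_neg hne, if_pos rfl]
          linarith [hd v]
        · rw [if_neg hvα]
          have : (0:ℝ) ≤ (if v = β then 1 else 0) := by split <;> norm_num
          linarith [hd v]
      · rw [if_pos rfl, if_neg (fun h => hne h.symm)]
        have := hd β
        linarith
      · rw [cone_sum_sub, cone_sum_add, sum_single_coeff hβ 1, sum_single_coeff hα k, one_smul]
        linear_combination (norm := module) -hkeq

end withSimple
end CarterProof
end E2sec
section E3sec
variable {V : Type*} [NormedAddCommGroup V] [InnerProductSpace ℝ V] [FiniteDimensional ℝ V]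
open Module Submodule Finset
open scoped RealInnerProductSpace
namespace CarterProof

variable {W : Subgroup (V ≃ₗᵢ[ℝ] V)} [Finite W] {x : V}
variable [DecidableEq V] {Δ : Finset V}
variable (hreg : ∀ α ∈ RootSet W, ⟪α, x⟫ ≠ 0) (hS : IsSimple W x Δ)
include hreg hS

lemma simple_perm {δ β : V} (hδ : δ ∈ Δ) (hβ : β ∈ posR W x) (hne : β ≠ δ) :
    rf δ β ∈ posR W x := by
  obtain ⟨hΔsub, hP, hind⟩ := id hS
  have hδR : δ ∈ RootSet W := posR_root (hΔsub hδ)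
  have hβR : β ∈ RootSet W := posR_root hβ
  set k := 2 * ⟪δ, β⟫ with hk
  have hγ : rf δ β = β - k • δ := rf_apply hδR.1 β
  have hγR : rf δ β ∈ RootSet W := rootSet_apply_mem hδR.2 hβR
  by_contra hnot
  rcases sign_dichotomy hreg hγR with h | h
  · exact hnot h
  obtain ⟨d, hd, hdeq⟩ := hP _ h
  rw [hγ] at hdeq
  have hkeq : k • δ = β + ∑ v ∈ Δ, d v • v := by
    linear_combination (norm := module) hdeq
  obtain ⟨c, hc, hceq⟩ := hP β hβ
  have hδ0 : ∃ δ0 ∈ Δ, δ0 ≠ δ ∧ 0 < c δ0 := by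
    by_contra hcon
    push_neg at hcon
    have hβδ : β = c δ • δ := by
      rw [hceq]
      refine Finset.sum_eq_single_of_mem δ hδ (fun b hb hbδ => ?_)
      have h1 := hcon b hb hbδ
      have h2 := hc b
      have : c b = 0 := le_antisymm h1 h2
      rw [this, zero_smul]
    have hβx : ⟪β, x⟫ = c δ * ⟪δ, x⟫ := by rw [hβδ, real_inner_smul_left]
    have hδx := posR_pos (hΔsub hδ)
    have hβxpos := posR_pos hβ
    have hcδpos : 0 < c δ := by
      by_contra hneg
      push_neg at hneg
      nlinarith
    have hnorm : ‖β‖ = c δ * ‖δ‖ := by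
      rw [hβδ, norm_smul, Real.norm_eq_abs, abs_of_pos hcδpos]
    rw [posR_norm hβ, posR_norm (hΔsub hδ), mul_one] at hnorm
    rw [← hnorm, one_smul] at hβδ
    exact hne hβδ
  obtain ⟨δ0, hδ0Δ, hδ0ne, hδ0pos⟩ := hδ0
  by_cases hs : 0 ≤ c δ + d δ - k
  · refine relzero (S := Δ) hΔsub (fun v => c v + d v - (if v = δ then k else 0)) ?_ hδ0Δ ?_ ?_
    · intro v hv
      by_cases hvδ : v = δ
      · subst hvδ; rw [if_pos rfl]; linarith
      · rw [if_neg hvδ]; have := hc v; have := hd v; linarith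
    · rw [if_neg hδ0ne]
      have := hd δ0
      linarith
    · rw [cone_sum_sub, cone_sum_add, sum_single_coeff hδ k, ← hceq]
      linear_combination (norm := module) -hkeq
  · push_neg at hs
    have hid : (k - c δ - d δ) • δ = ∑ v ∈ Δ.erase δ, (c v + d v) • v := by
      have h3 : ∑ v ∈ Δ, (c v + d v) • v = k • δ := by
        rw [cone_sum_add, ← hceq]
        linear_combination (norm := module) -hkeq
      have hsplitc : ∑ v ∈ Δ, (c v + d v) • v
          = (c δ + d δ) • δ + ∑ v ∈ Δ.erase δ, (c v + d v) • v :=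
        (Finset.add_sum_erase _ _ hδ).symm
      rw [h3] at hsplitc
      linear_combination (norm := module) hsplitc
    have hL : ⟪(k - c δ - d δ) • δ, δ⟫ = k - c δ - d δ := by
      rw [real_inner_smul_left, real_inner_self_eq_norm_sq, posR_norm (hΔsub hδ)]
      norm_num
    have hR : ⟪∑ v ∈ Δ.erase δ, (c v + d v) • v, δ⟫ ≤ 0 := by
      rw [inner_cone_sum]
      refine Finset.sum_nonpos (fun v hv => ?_)
      have hvE := Finset.mem_erase.1 hv
      refine mul_nonpos_of_nonneg_of_nonpos (add_nonneg (hc v) (hd v)) ?_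
      exact simple_obtuse hreg hS hvE.2 hδ hvE.1
    rw [hid] at hL
    rw [hL] at hR
    linarith

lemma simple_perm_ne {δ β : V} (hδ : δ ∈ Δ) (hβ : β ∈ posR W x) (hne : β ≠ δ) :
    rf δ β ≠ δ := by
  intro heq
  have h1 : β = rf δ δ := by
    have := congrArg (rf δ) heq
    rwa [← mul_apply, rf_mul_self, LinearIsometryEquiv.coe_one, id_eq] at this
  rw [rf_apply_self] at h1
  exact posR_not_neg (hS.1 hδ) (h1 ▸ hβ)

lemma gen_aux : ∀ n : ℕ, ∀ α, α ∈ posR W x →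
    ((posR W x).filter (fun β => ⟪β, x⟫ < ⟪α, x⟫)).card ≤ n →
    ∃ l : List V, (∀ v ∈ l, v ∈ Δ) ∧ ∃ δ ∈ Δ, α = ((l.map rf).prod) δ := by
  intro n
  induction n using Nat.strong_induction_on with
  | _ n IH =>
    intro α hα hcard
    by_cases hαΔ : α ∈ Δ
    · exact ⟨[], by simp, α, hαΔ, by simp⟩
    · obtain ⟨c, hc, hceq⟩ := hS.2.1 α hα
      have hsum : ∑ v ∈ Δ, c v * ⟪v, α⟫ = 1 := by
        rw [← inner_cone_sum, ← hceq, real_inner_self_eq_norm_sq, posR_norm hα]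
        norm_num
      have hex : ∃ v ∈ Δ, 0 < c v * ⟪v, α⟫ := by
        by_contra hcon
        push_neg at hcon
        have := Finset.sum_nonpos hcon
        rw [hsum] at this
        linarith
      obtain ⟨v, hvΔ, hvpos⟩ := hex
      have hcv : 0 < c v := by
        rcases lt_or_eq_of_le (hc v) with h | h
        · exact h
        · rw [← h, zero_mul] at hvpos; linarith
      have hvα : 0 < ⟪v, α⟫ := by nlinarith
      have hvne : α ≠ v := fun h => hαΔ (h ▸ hvΔ)
      have hβmem : rf v α ∈ posR W x := simple_perm hreg hS hvΔ hα hvne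
      set β := rf v α with hβdef
      have hβeq : β = α - (2 * ⟪v, α⟫) • v := rf_apply (posR_norm (hS.1 hvΔ)) α
      have hlvl : ⟪β, x⟫ < ⟪α, x⟫ := by
        rw [hβeq, inner_sub_left, real_inner_smul_left]
        have hvx := posR_pos (hS.1 hvΔ)
        nlinarith
      have hsub : (posR W x).filter (fun γ => ⟪γ, x⟫ < ⟪β, x⟫) ⊆
          (posR W x).filter (fun γ => ⟪γ, x⟫ < ⟪α, x⟫) := by
        intro γ hγ
        rw [Finset.mem_filter] at hγ ⊢
        exact ⟨hγ.1, lt_trans hγ.2 hlvl⟩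
      have hss : (posR W x).filter (fun γ => ⟪γ, x⟫ < ⟪β, x⟫) ⊂
          (posR W x).filter (fun γ => ⟪γ, x⟫ < ⟪α, x⟫) := by
        refine (Finset.ssubset_iff_of_subset hsub).2 ⟨β, ?_, ?_⟩
        · exact Finset.mem_filter.2 ⟨hβmem, hlvl⟩
        · intro hmem
          exact absurd (Finset.mem_filter.1 hmem).2 (lt_irrefl _)
      have hlt := Finset.card_lt_card hss
      obtain ⟨l, hl, δ, hδ, heq⟩ :=
        IH _ (lt_of_lt_of_le hlt hcard) β hβmem le_rfl
      refine ⟨v :: l, ?_, δ, hδ, ?_⟩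
      · intro u hu
        rcases List.mem_cons.1 hu with rfl | hu
        · exact hvΔ
        · exact hl u hu
      · have hinv : α = rf v β := by
          rw [hβdef, ← mul_apply, rf_mul_self, LinearIsometryEquiv.coe_one, id_eq]
        rw [hinv, heq]
        simp [List.map_cons, List.prod_cons, mul_apply]

omit hreg hS in
lemma pr_reverse (l : List V) : ((l.map rf).prod)⁻¹ = ((l.reverse.map rf).prod : V ≃ₗᵢ[ℝ] V) := by
  induction l with
  | nil => simp
  | cons a t ih =>
    rw [List.map_cons, List.prod_cons, mul_inv_rev, ih, List.reverse_cons, List.map_append,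
      List.prod_append]
    simp [rf_inv]

lemma gen_rf_pos {α : V} (hα : α ∈ posR W x) :
    ∃ l : List V, (∀ v ∈ l, v ∈ Δ) ∧ rf α = ((l.map rf).prod : V ≃ₗᵢ[ℝ] V) := by
  obtain ⟨l, hl, δ, hδ, heq⟩ := gen_aux hreg hS _ α hα le_rfl
  refine ⟨l ++ [δ] ++ l.reverse, ?_, ?_⟩
  · intro u hu
    rcases List.mem_append.1 hu with hu | hu
    · rcases List.mem_append.1 hu with hu | hu
      · exact hl u hu
      · rw [List.mem_singleton.1 hu]; exact hδ
    · exact hl u (List.mem_reverse.1 hu)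
  · rw [heq, ← rf_conj ((l.map rf).prod) δ]
    rw [List.map_append, List.map_append, List.prod_append, List.prod_append]
    rw [List.map_singleton, List.prod_singleton, pr_reverse]

lemma gen_rf {α : V} (hα : α ∈ RootSet W) :
    ∃ l : List V, (∀ v ∈ l, v ∈ Δ) ∧ rf α = ((l.map rf).prod : V ≃ₗᵢ[ℝ] V) := by
  rcases sign_dichotomy hreg hα with hp | hp
  · exact gen_rf_pos hreg hS hp
  · obtain ⟨l, hl, heq⟩ := gen_rf_pos hreg hS hp
    exact ⟨l, hl, by rw [← rf_neg α]; exact heq⟩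

end CarterProof
end E3sec
section Fsec
variable {V : Type*} [NormedAddCommGroup V] [InnerProductSpace ℝ V] [FiniteDimensional ℝ V]
open Module Submodule Finset
open scoped RealInnerProductSpace
namespace CarterProof

variable {W : Subgroup (V ≃ₗᵢ[ℝ] V)} [Finite W] {x : V}

lemma pr_mem {l : List V} (hl : ∀ v ∈ l, v ∈ RootSet W) :
    ((l.map rf).prod : V ≃ₗᵢ[ℝ] V) ∈ W := by
  induction l with
  | nil => simpa using W.one_mem
  | cons a t ih =>
    rw [List.map_cons, List.prod_cons]
    exact mul_mem (rootSet_rf_mem (hl a (List.mem_cons_self)))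
      (ih fun v hv => hl v (List.mem_cons_of_mem _ hv))

variable (W x) in
noncomputable def ninv (g : V ≃ₗᵢ[ℝ] V) : ℕ :=
  ((posR W x).filter (fun β => ⟪g β, x⟫ < 0)).card

variable [DecidableEq V] {Δ : Finset V}
variable (hreg : ∀ α ∈ RootSet W, ⟪α, x⟫ ≠ 0) (hS : IsSimple W x Δ)
include hreg hS

lemma ninv_step_aux {g : V ≃ₗᵢ[ℝ] V} (hδ : δ ∈ Δ) :
    ((posR W x).filter (fun β => ⟪(g * rf δ) β, x⟫ < 0)).erase δ
      = (((posR W x).filter (fun β => ⟪g β, x⟫ < 0)).erase δ).image (rf δ) := by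
  ext β
  simp only [Finset.mem_erase, Finset.mem_filter, Finset.mem_image]
  constructor
  · rintro ⟨hne, hβp, hlt⟩
    refine ⟨rf δ β, ⟨simple_perm_ne hreg hS hδ hβp hne, simple_perm hreg hS hδ hβp hne, ?_⟩, ?_⟩
    · rw [mul_apply] at hlt
      exact hlt
    · rw [← mul_apply, rf_mul_self, LinearIsometryEquiv.coe_one, id_eq]
  · rintro ⟨β', ⟨hne', hβ'p, hlt'⟩, rfl⟩
    refine ⟨simple_perm_ne hreg hS hδ hβ'p hne', simple_perm hreg hS hδ hβ'p hne', ?_⟩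
    rw [mul_apply, ← mul_apply (rf δ) (rf δ), rf_mul_self, LinearIsometryEquiv.coe_one, id_eq]
    exact hlt'

lemma ninv_step_pos {g : V ≃ₗᵢ[ℝ] V} (hδ : δ ∈ Δ) (h : 0 < ⟪g δ, x⟫) :
    ninv W x (g * rf δ) = ninv W x g + 1 := by
  classical
  set A := (posR W x).filter (fun β => ⟪g β, x⟫ < 0) with hA
  set A' := (posR W x).filter (fun β => ⟪(g * rf δ) β, x⟫ < 0) with hA'
  have hδpos : δ ∈ posR W x := hS.1 hδ
  have hδA' : δ ∈ A' := by
    rw [hA', Finset.mem_filter]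
    refine ⟨hδpos, ?_⟩
    rw [mul_apply, rf_apply_self, map_neg, inner_neg_left]
    linarith
  have hδA : δ ∉ A := by
    rw [hA, Finset.mem_filter]
    rintro ⟨-, hlt⟩
    linarith
  have hcard : (A'.erase δ).card = (A.erase δ).card := by
    rw [show A'.erase δ = (A.erase δ).image (rf δ) from ninv_step_aux hreg hS hδ]
    exact Finset.card_image_of_injective _ (rf δ).injective
  have h1 : (A'.erase δ).card + 1 = A'.card := Finset.card_erase_add_one hδA'
  have h2 : A.erase δ = A := Finset.erase_eq_of_notMem hδA
  show A'.card = A.card + 1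
  rw [← h1, hcard, h2]

lemma ninv_step_neg {g : V ≃ₗᵢ[ℝ] V} (hδ : δ ∈ Δ) (h : ⟪g δ, x⟫ < 0) :
    ninv W x (g * rf δ) + 1 = ninv W x g := by
  classical
  set A := (posR W x).filter (fun β => ⟪g β, x⟫ < 0) with hA
  set A' := (posR W x).filter (fun β => ⟪(g * rf δ) β, x⟫ < 0) with hA'
  have hδpos : δ ∈ posR W x := hS.1 hδ
  have hδA' : δ ∉ A' := by
    rw [hA', Finset.mem_filter]
    rintro ⟨-, hlt⟩
    rw [mul_apply, rf_apply_self, map_neg, inner_neg_left] at hlt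
    linarith
  have hδA : δ ∈ A := Finset.mem_filter.2 ⟨hδpos, h⟩
  have hcard : (A'.erase δ).card = (A.erase δ).card := by
    rw [show A'.erase δ = (A.erase δ).image (rf δ) from ninv_step_aux hreg hS hδ]
    exact Finset.card_image_of_injective _ (rf δ).injective
  have h1 : (A.erase δ).card + 1 = A.card := Finset.card_erase_add_one hδA
  have h2 : A'.erase δ = A' := Finset.erase_eq_of_notMem hδA'
  show A'.card + 1 = A.card
  rw [← h1, ← hcard, h2]

lemma ninv_eq_length {l : List V} (hl : ∀ v ∈ l, v ∈ Δ)
    (hnd : ∀ l₁ δ l₂, l = l₁ ++ δ :: l₂ → 0 ≤ ⟪((l₁.map rf).prod) δ, x⟫) :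
    ninv W x ((l.map rf).prod) = l.length := by
  induction l using List.reverseRecOn with
  | nil =>
    rw [List.map_nil, List.prod_nil, List.length_nil, ninv]
    rw [Finset.card_eq_zero, Finset.filter_eq_empty_iff]
    intro β hβ
    rw [LinearIsometryEquiv.coe_one, id_eq]
    have := posR_pos hβ
    linarith
  | append_singleton t δ ih =>
    have hδΔ : δ ∈ Δ := hl δ (by simp)
    have htΔ : ∀ v ∈ t, v ∈ Δ := fun v hv => hl v (by simp [hv])
    have hnd' : ∀ l₁ δ' l₂, t = l₁ ++ δ' :: l₂ → 0 ≤ ⟪((l₁.map rf).prod) δ', x⟫ := by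
      intro l₁ δ' l₂ heq
      refine hnd l₁ δ' (l₂ ++ [δ]) ?_
      rw [heq]
      simp
    have hsign := hnd t δ [] (by simp)
    have hmemR : ((t.map rf).prod) δ ∈ RootSet W :=
      rootSet_apply_mem (pr_mem (fun v hv => posR_root (hS.1 (htΔ v hv))))
        (posR_root (hS.1 hδΔ))
    have hpos : 0 < ⟪((t.map rf).prod) δ, x⟫ :=
      lt_of_le_of_ne hsign (Ne.symm (hreg _ hmemR))
    rw [List.map_append, List.prod_append, List.map_singleton, List.prod_singleton]
    rw [ninv_step_pos hreg hS hδΔ hpos, ih htΔ hnd', List.length_append,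
      List.length_singleton]

lemma flip : ∀ (m : List V) (θ : V), (∀ v ∈ m, v ∈ Δ) → θ ∈ posR W x →
    ⟪((m.map rf).prod) θ, x⟫ < 0 →
    ∃ m₁ s m₂, m = m₁ ++ s :: m₂ ∧ ((m₂.map rf).prod) θ = s := by
  intro m
  induction m with
  | nil =>
    intro θ _ hθ hlt
    rw [List.map_nil, List.prod_nil, LinearIsometryEquiv.coe_one, id_eq] at hlt
    have := posR_pos hθ
    linarith
  | cons a m' ih =>
    intro θ hm hθ hlt
    have haΔ : a ∈ Δ := hm a (List.mem_cons_self)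
    have hm' : ∀ v ∈ m', v ∈ Δ := fun v hv => hm v (List.mem_cons_of_mem _ hv)
    have hψR : ((m'.map rf).prod) θ ∈ RootSet W :=
      rootSet_apply_mem (pr_mem (fun v hv => posR_root (hS.1 (hm' v hv)))) (posR_root hθ)
    rcases lt_trichotomy (⟪((m'.map rf).prod) θ, x⟫) 0 with hneg | heq0 | hposψ
    · obtain ⟨m₁, s, m₂, heq, hs⟩ := ih θ hm' hθ hneg
      exact ⟨a :: m₁, s, m₂, by rw [heq]; rfl, hs⟩
    · exact absurd heq0 (hreg _ hψR)
    · have hψp : ((m'.map rf).prod) θ ∈ posR W x := mem_posR.2 ⟨hψR, hposψ⟩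
      by_cases hψa : ((m'.map rf).prod) θ = a
      · exact ⟨[], a, m', by simp, hψa⟩
      · exfalso
        have hmem := simple_perm hreg hS haΔ hψp hψa
        have hys := posR_pos hmem
        rw [List.map_cons, List.prod_cons, mul_apply] at hlt
        linarith

lemma prod_eq_one_of_ninv_zero : ∀ N (l : List V), l.length ≤ N → (∀ v ∈ l, v ∈ Δ) →
    ninv W x ((l.map rf).prod) = 0 → ((l.map rf).prod : V ≃ₗᵢ[ℝ] V) = 1 := by
  intro N
  induction N with
  | zero =>
    intro l hlen _ _
    rw [List.length_eq_zero_iff.1 (Nat.le_zero.1 hlen)]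
    simp
  | succ N IH =>
    intro l hlen hl hninv
    by_cases hdes : ∃ l₁ δ l₂, l = l₁ ++ δ :: l₂ ∧ ⟪((l₁.map rf).prod) δ, x⟫ < 0
    · obtain ⟨l₁, δ, l₂, rfl, hneg⟩ := hdes
      have hδΔ : δ ∈ Δ := hl δ (by simp)
      have hl₁ : ∀ v ∈ l₁, v ∈ Δ := fun v hv => hl v (by simp [hv])
      obtain ⟨m₁, s, m₂, heq1, hs⟩ := flip hreg hS l₁ δ hl₁ (hS.1 hδΔ) hneg
      have hm₂ : ∀ v ∈ m₂, v ∈ Δ := by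
        intro v hv
        exact hl₁ v (by rw [heq1]; simp [hv])
      have hm₁ : ∀ v ∈ m₁, v ∈ Δ := by
        intro v hv
        exact hl₁ v (by rw [heq1]; simp [hv])
      have hl₂ : ∀ v ∈ l₂, v ∈ Δ := fun v hv => hl v (by simp [hv])
      have hrfs : rf s = ((m₂.map rf).prod : V ≃ₗᵢ[ℝ] V) * rf δ * ((m₂.map rf).prod)⁻¹ := by
        rw [rf_conj ((m₂.map rf).prod) δ, hs]
      have hkey : (((l₁ ++ δ :: l₂).map rf).prod : V ≃ₗᵢ[ℝ] V)
          = (((m₁ ++ m₂ ++ l₂).map rf).prod : V ≃ₗᵢ[ℝ] V) := by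
        rw [heq1]
        simp only [List.map_append, List.prod_append, List.map_cons, List.prod_cons]
        rw [hrfs]
        group
        rw [mul_assoc _ (rf δ) (rf δ), rf_mul_self, mul_one]
      rw [hkey] at hninv ⊢
      refine IH _ ?_ ?_ hninv
      · have hlen1 : (l₁ ++ δ :: l₂).length ≤ N + 1 := hlen
        rw [heq1] at hlen1
        simp only [List.length_append, List.length_cons] at hlen1
        simp only [List.length_append]
        omega
      · intro v hv
        simp only [List.mem_append] at hv
        rcases hv with (hv | hv) | hv
        · exact hm₁ v hv
        · exact hm₂ v hv
        · exact hl₂ v hv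
    · push_neg at hdes
      have hlength := ninv_eq_length hreg hS hl hdes
      have hlen0 : l.length = 0 := by rw [← hlength, hninv]
      rw [List.length_eq_zero_iff.1 hlen0]
      simp

end CarterProof
end Fsec
section Gsec
variable {V : Type*} [NormedAddCommGroup V] [InnerProductSpace ℝ V] [FiniteDimensional ℝ V]
open Module Submodule Finset
open scoped RealInnerProductSpace
namespace CarterProof

variable {W : Subgroup (V ≃ₗᵢ[ℝ] V)} [Finite W]

lemma stab_regular_list {x : V} (hreg : ∀ α ∈ RootSet W, ⟪α, x⟫ ≠ 0)
    {l : List V} (hl : ∀ α ∈ l, α ∈ RootSet W)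
    (hx : ((l.map rf).prod) x = x) :
    ((l.map rf).prod : V ≃ₗᵢ[ℝ] V) = 1 := by
  classical
  obtain ⟨Δ, hS⟩ := exists_simple (W := W) (x := x)
  have hconv : ∀ (m : List V), (∀ α ∈ m, α ∈ RootSet W) →
      ∃ L : List V, (∀ v ∈ L, v ∈ Δ) ∧
        ((m.map rf).prod : V ≃ₗᵢ[ℝ] V) = (L.map rf).prod := by
    intro m hm
    induction m with
    | nil => exact ⟨[], by simp, by simp⟩
    | cons a t ih =>
      obtain ⟨L1, hL1, hL1eq⟩ := gen_rf hreg hS (hm a (List.mem_cons_self))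
      obtain ⟨L2, hL2, hL2eq⟩ := ih (fun v hv => hm v (List.mem_cons_of_mem _ hv))
      refine ⟨L1 ++ L2, ?_, ?_⟩
      · intro v hv
        rcases List.mem_append.1 hv with hv | hv
        · exact hL1 v hv
        · exact hL2 v hv
      · rw [List.map_cons, List.prod_cons, List.map_append, List.prod_append,
          ← hL1eq, ← hL2eq]
  obtain ⟨L, hL, heq⟩ := hconv l hl
  have hgW : ((l.map rf).prod : V ≃ₗᵢ[ℝ] V) ∈ W := pr_mem hl
  have hninv : ninv W x ((l.map rf).prod) = 0 := by
    rw [ninv, Finset.card_eq_zero, Finset.filter_eq_empty_iff]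
    intro β hβ
    have hβR : ((l.map rf).prod) β ∈ RootSet W :=
      rootSet_apply_mem hgW (posR_root hβ)
    have : ⟪((l.map rf).prod) β, x⟫ = ⟪β, x⟫ := by
      conv_lhs => rw [← hx]
      exact LinearIsometryEquiv.inner_map_map _ β x
    rw [this]
    have := posR_pos hβ
    linarith
  rw [heq] at hninv ⊢
  exact prod_eq_one_of_ninv_zero hreg hS L.length L le_rfl hL hninv

lemma exists_root_word
    (hgen : Subgroup.closure {t : W | IsHypReflection ((t : V ≃ₗᵢ[ℝ] V))} = ⊤) (w : W) :
    ∃ l : List V, (∀ α ∈ l, α ∈ RootSet W) ∧ (w : V ≃ₗᵢ[ℝ] V) = (l.map rf).prod := by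
  classical
  have hw : w ∈ Subgroup.closure {t : W | IsHypReflection ((t : V ≃ₗᵢ[ℝ] V))} := by
    rw [hgen]; trivial
  induction hw using Subgroup.closure_induction with
  | mem t ht =>
    obtain ⟨α, hα0, heq⟩ := ht
    have hnorm : ‖α‖ ≠ 0 := norm_ne_zero_iff.2 hα0
    refine ⟨[‖α‖⁻¹ • α], ?_, ?_⟩
    · intro β hβ
      rw [List.mem_singleton.1 hβ]
      constructor
      · rw [norm_smul, norm_inv, norm_norm, inv_mul_cancel₀ hnorm]
      · rw [rf_smul (inv_ne_zero hnorm) α]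
        show Submodule.reflection (ℝ ∙ α)ᗮ ∈ W
        rw [← heq]
        exact t.2
    · rw [List.map_singleton, List.prod_singleton, rf_smul (inv_ne_zero hnorm) α]
      exact heq
  | one => exact ⟨[], by simp, by simp⟩
  | mul g h _ _ ihg ihh =>
    obtain ⟨l₁, hl₁, he₁⟩ := ihg
    obtain ⟨l₂, hl₂, he₂⟩ := ihh
    refine ⟨l₁ ++ l₂, ?_, ?_⟩
    · intro α hα
      rcases List.mem_append.1 hα with h | h
      · exact hl₁ α h
      · exact hl₂ α h
    · rw [List.map_append, List.prod_append, ← he₁, ← he₂]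
      rfl
  | inv g _ ihg =>
    obtain ⟨l, hl, he⟩ := ihg
    refine ⟨l.reverse, fun α hα => hl α (List.mem_reverse.1 hα), ?_⟩
    rw [← pr_reverse, ← he]
    rfl

lemma exists_descent
    (hgen : Subgroup.closure {t : W | IsHypReflection ((t : V ≃ₗᵢ[ℝ] V))} = ⊤)
    (w : W) (hne : (w : V ≃ₗᵢ[ℝ] V) ≠ 1) :
    ∃ t : W, IsHypReflection ((t : V ≃ₗᵢ[ℝ] V)) ∧
      finrank ℝ (movedSpace (((t * w : W)) : V ≃ₗᵢ[ℝ] V)) <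
        finrank ℝ (movedSpace ((w : V ≃ₗᵢ[ℝ] V))) := by
  classical
  by_cases hroot : ∃ α ∈ RootSet W, α ∈ movedSpace ((w : V ≃ₗᵢ[ℝ] V))
  · obtain ⟨α, hαR, hαM⟩ := hroot
    refine ⟨⟨rf α, hαR.2⟩, ⟨α, rootSet_ne_zero hαR, rfl⟩, ?_⟩
    exact finrank_moved_mul_lt (rootSet_ne_zero hαR) hαM
  · push_neg at hroot
    exfalso
    have hnotle : ∀ α ∈ rootFinset W, ¬ (fixedSpace ((w : V ≃ₗᵢ[ℝ] V)) ≤ (ℝ ∙ α)ᗮ) := by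
      intro α hα hle
      apply hroot α ((mem_rootFinset W).1 hα)
      rw [movedSpace_eq_orthogonal]
      intro y hy
      exact Submodule.mem_orthogonal_singleton_iff_inner_left.1 (hle hy)
    obtain ⟨x, hxF, hxa⟩ :=
      exists_avoid (fixedSpace ((w : V ≃ₗᵢ[ℝ] V))) (fun α => (ℝ ∙ α)ᗮ) (rootFinset W) hnotle
    have hreg : ∀ α ∈ RootSet W, ⟪α, x⟫ ≠ 0 := by
      intro α hα h0
      exact hxa α ((mem_rootFinset W).2 hα)
        (Submodule.mem_orthogonal_singleton_iff_inner_right.2 h0)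
    obtain ⟨l, hl, heq⟩ := exists_root_word hgen w
    have hx : ((l.map rf).prod) x = x := by
      rw [← heq]
      exact mem_fixedSpace.1 hxF
    have := stab_regular_list hreg hl hx
    rw [← heq] at this
    exact hne this

section WL
variable {G : Type*} [Group G]

lemma wordLength_le (T : Set G) (l : List G) (hl : ∀ t ∈ l, t ∈ T) :
    wordLength T l.prod ≤ l.length :=
  Nat.sInf_le ⟨l, hl, rfl, rfl⟩

lemma exists_minimal_word (T : Set G) (w : G)
    (hex : ∃ l : List G, (∀ t ∈ l, t ∈ T) ∧ l.prod = w) :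
    ∃ l : List G, (∀ t ∈ l, t ∈ T) ∧ l.length = wordLength T w ∧ l.prod = w := by
  obtain ⟨l₀, hl₀, hp₀⟩ := hex
  have hne : {n | ∃ l : List G, (∀ t ∈ l, t ∈ T) ∧ l.length = n ∧ l.prod = w}.Nonempty :=
    ⟨l₀.length, l₀, hl₀, rfl, hp₀⟩
  obtain ⟨l, hl, hlen, hprod⟩ := Nat.sInf_mem hne
  exact ⟨l, hl, hlen, hprod⟩

end WL

lemma exists_word_W
    (hgen : Subgroup.closure {t : W | IsHypReflection ((t : V ≃ₗᵢ[ℝ] V))} = ⊤) (w : W) :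
    ∃ l : List W, (∀ t ∈ l, t ∈ {t : W | IsHypReflection ((t : V ≃ₗᵢ[ℝ] V))}) ∧ l.prod = w := by
  have hw : w ∈ Subgroup.closure {t : W | IsHypReflection ((t : V ≃ₗᵢ[ℝ] V))} := by
    rw [hgen]; trivial
  induction hw using Subgroup.closure_induction with
  | mem t ht => exact ⟨[t], by simpa using ht, by simp⟩
  | one => exact ⟨[], by simp, by simp⟩
  | mul g h _ _ ihg ihh =>
    obtain ⟨l₁, hl₁, he₁⟩ := ihg
    obtain ⟨l₂, hl₂, he₂⟩ := ihh
    refine ⟨l₁ ++ l₂, ?_, by rw [List.prod_append, he₁, he₂]⟩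
    intro t ht
    rcases List.mem_append.1 ht with h' | h'
    · exact hl₁ t h'
    · exact hl₂ t h'
  | inv g _ ihg =>
    obtain ⟨l, hl, he⟩ := ihg
    refine ⟨(l.map (fun t => t⁻¹)).reverse, ?_, ?_⟩
    · intro t ht
      rw [List.mem_reverse] at ht
      obtain ⟨s, hs, rfl⟩ := List.mem_map.1 ht
      obtain ⟨α, hα0, heq⟩ := hl s hs
      refine ⟨α, hα0, ?_⟩
      show ((s : V ≃ₗᵢ[ℝ] V))⁻¹ = Submodule.reflection (ℝ ∙ α)ᗮ
      rw [heq]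
      exact reflection_inv
    · rw [← List.prod_inv_reverse, he]

lemma rf_invol_W {t : W} (ht : IsHypReflection ((t : V ≃ₗᵢ[ℝ] V))) : t * t = 1 := by
  obtain ⟨α, hα0, heq⟩ := ht
  have : ((t * t : W) : V ≃ₗᵢ[ℝ] V) = 1 := by
    push_cast [heq]
    exact rf_mul_self α
  exact Subtype.ext this

lemma wordLength_le_finrank
    (hgen : Subgroup.closure {t : W | IsHypReflection ((t : V ≃ₗᵢ[ℝ] V))} = ⊤) (w : W) :
    wordLength {t : W | IsHypReflection ((t : V ≃ₗᵢ[ℝ] V))} w ≤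
      finrank ℝ (movedSpace ((w : V ≃ₗᵢ[ℝ] V))) := by
  suffices h : ∀ n (w : W), finrank ℝ (movedSpace ((w : V ≃ₗᵢ[ℝ] V))) = n →
      wordLength {t : W | IsHypReflection ((t : V ≃ₗᵢ[ℝ] V))} w ≤ n by
    exact h _ w rfl
  intro n
  induction n using Nat.strong_induction_on with
  | _ n IH =>
    intro w hn
    by_cases h1 : (w : V ≃ₗᵢ[ℝ] V) = 1
    · have hw1 : w = 1 := Subtype.ext h1
      have : wordLength {t : W | IsHypReflection ((t : V ≃ₗᵢ[ℝ] V))} w ≤ 0 := by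
        rw [hw1]
        exact le_trans (le_of_eq (congrArg _ (List.prod_nil).symm))
          (wordLength_le _ [] (by simp)) |>.trans (by simp)
      omega
    · obtain ⟨t, hT, hlt⟩ := exists_descent hgen w h1
      obtain ⟨l, hlT, hlen, hprod⟩ := exists_minimal_word _ (t * w) (exists_word_W hgen (t * w))
      have hw : (t :: l).prod = w := by
        rw [List.prod_cons, hprod, ← mul_assoc, rf_invol_W hT, one_mul]
      have h2 : wordLength {t : W | IsHypReflection ((t : V ≃ₗᵢ[ℝ] V))} w ≤ l.length + 1 := by
        have := wordLength_le {t : W | IsHypReflection ((t : V ≃ₗᵢ[ℝ] V))} (t :: l)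
          (fun s hs => by
            rcases List.mem_cons.1 hs with rfl | hs
            · exact hT
            · exact hlT s hs)
        rw [hw, List.length_cons] at this
        exact this
      have h3 := IH _ (hn ▸ hlt) (t * w) rfl
      rw [← hlen] at h3
      omega

lemma finrank_le_wordLength
    (hgen : Subgroup.closure {t : W | IsHypReflection ((t : V ≃ₗᵢ[ℝ] V))} = ⊤) (w : W) :
    finrank ℝ (movedSpace ((w : V ≃ₗᵢ[ℝ] V))) ≤
      wordLength {t : W | IsHypReflection ((t : V ≃ₗᵢ[ℝ] V))} w := by
  obtain ⟨l, hlT, hlen, hprod⟩ := exists_minimal_word _ w (exists_word_W hgen w)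
  have hco : (w : V ≃ₗᵢ[ℝ] V) = ((l.map (fun t : W => (t : V ≃ₗᵢ[ℝ] V))).prod) := by
    rw [← hprod]
    exact (SubmonoidClass.coe_list_prod l)
  have hbound := finrank_movedSpace_prod_le (l.map (fun t : W => (t : V ≃ₗᵢ[ℝ] V)))
    (fun f hf => by
      obtain ⟨s, hs, rfl⟩ := List.mem_map.1 hf
      exact hlT s hs)
  rw [← hco, List.length_map, hlen] at hbound
  exact hbound

end CarterProof
end Gsec

open Module Submodule
open CarterProof

/-- Let `W` be a finite real reflection group on `V` and `u, v ∈ W` with `uv = vu` and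
`ℓ_T(uv) = ℓ_T(u) + ℓ_T(v)`. Then `Mov(v) ⊆ V^u`. -/
theorem movedSpace_le_fixedSpace (W : Subgroup (V ≃ₗᵢ[ℝ] V)) [Finite W]
    (hgen : Subgroup.closure {x : W | IsHypReflection (x : V ≃ₗᵢ[ℝ] V)} = ⊤)
    (u v : W) (hcomm : u * v = v * u)
    (hadd : wordLength {x : W | IsHypReflection (x : V ≃ₗᵢ[ℝ] V)} (u * v) =
      wordLength {x : W | IsHypReflection (x : V ≃ₗᵢ[ℝ] V)} u +
        wordLength {x : W | IsHypReflection (x : V ≃ₗᵢ[ℝ] V)} v) :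
    movedSpace (v : V ≃ₗᵢ[ℝ] V) ≤ fixedSpace (u : V ≃ₗᵢ[ℝ] V) := by
  have hhard := wordLength_le_finrank hgen (u * v)
  have heasyu := finrank_le_wordLength hgen u
  have heasyv := finrank_le_wordLength hgen v
  have hco : (((u * v : W)) : V ≃ₗᵢ[ℝ] V) = (u : V ≃ₗᵢ[ℝ] V) * (v : V ≃ₗᵢ[ℝ] V) := rfl
  rw [hco] at hhard
  have hsup : movedSpace ((u : V ≃ₗᵢ[ℝ] V) * (v : V ≃ₗᵢ[ℝ] V)) ≤
      movedSpace (u : V ≃ₗᵢ[ℝ] V) ⊔ movedSpace (v : V ≃ₗᵢ[ℝ] V) := movedSpace_mul_le _ _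
  have h1 := Submodule.finrank_mono hsup
  have hdim := Submodule.finrank_sup_add_finrank_inf_eq
    (movedSpace (u : V ≃ₗᵢ[ℝ] V)) (movedSpace (v : V ≃ₗᵢ[ℝ] V))
  have hinf : finrank ℝ
      ↥(movedSpace (u : V ≃ₗᵢ[ℝ] V) ⊓ movedSpace (v : V ≃ₗᵢ[ℝ] V)) = 0 := by
    omega
  have hbot : movedSpace (u : V ≃ₗᵢ[ℝ] V) ⊓ movedSpace (v : V ≃ₗᵢ[ℝ] V) = ⊥ :=
    Submodule.finrank_eq_zero.1 hinf
  intro z hz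
  rw [mem_fixedSpace]
  have hcz : (u : V ≃ₗᵢ[ℝ] V) z - z ∈ movedSpace (u : V ≃ₗᵢ[ℝ] V) :=
    mem_movedSpace.2 ⟨z, rfl⟩
  have hcomm' : ∀ y : V, (u : V ≃ₗᵢ[ℝ] V) ((v : V ≃ₗᵢ[ℝ] V) y)
      = (v : V ≃ₗᵢ[ℝ] V) ((u : V ≃ₗᵢ[ℝ] V) y) := by
    intro y
    have h := congrArg (fun g : W => ((g : V ≃ₗᵢ[ℝ] V)) y) hcomm
    exact h
  have hz2 : (u : V ≃ₗᵢ[ℝ] V) z - z ∈ movedSpace (v : V ≃ₗᵢ[ℝ] V) := by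
    obtain ⟨y, hy⟩ := mem_movedSpace.1 hz
    have huz : (u : V ≃ₗᵢ[ℝ] V) z ∈ movedSpace (v : V ≃ₗᵢ[ℝ] V) := by
      refine mem_movedSpace.2 ⟨(u : V ≃ₗᵢ[ℝ] V) y, ?_⟩
      rw [← hcomm' y, ← map_sub, hy]
    exact Submodule.sub_mem _ huz hz
  have hmem : (u : V ≃ₗᵢ[ℝ] V) z - z ∈ (⊥ : Submodule ℝ V) :=
    hbot ▸ Submodule.mem_inf.2 ⟨hcz, hz2⟩
  rw [Submodule.mem_bot] at hmem
  exact sub_eq_zero.1 hmem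
end

section
/- Let W be a finite real reflection group on V and let u, v ∈ W with uv = vu and ℓ_T(uv) = ℓ_T(u) + ℓ_T(v). If t, t' are reflections with t ≤_T u and t' ≤_T v, then t and t' commute. -/
variable {V : Type*} [NormedAddCommGroup V] [InnerProductSpace ℝ V] [FiniteDimensional ℝ V]

namespace CarterAux

open Module RealInnerProductSpace Submodule

/-- The reflection with root `α`. -/
noncomputable def sref (α : V) : V ≃ₗᵢ[ℝ] V := reflection (ℝ ∙ α)ᗮ

lemma sref_apply (α y : V) : sref α y = y - (2 * ⟪α, y⟫ / (‖α‖ ^ 2)) • α := by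
  have h := Submodule.starProjection_add_starProjection_orthogonal (K := ℝ ∙ α) y
  have hs : (ℝ ∙ α).starProjection y = (⟪α, y⟫ / (‖α‖ ^ 2)) • α :=
    Submodule.starProjection_singleton ℝ y
  have h2 : (ℝ ∙ α)ᗮ.starProjection y = y - (⟪α, y⟫ / (‖α‖ ^ 2)) • α := by
    rw [← hs, eq_sub_iff_add_eq, add_comm]; exact h
  rw [sref, Submodule.reflection_apply, h2, two_smul]
  rw [mul_div_assoc, two_mul, add_smul]
  abel

lemma sref_apply_unit {α : V} (hα : ‖α‖ = 1) (y : V) :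
    sref α y = y - (2 * ⟪α, y⟫) • α := by
  rw [sref_apply, hα]; norm_num

lemma sref_self (α : V) : sref α α = -α :=
  reflection_orthogonalComplement_singleton_eq_neg α

lemma sref_mul_self (α : V) : sref α * sref α = 1 := by
  ext y
  have := reflection_involutive (𝕜 := ℝ) (ℝ ∙ α)ᗮ y
  simpa [sref, LinearIsometryEquiv.coe_mul] using this

lemma sref_inv (α : V) : (sref α)⁻¹ = sref α := by
  rw [eq_comm, eq_inv_iff_mul_eq_one, sref_mul_self]

lemma sref_smul {α : V} {c : ℝ} (hc : c ≠ 0) : sref (c • α) = sref α := by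
  rcases eq_or_ne α 0 with rfl | hα
  · simp
  · ext y
    rw [sref_apply, sref_apply, real_inner_smul_left, norm_smul, smul_smul, mul_pow]
    have hn : ‖α‖ ≠ 0 := norm_ne_zero_iff.2 hα
    have hc2 : ‖c‖ ^ 2 = c ^ 2 := by rw [Real.norm_eq_abs, sq_abs]
    rw [hc2]
    have hkey : 2 * (c * ⟪α, y⟫) / (c ^ 2 * ‖α‖ ^ 2) * c = 2 * ⟪α, y⟫ / ‖α‖ ^ 2 := by
      field_simp
    rw [hkey]

lemma sref_neg (α : V) : sref (-α) = sref α := by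
  have : (-α) = (-1 : ℝ) • α := by simp
  rw [this, sref_smul (by norm_num)]

lemma sref_conj (g : V ≃ₗᵢ[ℝ] V) (α : V) : g * sref α * g⁻¹ = sref (g α) := by
  ext y
  have h1 : (g * sref α * g⁻¹) y = g (sref α (g.symm y)) := by
    simp [LinearIsometryEquiv.coe_mul, LinearIsometryEquiv.inv_def]
  rw [h1, sref_apply, sref_apply]
  have h2 : ⟪g α, y⟫ = ⟪α, g.symm y⟫ := by
    conv_lhs => rw [← g.apply_symm_apply y]
    exact g.inner_map_map α (g.symm y)
  rw [h2, g.norm_map]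
  simp [map_sub, map_smul, g.apply_symm_apply]

lemma sref_orthogonal {α y : V} (h : ⟪α, y⟫ = 0) : sref α y = y := by
  rw [sref_apply, h]; simp

set_option linter.unusedSectionVars false

lemma mem_fixedSpace {f : V ≃ₗᵢ[ℝ] V} {v : V} : v ∈ fixedSpace f ↔ f v = v := by
  simp [fixedSpace, LinearMap.mem_ker, LinearMap.sub_apply, sub_eq_zero]

lemma mem_movedSpace {f : V ≃ₗᵢ[ℝ] V} {v : V} : v ∈ movedSpace f ↔ ∃ w, f w - w = v := by
  simp [movedSpace, LinearMap.mem_range, LinearMap.sub_apply]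

lemma sub_mem_movedSpace (f : V ≃ₗᵢ[ℝ] V) (w : V) : f w - w ∈ movedSpace f :=
  mem_movedSpace.2 ⟨w, rfl⟩

lemma movedSpace_orthogonal (f : V ≃ₗᵢ[ℝ] V) : (movedSpace f)ᗮ = fixedSpace f := by
  ext v
  rw [mem_orthogonal, mem_fixedSpace]
  constructor
  · intro h
    have key : ∀ w : V, ⟪w, f.symm v - v⟫ = 0 := by
      intro w
      have h1 : ⟪f w - w, v⟫ = 0 := h _ (sub_mem_movedSpace f w)
      have h2 : ⟪f w, v⟫ = ⟪w, f.symm v⟫ := by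
        conv_lhs => rw [← f.apply_symm_apply v]
        exact f.inner_map_map w (f.symm v)
      rw [inner_sub_left, h2] at h1
      rw [inner_sub_right]
      linarith
    have h0 : f.symm v - v = 0 := by
      have := key (f.symm v - v)
      rwa [inner_self_eq_zero] at this
    have h0' : f.symm v = v := by rwa [sub_eq_zero] at h0
    conv_lhs => rw [← h0']
    exact f.apply_symm_apply v
  · intro hfv u hu
    obtain ⟨w, rfl⟩ := mem_movedSpace.1 hu
    have hs : f.symm v = v := by
      conv_lhs => rw [← hfv]; exact f.symm_apply_apply v
    have h2 : ⟪f w, v⟫ = ⟪w, v⟫ := by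
      conv_lhs => rw [← f.apply_symm_apply v]
      rw [f.inner_map_map w (f.symm v), hs]
    rw [inner_sub_left, h2, sub_self]

lemma fixedSpace_orthogonal (f : V ≃ₗᵢ[ℝ] V) : (fixedSpace f)ᗮ = movedSpace f := by
  rw [← movedSpace_orthogonal, Submodule.orthogonal_orthogonal]

lemma finrank_moved_add_fixed (f : V ≃ₗᵢ[ℝ] V) :
    finrank ℝ (movedSpace f) + finrank ℝ (fixedSpace f) = finrank ℝ V := by
  rw [← movedSpace_orthogonal]
  have := Submodule.finrank_add_finrank_orthogonal (K := movedSpace f)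
  omega

lemma movedSpace_mul_le (f g : V ≃ₗᵢ[ℝ] V) :
    movedSpace (f * g) ≤ movedSpace f ⊔ movedSpace g := by
  intro v hv
  obtain ⟨w, rfl⟩ := mem_movedSpace.1 hv
  have : (f * g) w - w = (f (g w) - g w) + (g w - w) := by
    simp [LinearIsometryEquiv.coe_mul]
  rw [this]
  exact Submodule.add_mem_sup (sub_mem_movedSpace f (g w)) (sub_mem_movedSpace g w)

lemma movedSpace_one : movedSpace (1 : V ≃ₗᵢ[ℝ] V) = ⊥ := by
  rw [Submodule.eq_bot_iff]
  intro v hv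
  obtain ⟨w, rfl⟩ := mem_movedSpace.1 hv
  simp

lemma eq_one_of_movedSpace_eq_bot {f : V ≃ₗᵢ[ℝ] V} (h : movedSpace f = ⊥) : f = 1 := by
  ext v
  have : f v - v ∈ movedSpace f := sub_mem_movedSpace f v
  rw [h, Submodule.mem_bot, sub_eq_zero] at this
  simpa using this

lemma movedSpace_inv (f : V ≃ₗᵢ[ℝ] V) : movedSpace f⁻¹ = movedSpace f := by
  have hfix : fixedSpace f⁻¹ = fixedSpace f := by
    ext v
    rw [mem_fixedSpace, mem_fixedSpace, LinearIsometryEquiv.inv_def]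
    constructor
    · intro h; conv_lhs => rw [← h]
      exact f.apply_symm_apply v
    · intro h; conv_lhs => rw [← h]
      exact f.symm_apply_apply v
  rw [← fixedSpace_orthogonal, ← fixedSpace_orthogonal, hfix]

lemma movedSpace_sref {α : V} (hα : α ≠ 0) : movedSpace (sref α) = ℝ ∙ α := by
  apply le_antisymm
  · intro v hv
    obtain ⟨w, rfl⟩ := mem_movedSpace.1 hv
    rw [sref_apply]
    have : w - (2 * ⟪α, w⟫ / ‖α‖ ^ 2) • α - w = -((2 * ⟪α, w⟫ / ‖α‖ ^ 2) • α) := by abel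
    rw [this]
    exact Submodule.neg_mem _ (Submodule.smul_mem _ _ (Submodule.mem_span_singleton_self α))
  · rw [Submodule.span_singleton_le_iff_mem]
    have hmem : (-(1:ℝ)/2) • (sref α α - α) ∈ movedSpace (sref α) :=
      Submodule.smul_mem _ _ (sub_mem_movedSpace _ _)
    have heq : (-(1:ℝ)/2) • (sref α α - α) = α := by
      rw [sref_self]
      have h2 : -α - α = (-2 : ℝ) • α := by
        rw [neg_smul, two_smul]; abel
      rw [h2, smul_smul]
      norm_num
    rwa [heq] at hmem

lemma finrank_movedSpace_sref {α : V} (hα : α ≠ 0) :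
    finrank ℝ (movedSpace (sref α)) = 1 := by
  rw [movedSpace_sref hα]
  exact finrank_span_singleton hα

lemma movedSpace_hypReflection {f : V ≃ₗᵢ[ℝ] V} (hf : IsHypReflection f) :
    finrank ℝ (movedSpace f) = 1 := by
  obtain ⟨α, hα, rfl⟩ := hf
  exact finrank_movedSpace_sref hα

lemma finrank_sup_le (p q : Submodule ℝ V) :
    finrank ℝ ↥(p ⊔ q) ≤ finrank ℝ p + finrank ℝ q := by
  have := Submodule.finrank_sup_add_finrank_inf_eq p q
  omega

lemma movedSpace_invariant {f g : V ≃ₗᵢ[ℝ] V} (h : f * g = g * f) {z : V}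
    (hz : z ∈ movedSpace f) : g z ∈ movedSpace f := by
  obtain ⟨w, rfl⟩ := mem_movedSpace.1 hz
  refine mem_movedSpace.2 ⟨g w, ?_⟩
  have hfg : f (g w) = g (f w) := by
    have h1 : (f * g) w = (g * f) w := by rw [h]
    simpa [LinearIsometryEquiv.coe_mul] using h1
  rw [hfg, ← map_sub]

lemma sref_comm {α β : V} (h : ⟪α, β⟫ = 0) : sref α * sref β = sref β * sref α := by
  have h' : ⟪β, α⟫ = 0 := by rw [real_inner_comm]; exact h
  ext y
  have e1 : (sref α * sref β) y = sref α (sref β y) := by simp [LinearIsometryEquiv.coe_mul]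
  have e2 : (sref β * sref α) y = sref β (sref α y) := by simp [LinearIsometryEquiv.coe_mul]
  rw [e1, e2]
  simp only [sref_apply, inner_sub_right, real_inner_smul_right, h, h', mul_zero, sub_zero]
  abel

/-- Brady–Watt: if `f x - x = α` then `sref α * f` fixes `x`. -/
lemma bradyWatt {f : V ≃ₗᵢ[ℝ] V} {x α : V} (hx : f x - x = α) :
    (sref α * f) x = x := by
  have hfx : f x = x + α := by rw [← hx]; abel
  have hnorm : ‖x + α‖ ^ 2 = ‖x‖ ^ 2 := by rw [← hfx, f.norm_map]
  have hinner : 2 * ⟪α, x⟫ + ‖α‖ ^ 2 = 0 := by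
    have h1 : ‖x + α‖ ^ 2 = ‖x‖ ^ 2 + 2 * ⟪x, α⟫ + ‖α‖ ^ 2 := norm_add_sq_real x α
    rw [hnorm] at h1
    rw [real_inner_comm]
    linarith
  have : (sref α * f) x = sref α (x + α) := by
    simp [LinearIsometryEquiv.coe_mul, hfx]
  rw [this, sref_apply, inner_add_right, real_inner_self_eq_norm_sq]
  rcases eq_or_ne α 0 with rfl | hα
  · simp
  · have hn : ‖α‖ ^ 2 ≠ 0 := pow_ne_zero 2 (norm_ne_zero_iff.2 hα)
    have hc : 2 * (⟪α, x⟫ + ‖α‖ ^ 2) / ‖α‖ ^ 2 = 1 := by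
      field_simp
      linarith
    rw [hc, one_smul]
    abel

/-- The drop lemma: multiplying by a reflection whose root is in the moved space
drops the moved space dimension by exactly one. -/
lemma drop {f : V ≃ₗᵢ[ℝ] V} {α : V} (hα : α ≠ 0) (hm : α ∈ movedSpace f) :
    finrank ℝ (movedSpace (sref α * f)) + 1 = finrank ℝ (movedSpace f) := by
  -- fixed space of f is contained in that of sref α * f
  have hfixle : fixedSpace f ≤ fixedSpace (sref α * f) := by
    intro v hv
    have hperp : ⟪α, v⟫ = 0 := by
      have hv' : v ∈ (movedSpace f)ᗮ := (movedSpace_orthogonal f).symm ▸ hv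
      exact (Submodule.mem_orthogonal (movedSpace f) v).1 hv' α hm
    rw [mem_fixedSpace] at hv ⊢
    simp [LinearIsometryEquiv.coe_mul, hv, sref_orthogonal hperp]
  -- a vector fixed by sref α * f but not by f
  obtain ⟨x, hxα⟩ := mem_movedSpace.1 hm
  have hxfix : x ∈ fixedSpace (sref α * f) := mem_fixedSpace.2 (bradyWatt hxα)
  have hxnot : x ∉ fixedSpace f := by
    rw [mem_fixedSpace]
    intro h
    rw [h, sub_self] at hxα
    exact hα hxα.symm
  have hlt : fixedSpace f < fixedSpace (sref α * f) :=
    lt_of_le_of_ne hfixle (fun h => hxnot (h ▸ hxfix))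
  have h1 : finrank ℝ (fixedSpace f) < finrank ℝ (fixedSpace (sref α * f)) :=
    Submodule.finrank_lt_finrank_of_lt hlt
  -- moved space of f is contained in moved of (sref α * f) ⊔ span α
  have h2 : movedSpace f ≤ movedSpace (sref α) ⊔ movedSpace (sref α * f) := by
    have : f = sref α * (sref α * f) := by
      rw [← mul_assoc, sref_mul_self, one_mul]
    conv_lhs => rw [this]
    exact movedSpace_mul_le _ _
  have h3 : finrank ℝ (movedSpace f) ≤ 1 + finrank ℝ (movedSpace (sref α * f)) := by
    have := finrank_sup_le (movedSpace (sref α)) (movedSpace (sref α * f))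
    have hle := Submodule.finrank_mono h2
    rw [finrank_movedSpace_sref hα] at this
    omega
  have e1 := finrank_moved_add_fixed f
  have e2 := finrank_moved_add_fixed (sref α * f)
  omega

/-! ### Root systems relative to a generic point, and the kernel theorem -/

noncomputable local instance : DecidableEq V := Classical.decEq V

/-- Membership in the nonnegative cone spanned by a finite set. -/
def Cone (S : Finset V) (β : V) : Prop :=
  ∃ c : V → ℝ, (∀ v, 0 ≤ c v) ∧ ∑ v ∈ S, c v • v = β

/-- A configuration: a finite `W`-stable set of unit roots `Φ`, a generic point `x`,
the positive roots `P`, and a minimal cone-generating subset `Δ` of `P`. -/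
structure GoodCfg (Φ : Set V) (x : V) (P Δ : Finset V) : Prop where
  unit : ∀ α ∈ Φ, ‖α‖ = 1
  closed : ∀ α ∈ Φ, ∀ β ∈ Φ, sref α β ∈ Φ
  xne : ∀ α ∈ Φ, ⟪x, α⟫ ≠ 0
  Pdef : ∀ β, β ∈ P ↔ β ∈ Φ ∧ 0 < ⟪x, β⟫
  Δsub : Δ ⊆ P
  Δgen : ∀ β ∈ P, Cone Δ β
  Δmin : ∀ β ∈ Δ, ¬ Cone (Δ.erase β) β

lemma cone_subst {Δ : Finset V} {β γ : V} (hβ : β ∈ Δ) (hb : Cone (Δ.erase β) β)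
    (hg : Cone Δ γ) : Cone (Δ.erase β) γ := by
  obtain ⟨d, hd, hdsum⟩ := hb
  obtain ⟨c, hc, hcsum⟩ := hg
  refine ⟨fun v => c v + c β * d v, fun v => add_nonneg (hc v)
    (mul_nonneg (hc β) (hd v)), ?_⟩
  have h1 : ∑ v ∈ Δ.erase β, (c v + c β * d v) • v
      = ∑ v ∈ Δ.erase β, c v • v + c β • ∑ v ∈ Δ.erase β, d v • v := by
    rw [Finset.smul_sum, ← Finset.sum_add_distrib]
    congr 1; ext v; rw [add_smul, smul_smul]
  rw [h1, hdsum]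
  have h2 : c β • β + ∑ v ∈ Δ.erase β, c v • v = ∑ v ∈ Δ, c v • v :=
    Finset.add_sum_erase Δ (fun v => c v • v) hβ
  rw [← hcsum, ← h2]; abel

lemma exists_cfg {Φ : Set V} {x : V} (hfin : Φ.Finite) (hunit : ∀ α ∈ Φ, ‖α‖ = 1)
    (hclosed : ∀ α ∈ Φ, ∀ β ∈ Φ, sref α β ∈ Φ) (hxne : ∀ α ∈ Φ, ⟪x, α⟫ ≠ 0) :
    ∃ P Δ : Finset V, GoodCfg Φ x P Δ := by
  classical
  set P := hfin.toFinset.filter (fun β => 0 < ⟪x, β⟫) with hP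
  have hPdef : ∀ β, β ∈ P ↔ β ∈ Φ ∧ 0 < ⟪x, β⟫ := by
    intro β; simp [hP, Finset.mem_filter, Set.Finite.mem_toFinset]
  have hPgen : ∀ β ∈ P, Cone P β := by
    intro β hβ
    refine ⟨fun v => if v = β then 1 else 0, fun v => by by_cases h : v = β <;> simp [h], ?_⟩
    have : ∀ v ∈ P, (if v = β then (1:ℝ) else 0) • v = if v = β then v else 0 := by
      intro v _; split <;> simp
    rw [Finset.sum_congr rfl this, Finset.sum_ite_eq' P β (fun v => v), if_pos hβ]
  set N := {n | ∃ S : Finset V, (S ⊆ P ∧ ∀ β ∈ P, Cone S β) ∧ S.card = n} with hN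
  have hNne : N.Nonempty := ⟨P.card, P, ⟨Finset.Subset.refl P, hPgen⟩, rfl⟩
  obtain ⟨Δ, ⟨hΔsub, hΔgen⟩, hΔcard⟩ := Nat.sInf_mem hNne
  refine ⟨P, Δ, hunit, hclosed, hxne, hPdef, hΔsub, hΔgen, ?_⟩
  intro β hβ hcone
  have hgens : (Δ.erase β).card ∈ N :=
    ⟨Δ.erase β, ⟨(Finset.erase_subset β Δ).trans hΔsub,
      fun γ hγ => cone_subst hβ hcone (hΔgen γ hγ)⟩, rfl⟩
  have hle : sInf N ≤ (Δ.erase β).card := Nat.sInf_le hgens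
  have hcard : (Δ.erase β).card = Δ.card - 1 := Finset.card_erase_of_mem hβ
  have hpos : 0 < Δ.card := Finset.card_pos.2 ⟨β, hβ⟩
  omega

lemma inner_cone_sum (x : V) (S : Finset V) (c : V → ℝ) :
    ⟪x, ∑ v ∈ S, c v • v⟫ = ∑ v ∈ S, c v * ⟪x, v⟫ := by
  rw [inner_sum]
  congr 1; ext v; rw [real_inner_smul_right]

variable {Φ : Set V} {x : V} {P Δ : Finset V}

lemma GoodCfg.x_pos (H : GoodCfg Φ x P Δ) {v : V} (hv : v ∈ Δ) : 0 < ⟪x, v⟫ :=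
  ((H.Pdef v).1 (H.Δsub hv)).2

lemma extract (H : GoodCfg Φ x P Δ) {η : V} (hη : η ∈ Δ) {r : ℝ} (e : V → ℝ)
    (he : ∀ v, 0 ≤ e v) (heq : r • η = ∑ v ∈ Δ.erase η, e v • v)
    (hpos : 0 < ∑ v ∈ Δ.erase η, e v * ⟪x, v⟫) : False := by
  have hxη : 0 < ⟪x, η⟫ := H.x_pos hη
  have h1 : r * ⟪x, η⟫ = ∑ v ∈ Δ.erase η, e v * ⟪x, v⟫ := by
    have h := congrArg (fun z => ⟪x, z⟫) heq
    simpa [real_inner_smul_right, inner_cone_sum] using h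
  have hr : 0 < r := by nlinarith
  apply H.Δmin η hη
  refine ⟨fun v => r⁻¹ * e v, fun v => mul_nonneg (by positivity) (he v), ?_⟩
  have h2 : ∑ v ∈ Δ.erase η, (r⁻¹ * e v) • v = r⁻¹ • ∑ v ∈ Δ.erase η, e v • v := by
    rw [Finset.smul_sum]
    congr 1; ext v; rw [smul_smul]
  rw [h2, ← heq, smul_smul, inv_mul_cancel₀ hr.ne', one_smul]

lemma neg_mem_roots (H : GoodCfg Φ x P Δ) {β : V} (hβ : β ∈ Φ) : -β ∈ Φ := by
  have := H.closed β hβ β hβ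
  rwa [sref_self] at this

/-- Key permutation lemma: a simple reflection maps other positive roots to positive roots. -/
lemma sref_mem_P (H : GoodCfg Φ x P Δ) {α β : V} (hα : α ∈ Δ) (hβ : β ∈ P) (hne : β ≠ α) :
    sref α β ∈ P := by
  classical
  have hαP := H.Δsub hα
  have hαΦ := ((H.Pdef α).1 hαP).1
  have hβΦ := ((H.Pdef β).1 hβ).1
  have hβpos := ((H.Pdef β).1 hβ).2
  have hγΦ : sref α β ∈ Φ := H.closed α hαΦ β hβΦ
  by_contra hγP
  have hneg : ⟪x, sref α β⟫ < 0 := by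
    rcases lt_trichotomy (⟪x, sref α β⟫) 0 with h | h | h
    · exact h
    · exact absurd h (H.xne _ hγΦ)
    · exact absurd ((H.Pdef _).2 ⟨hγΦ, h⟩) hγP
  have hmγP : -(sref α β) ∈ P := by
    refine (H.Pdef _).2 ⟨neg_mem_roots H hγΦ, ?_⟩
    rw [inner_neg_right]; linarith
  obtain ⟨d, hd, hdsum⟩ := H.Δgen β hβ
  obtain ⟨e, he0, hesum⟩ := H.Δgen _ hmγP
  have hkey : β + -(sref α β) = (2 * ⟪α, β⟫) • α := by
    rw [sref_apply_unit (H.unit α hαΦ)]; abel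
  have hsum : ∑ v ∈ Δ, (d v + e v) • v = (2 * ⟪α, β⟫) • α := by
    have hadd : ∑ v ∈ Δ, (d v + e v) • v
        = (∑ v ∈ Δ, d v • v) + (∑ v ∈ Δ, e v • v) := by
      rw [← Finset.sum_add_distrib]
      congr 1; ext v; rw [add_smul]
    rw [hadd, hdsum, hesum]
    exact hkey
  have hsplit : (d α + e α) • α + ∑ v ∈ Δ.erase α, (d v + e v) • v
      = (2 * ⟪α, β⟫) • α := by
    rw [← hsum]
    exact Finset.add_sum_erase Δ (fun v => (d v + e v) • v) hα
  have heq2 : (2 * ⟪α, β⟫ - (d α + e α)) • α = ∑ v ∈ Δ.erase α, (d v + e v) • v := by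
    rw [sub_smul]
    rw [← hsplit]; abel
  have hδ0 : ∃ δ ∈ Δ.erase α, 0 < d δ := by
    by_contra h
    push_neg at h
    have hzero : ∀ v ∈ Δ.erase α, d v • v = (0 : V) := by
      intro v hv
      have h0 : d v = 0 := le_antisymm (h v hv) (hd v)
      rw [h0, zero_smul]
    have hβα : β = d α • α := by
      rw [← hdsum, ← Finset.add_sum_erase Δ (fun v => d v • v) hα,
        Finset.sum_eq_zero hzero, add_zero]
    have hβn := H.unit β hβΦ
    have hαn := H.unit α hαΦ
    have hd1 : d α = 1 := by
      have h1 : ‖β‖ = |d α| * ‖α‖ := by rw [hβα, norm_smul, Real.norm_eq_abs]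
      rw [hβn, hαn, mul_one, abs_of_nonneg (hd α)] at h1
      exact h1.symm
    exact hne (by rw [hβα, hd1, one_smul])
  obtain ⟨δ₀, hδ₀mem, hδ₀pos⟩ := hδ0
  refine extract H hα (fun v => d v + e v)
    (fun v => add_nonneg (hd v) (he0 v)) heq2 ?_
  apply Finset.sum_pos'
  · intro v hv
    exact mul_nonneg (add_nonneg (hd v) (he0 v)) (H.x_pos (Finset.mem_of_mem_erase hv)).le
  · refine ⟨δ₀, hδ₀mem, ?_⟩
    have h1 : 0 < ⟪x, δ₀⟫ := H.x_pos (Finset.mem_of_mem_erase hδ₀mem)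
    have h2 : 0 ≤ e δ₀ := he0 δ₀
    have h3 : 0 < (d δ₀ + e δ₀) * ⟪x, δ₀⟫ := by nlinarith
    exact h3

lemma maps_root_closure (hclosed : ∀ α ∈ Φ, ∀ β ∈ Φ, sref α β ∈ Φ)
    {g : V ≃ₗᵢ[ℝ] V} (hg : g ∈ Subgroup.closure (sref '' Φ)) : ∀ α ∈ Φ, g α ∈ Φ := by
  have key : (∀ α ∈ Φ, g α ∈ Φ) ∧ (∀ α ∈ Φ, g⁻¹ α ∈ Φ) := by
    refine Subgroup.closure_induction ?_ ?_ ?_ ?_ hg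
    · rintro h ⟨α, hαΦ, rfl⟩
      exact ⟨fun β hβ => hclosed α hαΦ β hβ,
        by rw [sref_inv]; exact fun β hβ => hclosed α hαΦ β hβ⟩
    · simp
    · rintro a b _ _ ⟨ha1, ha2⟩ ⟨hb1, hb2⟩
      constructor
      · intro β hβ
        have : (a * b) β = a (b β) := by simp [LinearIsometryEquiv.coe_mul]
        rw [this]; exact ha1 _ (hb1 β hβ)
      · intro β hβ
        have : (a * b)⁻¹ β = b⁻¹ (a⁻¹ β) := by
          rw [mul_inv_rev]; simp [LinearIsometryEquiv.coe_mul]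
        rw [this]; exact hb2 _ (ha2 β hβ)
    · rintro a _ ⟨h1, h2⟩
      exact ⟨h2, by simpa using h1⟩
  exact key.1

lemma delta_le_roots (H : GoodCfg Φ x P Δ) :
    Subgroup.closure (sref '' (Δ : Set V)) ≤ Subgroup.closure (sref '' Φ) := by
  apply Subgroup.closure_mono
  apply Set.image_mono
  intro v hv
  exact ((H.Pdef v).1 (H.Δsub hv)).1

/-- Every reflection with a positive root lies in the subgroup generated by the
simple reflections. -/
lemma sref_mem_closure_delta (H : GoodCfg Φ x P Δ) {β : V} (hβ : β ∈ P) :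
    sref β ∈ Subgroup.closure (sref '' (Δ : Set V)) := by
  classical
  set W' := Subgroup.closure (sref '' (Δ : Set V)) with hW'
  set A := P.filter (fun γ => ∃ g, g ∈ W' ∧ g β = γ) with hA
  have hβA : β ∈ A := by
    rw [hA, Finset.mem_filter]
    exact ⟨hβ, 1, one_mem _, by simp⟩
  obtain ⟨γ, hγA, hγmin⟩ := Finset.exists_min_image A (fun γ => ⟪x, γ⟫) ⟨β, hβA⟩
  rw [hA, Finset.mem_filter] at hγA
  obtain ⟨hγP, g, hgW, hgβ⟩ := hγA
  have hγΦ := ((H.Pdef γ).1 hγP).1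
  have hγn := H.unit γ hγΦ
  have hδex : ∃ δ ∈ Δ, 0 < ⟪γ, δ⟫ := by
    by_contra h
    push_neg at h
    obtain ⟨d, hd, hdsum⟩ := H.Δgen γ hγP
    have h1 : ⟪γ, γ⟫ = ∑ v ∈ Δ, d v * ⟪γ, v⟫ := by
      have h := inner_cone_sum γ Δ d
      rwa [hdsum] at h
    have h2 : ∑ v ∈ Δ, d v * ⟪γ, v⟫ ≤ 0 :=
      Finset.sum_nonpos fun v hv => mul_nonpos_iff.2 (Or.inl ⟨hd v, h v hv⟩)
    have h3 : ⟪γ, γ⟫ = 1 := by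
      rw [real_inner_self_eq_norm_sq, hγn]; norm_num
    linarith
  obtain ⟨δ, hδΔ, hδpos⟩ := hδex
  by_cases hγδ : γ = δ
  · have hsγ : sref γ ∈ W' := by
      apply Subgroup.subset_closure
      exact ⟨δ, by simpa using hδΔ, by rw [hγδ]⟩
    have hconj : sref β = g⁻¹ * sref γ * g := by
      have h1 : g * sref β * g⁻¹ = sref (g β) := sref_conj g β
      rw [hgβ] at h1
      rw [← h1]; group
    rw [hconj]
    exact mul_mem (mul_mem (inv_mem hgW) hsγ) hgW
  · exfalso
    have hγ'P : sref δ γ ∈ P := sref_mem_P H hδΔ hγP hγδ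
    have hγ'A : sref δ γ ∈ A := by
      rw [hA, Finset.mem_filter]
      refine ⟨hγ'P, sref δ * g, mul_mem (Subgroup.subset_closure
        ⟨δ, by simpa using hδΔ, rfl⟩) hgW, ?_⟩
      simp [LinearIsometryEquiv.coe_mul, hgβ]
    have hmin := hγmin _ hγ'A
    have hδΦ := ((H.Pdef δ).1 (H.Δsub hδΔ)).1
    have hδn := H.unit δ hδΦ
    have hval : ⟪x, sref δ γ⟫ = ⟪x, γ⟫ - 2 * ⟪δ, γ⟫ * ⟪x, δ⟫ := by
      rw [sref_apply_unit hδn, inner_sub_right, real_inner_smul_right]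
    have hδγ : 0 < ⟪δ, γ⟫ := by rwa [real_inner_comm] at hδpos
    have hxδ : 0 < ⟪x, δ⟫ := H.x_pos hδΔ
    rw [hval] at hmin
    nlinarith

/-- The sign-flip deletion lemma. -/
lemma flip (H : GoodCfg Φ x P Δ) (M : List V) :
    (∀ ρ ∈ M, ρ ∈ Δ) → ∀ η, η ∈ P →
      ⟪x, (M.map sref).prod η⟫ < 0 →
      ∃ M' : List V, (∀ ρ ∈ M', ρ ∈ Δ) ∧ M'.length + 1 = M.length ∧
        (M'.map sref).prod = (M.map sref).prod * sref η := by
  induction M with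
  | nil =>
    intro _ η hη hneg
    exfalso
    have := ((H.Pdef η).1 hη).2
    simp only [List.map_nil, List.prod_nil] at hneg
    have h1 : (1 : V ≃ₗᵢ[ℝ] V) η = η := rfl
    rw [h1] at hneg
    linarith
  | cons ρ M₂ ih =>
    intro hmem η hη hneg
    set g := (M₂.map sref).prod with hg
    have hρ : ρ ∈ Δ := hmem ρ (by simp)
    have hM₂ : ∀ ρ' ∈ M₂, ρ' ∈ Δ := fun ρ' h => hmem ρ' (by simp [h])
    have hprod : ((ρ :: M₂).map sref).prod = sref ρ * g := by
      simp [hg]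
    have happly : ((ρ :: M₂).map sref).prod η = sref ρ (g η) := by
      rw [hprod]; simp [LinearIsometryEquiv.coe_mul]
    have hηΦ := ((H.Pdef η).1 hη).1
    have hgW : g ∈ Subgroup.closure (sref '' Φ) := by
      apply Subgroup.list_prod_mem
      intro gi hgi
      obtain ⟨ρ', hρ', rfl⟩ := List.mem_map.1 hgi
      exact Subgroup.subset_closure
        ⟨ρ', ((H.Pdef ρ').1 (H.Δsub (hM₂ ρ' hρ'))).1, rfl⟩
    have hζΦ : g η ∈ Φ := maps_root_closure H.closed hgW η hηΦ
    rcases lt_trichotomy (⟪x, g η⟫) 0 with hlt | h0 | hgt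
    · obtain ⟨M₂', hm', hlen', hprod'⟩ := ih hM₂ η hη hlt
      refine ⟨ρ :: M₂', ?_, ?_, ?_⟩
      · intro ρ' h
        rcases List.mem_cons.1 h with rfl | h'
        · exact hρ
        · exact hm' ρ' h'
      · simp only [List.length_cons]
        omega
      · have : ((ρ :: M₂').map sref).prod = sref ρ * (M₂'.map sref).prod := by simp
        rw [this, hprod', hprod, mul_assoc]
    · exact absurd h0 (H.xne _ hζΦ)
    · have hζP : g η ∈ P := (H.Pdef _).2 ⟨hζΦ, hgt⟩
      have hζρ : g η = ρ := by
        by_contra hne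
        have h1 := sref_mem_P H hρ hζP hne
        have h2 := ((H.Pdef _).1 h1).2
        rw [happly] at hneg
        linarith
      have hcomm : sref ρ * g = g * sref η := by
        have h1 : g * sref η * g⁻¹ = sref (g η) := sref_conj g η
        rw [hζρ] at h1
        rw [← h1]; group
      refine ⟨M₂, hM₂, by simp, ?_⟩
      rw [hprod, hcomm, mul_assoc, sref_mul_self, mul_one]

lemma list_of_srefs (Δ : Finset V) :
    ∀ l : List (V ≃ₗᵢ[ℝ] V), (∀ y ∈ l, ∃ δ ∈ Δ, y = sref δ) →
      ∃ M : List V, (∀ ρ ∈ M, ρ ∈ Δ) ∧ M.map sref = l := by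
  intro l
  induction l with
  | nil => exact fun _ => ⟨[], by simp, by simp⟩
  | cons y l ih =>
    intro h
    obtain ⟨δ, hδ, rfl⟩ := h y (by simp)
    obtain ⟨M, hM, hMl⟩ := ih fun y' hy' => h y' (by simp [hy'])
    exact ⟨δ :: M, fun ρ hρ => by
      rcases List.mem_cons.1 hρ with rfl | h'
      · exact hδ
      · exact hM ρ h', by simp [hMl]⟩

lemma kernel_descent (H : GoodCfg Φ x P Δ) :
    ∀ n (M : List V), M.length ≤ n → (∀ ρ ∈ M, ρ ∈ Δ) →
      (M.map sref).prod x = x → (M.map sref).prod = 1 := by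
  intro n
  induction n with
  | zero =>
    intro M hlen _ _
    have : M = [] := List.eq_nil_of_length_eq_zero (Nat.le_zero.1 hlen)
    simp [this]
  | succ n ih =>
    intro M hlen hmem hfix
    rcases M.eq_nil_or_concat with rfl | ⟨M₁, δ, rfl⟩
    · simp
    · simp only [List.concat_eq_append] at hlen hmem hfix ⊢
      set u := (M₁.map sref).prod with hu
      have hδΔ : δ ∈ Δ := hmem δ (by simp)
      have hM₁ : ∀ ρ ∈ M₁, ρ ∈ Δ := fun ρ h => hmem ρ (by simp [h])
      have hδP : δ ∈ P := H.Δsub hδΔ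
      have hδΦ := ((H.Pdef δ).1 hδP).1
      have hprodw : ((M₁ ++ [δ]).map sref).prod = u * sref δ := by
        simp [hu]
      have hwx : (u * sref δ) x = x := by rw [← hprodw]; exact hfix
      have hwδ : (u * sref δ) δ = -(u δ) := by
        have h1 : (u * sref δ) δ = u (sref δ δ) := by
          simp [LinearIsometryEquiv.coe_mul]
        rw [h1, sref_self, map_neg]
      have hinner : ⟪x, (u * sref δ) δ⟫ = ⟪x, δ⟫ := by
        conv_lhs => rw [← hwx]
        exact (u * sref δ).inner_map_map x δ
      have hneg : ⟪x, u δ⟫ < 0 := by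
        rw [hwδ, inner_neg_right] at hinner
        have := ((H.Pdef δ).1 hδP).2
        linarith
      obtain ⟨M', hM'Δ, hM'len, hM'prod⟩ := flip H M₁ hM₁ δ hδP hneg
      have hM'fix : (M'.map sref).prod x = x := by
        rw [hM'prod, ← hu, ← hprodw]; exact hfix
      have hlen' : M'.length ≤ n := by
        have h1 : (M₁ ++ [δ]).length = M₁.length + 1 := by simp
        omega
      have := ih M' hlen' hM'Δ hM'fix
      rw [hM'prod, ← hu] at this
      rw [hprodw]
      exact this

/-- The kernel theorem: an element of the reflection group fixing a point not on any
reflection hyperplane is the identity. -/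
theorem kernel {Φ : Set V} {x : V} (hfin : Φ.Finite) (hunit : ∀ α ∈ Φ, ‖α‖ = 1)
    (hclosed : ∀ α ∈ Φ, ∀ β ∈ Φ, sref α β ∈ Φ) (hxne : ∀ α ∈ Φ, ⟪x, α⟫ ≠ 0)
    {w : V ≃ₗᵢ[ℝ] V} (hw : w ∈ Subgroup.closure (sref '' Φ)) (hwx : w x = x) :
    w = 1 := by
  classical
  obtain ⟨P, Δ, H⟩ := exists_cfg hfin hunit hclosed hxne
  -- the full closure is generated by the simple reflections
  have hle : Subgroup.closure (sref '' Φ) ≤ Subgroup.closure (sref '' (Δ : Set V)) := by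
    rw [Subgroup.closure_le]
    rintro h ⟨α, hαΦ, rfl⟩
    rcases lt_trichotomy (⟪x, α⟫) 0 with hlt | h0 | hgt
    · have hmα : -α ∈ P := by
        refine (H.Pdef _).2 ⟨neg_mem_roots H hαΦ, ?_⟩
        rw [inner_neg_right]; linarith
      have := sref_mem_closure_delta H hmα
      rwa [sref_neg] at this
    · exact absurd h0 (hxne α hαΦ)
    · exact sref_mem_closure_delta H ((H.Pdef _).2 ⟨hαΦ, hgt⟩)
  have hwΔ : w ∈ Subgroup.closure (sref '' (Δ : Set V)) := hle hw
  -- extract a word in the simple reflections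
  have hmono : w ∈ Submonoid.closure ((sref '' (Δ : Set V)) ∪ (sref '' (Δ : Set V))⁻¹) := by
    rw [← Subgroup.closure_toSubmonoid]
    exact hwΔ
  obtain ⟨l, hl, hlprod⟩ := Submonoid.exists_list_of_mem_closure hmono
  have hl' : ∀ y ∈ l, ∃ δ ∈ Δ, y = sref δ := by
    intro y hy
    rcases hl y hy with h | h
    · obtain ⟨δ, hδ, rfl⟩ := h
      exact ⟨δ, by simpa using hδ, rfl⟩
    · rw [Set.mem_inv] at h
      obtain ⟨δ, hδ, hy'⟩ := h
      refine ⟨δ, by simpa using hδ, ?_⟩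
      rw [← inv_inv y, ← hy', sref_inv]
  obtain ⟨M, hMΔ, hMl⟩ := list_of_srefs Δ l hl'
  have hMprod : (M.map sref).prod = w := by rw [hMl]; exact hlprod
  have := kernel_descent H M.length M le_rfl hMΔ (by rw [hMprod]; exact hwx)
  rw [hMprod] at this
  exact this

/-! ### The root system of a finite reflection subgroup, and Carter's theorem -/

variable (W : Subgroup (V ≃ₗᵢ[ℝ] V))

/-- The unit roots of reflections lying in `W`. -/
def RootsOf : Set V := {α | ‖α‖ = 1 ∧ sref α ∈ W}

lemma rootsOf_unit : ∀ α ∈ RootsOf W, ‖α‖ = 1 := fun _ hα => hα.1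

lemma rootsOf_finite [Finite W] : (RootsOf W).Finite := by
  have hsub : RootsOf W ⊆ ⋃ (w : ↥W), {α | ‖α‖ = 1 ∧ sref α = ↑w} := by
    rintro α ⟨h1, h2⟩
    exact Set.mem_iUnion.2 ⟨⟨sref α, h2⟩, h1, rfl⟩
  apply Set.Finite.subset _ hsub
  apply Set.finite_iUnion
  intro w
  rcases Set.eq_empty_or_nonempty {α | ‖α‖ = 1 ∧ sref α = (w : V ≃ₗᵢ[ℝ] V)} with h | ⟨α₀, hα₀⟩
  · rw [h]; exact Set.finite_empty
  · apply Set.Finite.subset ((Set.finite_singleton α₀).insert (-α₀))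
    rintro α ⟨hn, hs⟩
    have hα0 : α ≠ 0 := by
      intro h; rw [h, norm_zero] at hn; norm_num at hn
    have hα₀0 : α₀ ≠ 0 := by
      intro h
      have h1 := hα₀.1
      rw [h, norm_zero] at h1
      norm_num at h1
    have hms : movedSpace (sref α) = movedSpace (sref α₀) := by rw [hs, hα₀.2]
    rw [movedSpace_sref hα0, movedSpace_sref hα₀0] at hms
    have hmem : α ∈ (ℝ ∙ α₀) := hms ▸ Submodule.mem_span_singleton_self α
    obtain ⟨c, hc⟩ := Submodule.mem_span_singleton.1 hmem
    have hcn : |c| = 1 := by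
      have : ‖α‖ = |c| * ‖α₀‖ := by rw [← hc, norm_smul, Real.norm_eq_abs]
      rw [hn, hα₀.1, mul_one] at this
      exact this.symm
    rcases abs_eq (by norm_num : (0:ℝ) ≤ 1) |>.1 hcn with h1 | h1
    · right
      rw [Set.mem_singleton_iff, ← hc, h1, one_smul]
    · left
      rw [← hc, h1]
      simp
lemma rootsOf_closed : ∀ α ∈ RootsOf W, ∀ β ∈ RootsOf W, sref α β ∈ RootsOf W := by
  rintro α ⟨hα1, hα2⟩ β ⟨hβ1, hβ2⟩
  refine ⟨by rw [(sref α).norm_map, hβ1], ?_⟩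
  have h := sref_conj (sref α) β
  rw [← h]
  exact mul_mem (mul_mem hα2 hβ2) (by rw [sref_inv]; exact hα2)

lemma mem_closure_rootsOf
    (hgen : Subgroup.closure {x : ↥W | IsHypReflection (x : V ≃ₗᵢ[ℝ] V)} = ⊤)
    (w : ↥W) : (w : V ≃ₗᵢ[ℝ] V) ∈ Subgroup.closure (sref '' RootsOf W) := by
  have hw : w ∈ Subgroup.closure {x : ↥W | IsHypReflection (x : V ≃ₗᵢ[ℝ] V)} := by
    rw [hgen]; trivial
  refine Subgroup.closure_induction ?_ ?_ ?_ ?_ hw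
  · rintro t ⟨α, hα0, hα⟩
    have hαW : sref α ∈ W := by
      have := t.2
      rwa [show (t : V ≃ₗᵢ[ℝ] V) = sref α from hα] at this
    set u := ‖α‖⁻¹ • α with hu
    have hn0 : ‖α‖ ≠ 0 := norm_ne_zero_iff.2 hα0
    have hnu : ‖u‖ = 1 := by
      rw [hu, norm_smul, Real.norm_eq_abs, abs_inv, abs_of_nonneg (norm_nonneg α)]
      field_simp
    have hsu : sref u = sref α := sref_smul (inv_ne_zero hn0)
    apply Subgroup.subset_closure
    refine ⟨u, ⟨hnu, by rw [hsu]; exact hαW⟩, ?_⟩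
    rw [hsu]
    exact hα.symm
  · exact one_mem _
  · intro a b _ _ ha hb
    rw [Subgroup.coe_mul]
    exact mul_mem ha hb
  · intro a _ ha
    rw [Subgroup.coe_inv]
    exact inv_mem ha

/-- Steinberg-type lemma: a nontrivial element of a finite reflection group admits a root
of the group inside its moved space. -/
lemma exists_root_in_moved [Finite W]
    (hgen : Subgroup.closure {x : ↥W | IsHypReflection (x : V ≃ₗᵢ[ℝ] V)} = ⊤)
    {w : ↥W} (hw : (w : V ≃ₗᵢ[ℝ] V) ≠ 1) :
    ∃ α ∈ RootsOf W, α ∈ movedSpace (w : V ≃ₗᵢ[ℝ] V) := by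
  classical
  by_contra hcon
  push_neg at hcon
  set f := (w : V ≃ₗᵢ[ℝ] V) with hf
  set F := fixedSpace f with hF
  have hproper : ∀ α ∈ RootsOf W, ∃ y ∈ F, ⟪y, α⟫ ≠ 0 := by
    intro α hα
    by_contra h
    push_neg at h
    refine hcon α hα ?_
    rw [← fixedSpace_orthogonal]
    exact (Submodule.mem_orthogonal F α).2 h
  set Φfin := (rootsOf_finite W).toFinset with hΦfin
  set φ : V → (↥F →ₗ[ℝ] ℝ) := fun α =>
    { toFun := fun y => ⟪(y : V), α⟫
      map_add' := fun y z => by simp [inner_add_left]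
      map_smul' := fun c y => by simp [inner_smul_left] } with hφ
  set s : Finset (Subspace ℝ ↥F) := Φfin.image (fun α => LinearMap.ker (φ α)) with hs
  have htop : ⊤ ∉ s := by
    intro h
    obtain ⟨α, hα, heq⟩ := Finset.mem_image.1 h
    have hαR : α ∈ RootsOf W := (Set.Finite.mem_toFinset _).1 hα
    obtain ⟨y, hyF, hy⟩ := hproper α hαR
    have : (⟨y, hyF⟩ : ↥F) ∈ LinearMap.ker (φ α) := by
      rw [heq]; trivial
    rw [LinearMap.mem_ker] at this
    exact hy this
  have hcover := Subspace.biUnion_ne_univ_of_top_notMem htop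
  have hexists : ∃ x' : ↥F, ∀ p ∈ s, x' ∉ p := by
    by_contra h
    push_neg at h
    apply hcover
    ext y
    simp only [Set.mem_iUnion, Set.mem_univ, iff_true]
    obtain ⟨p, hp, hyp⟩ := h y
    exact ⟨p, hp, hyp⟩
  obtain ⟨x', hx'⟩ := hexists
  have hxne : ∀ α ∈ RootsOf W, ⟪(x' : V), α⟫ ≠ 0 := by
    intro α hα
    have hmem : LinearMap.ker (φ α) ∈ s :=
      Finset.mem_image_of_mem _ ((Set.Finite.mem_toFinset _).2 hα)
    have := hx' _ hmem
    rw [LinearMap.mem_ker] at this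
    exact this
  have hwmem := mem_closure_rootsOf W hgen w
  have hfix : f (x' : V) = (x' : V) := mem_fixedSpace.1 x'.2
  exact hw (kernel (rootsOf_finite W) (rootsOf_unit W) (rootsOf_closed W) hxne hwmem hfix)

lemma exists_word [Finite W]
    (hgen : Subgroup.closure {x : ↥W | IsHypReflection (x : V ≃ₗᵢ[ℝ] V)} = ⊤) :
    ∀ n (w : ↥W), finrank ℝ (movedSpace (w : V ≃ₗᵢ[ℝ] V)) = n →
      ∃ l : List ↥W, (∀ t ∈ l, IsHypReflection (t : V ≃ₗᵢ[ℝ] V)) ∧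
        l.length = n ∧ l.prod = w := by
  intro n
  induction n with
  | zero =>
    intro w hw
    have hbot : movedSpace (w : V ≃ₗᵢ[ℝ] V) = ⊥ := Submodule.finrank_eq_zero.1 hw
    have h1 : (w : V ≃ₗᵢ[ℝ] V) = 1 := eq_one_of_movedSpace_eq_bot hbot
    have hw1 : w = 1 := Subtype.ext h1
    exact ⟨[], by simp, by simp, by simp [hw1]⟩
  | succ n ih =>
    intro w hw
    have hne : (w : V ≃ₗᵢ[ℝ] V) ≠ 1 := by
      intro h
      rw [h, movedSpace_one, finrank_bot] at hw
      omega
    obtain ⟨α, hαR, hαm⟩ := exists_root_in_moved W hgen hne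
    have hα0 : α ≠ 0 := by
      intro h
      have := hαR.1
      rw [h, norm_zero] at this
      norm_num at this
    set t₀ : ↥W := ⟨sref α, hαR.2⟩ with ht₀
    set w' := t₀ * w with hw'
    have hcoe : (w' : V ≃ₗᵢ[ℝ] V) = sref α * (w : V ≃ₗᵢ[ℝ] V) := rfl
    have hdrop := drop hα0 hαm
    have hw'n : finrank ℝ (movedSpace (w' : V ≃ₗᵢ[ℝ] V)) = n := by
      rw [hcoe]
      omega
    obtain ⟨l', hl'refl, hl'len, hl'prod⟩ := ih w' hw'n
    refine ⟨t₀ :: l', ?_, by simp [hl'len], ?_⟩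
    · intro t ht
      rcases List.mem_cons.1 ht with rfl | h
      · exact ⟨α, hα0, rfl⟩
      · exact hl'refl t h
    · rw [List.prod_cons, hl'prod, hw', ← mul_assoc]
      have htt : t₀ * t₀ = 1 := Subtype.ext (sref_mul_self α)
      rw [htt, one_mul]

lemma word_bound :
    ∀ l : List ↥W, (∀ t ∈ l, IsHypReflection (t : V ≃ₗᵢ[ℝ] V)) →
      finrank ℝ (movedSpace ((l.prod : ↥W) : V ≃ₗᵢ[ℝ] V)) ≤ l.length := by
  intro l
  induction l with
  | nil =>
    intro _
    simp only [List.prod_nil, List.length_nil]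
    have : ((1 : ↥W) : V ≃ₗᵢ[ℝ] V) = 1 := rfl
    simp [this]
    exact Submodule.finrank_eq_zero.2 movedSpace_one
  | cons t l ih =>
    intro h
    have h1 : (((t :: l).prod : ↥W) : V ≃ₗᵢ[ℝ] V)
        = (t : V ≃ₗᵢ[ℝ] V) * ((l.prod : ↥W) : V ≃ₗᵢ[ℝ] V) := by
      rw [List.prod_cons]; rfl
    have hle := movedSpace_mul_le (t : V ≃ₗᵢ[ℝ] V) ((l.prod : ↥W) : V ≃ₗᵢ[ℝ] V)
    have h2 := Submodule.finrank_mono hle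
    have h3 := finrank_sup_le (movedSpace (t : V ≃ₗᵢ[ℝ] V))
      (movedSpace ((l.prod : ↥W) : V ≃ₗᵢ[ℝ] V))
    have h4 : finrank ℝ (movedSpace (t : V ≃ₗᵢ[ℝ] V)) = 1 :=
      movedSpace_hypReflection (h t (by simp))
    have h5 := ih (fun t' ht' => h t' (by simp [ht']))
    rw [h1]
    simp only [List.length_cons]
    omega

/-- Carter's theorem: the reflection length equals the dimension of the moved space. -/
theorem carter [Finite W]
    (hgen : Subgroup.closure {x : ↥W | IsHypReflection (x : V ≃ₗᵢ[ℝ] V)} = ⊤)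
    (w : ↥W) :
    wordLength {x : ↥W | IsHypReflection (x : V ≃ₗᵢ[ℝ] V)} w
      = finrank ℝ (movedSpace (w : V ≃ₗᵢ[ℝ] V)) := by
  obtain ⟨l₀, h₀refl, h₀len, h₀prod⟩ := exists_word W hgen _ w rfl
  apply le_antisymm
  · exact Nat.sInf_le ⟨l₀, h₀refl, h₀len, h₀prod⟩
  · have hne : {n | ∃ l : List ↥W, (∀ t ∈ l, t ∈ {x : ↥W | IsHypReflection (x : V ≃ₗᵢ[ℝ] V)})
        ∧ l.length = n ∧ l.prod = w}.Nonempty := ⟨_, l₀, h₀refl, rfl, h₀prod⟩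
    obtain ⟨l, hl, hlen, hprod⟩ := Nat.sInf_mem hne
    have := word_bound W l hl
    rw [hprod] at this
    rw [wordLength]
    omega

end CarterAux

/-- Let `W` be a finite real reflection group on `V` and `u, v ∈ W` with `uv = vu` and
`ℓ_T(uv) = ℓ_T(u) + ℓ_T(v)`. If `t, t'` are reflections with `t ≤_T u` and `t' ≤_T v`,
then `t` and `t'` commute. -/
theorem reflections_below_commuting_factors_commute (W : Subgroup (V ≃ₗᵢ[ℝ] V)) [Finite W]
    (hgen : Subgroup.closure {x : W | IsHypReflection (x : V ≃ₗᵢ[ℝ] V)} = ⊤)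
    (u v : W) (hcomm : u * v = v * u)
    (hadd : wordLength {x : W | IsHypReflection (x : V ≃ₗᵢ[ℝ] V)} (u * v) =
      wordLength {x : W | IsHypReflection (x : V ≃ₗᵢ[ℝ] V)} u +
        wordLength {x : W | IsHypReflection (x : V ≃ₗᵢ[ℝ] V)} v)
    (t t' : W)
    (ht : IsHypReflection (t : V ≃ₗᵢ[ℝ] V)) (ht' : IsHypReflection (t' : V ≃ₗᵢ[ℝ] V))
    (htu : wordLength {x : W | IsHypReflection (x : V ≃ₗᵢ[ℝ] V)} t +
      wordLength {x : W | IsHypReflection (x : V ≃ₗᵢ[ℝ] V)} (t⁻¹ * u) =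
        wordLength {x : W | IsHypReflection (x : V ≃ₗᵢ[ℝ] V)} u)
    (ht'v : wordLength {x : W | IsHypReflection (x : V ≃ₗᵢ[ℝ] V)} t' +
      wordLength {x : W | IsHypReflection (x : V ≃ₗᵢ[ℝ] V)} (t'⁻¹ * v) =
        wordLength {x : W | IsHypReflection (x : V ≃ₗᵢ[ℝ] V)} v) :
    Commute t t' := by
  classical
  obtain ⟨α, hα0, htα⟩ := ht
  obtain ⟨α', hα'0, ht'α⟩ := ht'
  have htα : (t : V ≃ₗᵢ[ℝ] V) = CarterAux.sref α := htα
  have ht'α : (t' : V ≃ₗᵢ[ℝ] V) = CarterAux.sref α' := ht'α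
  have carterW := CarterAux.carter W hgen
  rw [carterW, carterW, carterW] at htu
  rw [carterW, carterW, carterW] at ht'v
  rw [carterW, carterW, carterW] at hadd
  have hrt : Module.finrank ℝ (movedSpace (t : V ≃ₗᵢ[ℝ] V)) = 1 := by
    rw [htα]; exact CarterAux.finrank_movedSpace_sref hα0
  have hrt' : Module.finrank ℝ (movedSpace (t' : V ≃ₗᵢ[ℝ] V)) = 1 := by
    rw [ht'α]; exact CarterAux.finrank_movedSpace_sref hα'0
  -- α ∈ Mov u
  have hcoetu : ((t⁻¹ * u : W) : V ≃ₗᵢ[ℝ] V) = (t : V ≃ₗᵢ[ℝ] V)⁻¹ * (u : V ≃ₗᵢ[ℝ] V) := by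
    rw [Subgroup.coe_mul, Subgroup.coe_inv]
  have key_mem : ∀ (a b : W) (β : V), β ≠ 0 → (a : V ≃ₗᵢ[ℝ] V) = CarterAux.sref β →
      1 + Module.finrank ℝ (movedSpace ((a⁻¹ * b : W) : V ≃ₗᵢ[ℝ] V))
        = Module.finrank ℝ (movedSpace (b : V ≃ₗᵢ[ℝ] V)) →
      β ∈ movedSpace (b : V ≃ₗᵢ[ℝ] V) := by
    intro a b β hβ0 haβ hlen
    have hcoab : ((a⁻¹ * b : W) : V ≃ₗᵢ[ℝ] V)
        = (a : V ≃ₗᵢ[ℝ] V)⁻¹ * (b : V ≃ₗᵢ[ℝ] V) := by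
      rw [Subgroup.coe_mul, Subgroup.coe_inv]
    have hfact : (b : V ≃ₗᵢ[ℝ] V)
        = (a : V ≃ₗᵢ[ℝ] V) * ((a⁻¹ * b : W) : V ≃ₗᵢ[ℝ] V) := by
      rw [hcoab, ← mul_assoc, mul_inv_cancel, one_mul]
    have hsub : movedSpace (b : V ≃ₗᵢ[ℝ] V)
        ≤ movedSpace (a : V ≃ₗᵢ[ℝ] V) ⊔ movedSpace ((a⁻¹ * b : W) : V ≃ₗᵢ[ℝ] V) := by
      conv_lhs => rw [hfact]
      exact CarterAux.movedSpace_mul_le _ _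
    have hra : Module.finrank ℝ (movedSpace (a : V ≃ₗᵢ[ℝ] V)) = 1 := by
      rw [haβ]; exact CarterAux.finrank_movedSpace_sref hβ0
    have hfr : Module.finrank ℝ ↥(movedSpace (a : V ≃ₗᵢ[ℝ] V)
        ⊔ movedSpace ((a⁻¹ * b : W) : V ≃ₗᵢ[ℝ] V))
        ≤ Module.finrank ℝ (movedSpace (b : V ≃ₗᵢ[ℝ] V)) := by
      have := CarterAux.finrank_sup_le (movedSpace (a : V ≃ₗᵢ[ℝ] V))
        (movedSpace ((a⁻¹ * b : W) : V ≃ₗᵢ[ℝ] V))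
      omega
    have hequ := Submodule.eq_of_le_of_finrank_le hsub hfr
    have hβa : β ∈ movedSpace (a : V ≃ₗᵢ[ℝ] V) := by
      rw [haβ, CarterAux.movedSpace_sref hβ0]
      exact Submodule.mem_span_singleton_self β
    rw [hequ]
    exact Submodule.mem_sup_left hβa
  have hαu : α ∈ movedSpace (u : V ≃ₗᵢ[ℝ] V) := by
    refine key_mem t u α hα0 htα ?_
    omega
  have hα'v : α' ∈ movedSpace (v : V ≃ₗᵢ[ℝ] V) := by
    refine key_mem t' v α' hα'0 ht'α ?_
    omega
  -- Mov u ⊓ Mov v = ⊥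
  have hcoeuv : ((u * v : W) : V ≃ₗᵢ[ℝ] V) = (u : V ≃ₗᵢ[ℝ] V) * (v : V ≃ₗᵢ[ℝ] V) :=
    Subgroup.coe_mul W u v
  have hsub2 : movedSpace ((u * v : W) : V ≃ₗᵢ[ℝ] V)
      ≤ movedSpace (u : V ≃ₗᵢ[ℝ] V) ⊔ movedSpace (v : V ≃ₗᵢ[ℝ] V) := by
    rw [hcoeuv]
    exact CarterAux.movedSpace_mul_le _ _
  have h6 := Submodule.finrank_sup_add_finrank_inf_eq
    (movedSpace (u : V ≃ₗᵢ[ℝ] V)) (movedSpace (v : V ≃ₗᵢ[ℝ] V))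
  have h7 := Submodule.finrank_mono hsub2
  have hinf0 : Module.finrank ℝ ↥(movedSpace (u : V ≃ₗᵢ[ℝ] V) ⊓ movedSpace (v : V ≃ₗᵢ[ℝ] V)) = 0 := by
    omega
  have hinf : movedSpace (u : V ≃ₗᵢ[ℝ] V) ⊓ movedSpace (v : V ≃ₗᵢ[ℝ] V) = ⊥ :=
    Submodule.finrank_eq_zero.1 hinf0
  -- v fixes Mov u pointwise
  have hcommG : (u : V ≃ₗᵢ[ℝ] V) * (v : V ≃ₗᵢ[ℝ] V) = (v : V ≃ₗᵢ[ℝ] V) * (u : V ≃ₗᵢ[ℝ] V) := by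
    have := congrArg (fun w : W => (w : V ≃ₗᵢ[ℝ] V)) hcomm
    simpa [Subgroup.coe_mul] using this
  have hfixv : ∀ z ∈ movedSpace (u : V ≃ₗᵢ[ℝ] V), (v : V ≃ₗᵢ[ℝ] V) z = z := by
    intro z hz
    have h1 : (v : V ≃ₗᵢ[ℝ] V) z ∈ movedSpace (u : V ≃ₗᵢ[ℝ] V) :=
      CarterAux.movedSpace_invariant hcommG hz
    have h2 : (v : V ≃ₗᵢ[ℝ] V) z - z ∈ movedSpace (u : V ≃ₗᵢ[ℝ] V) :=
      Submodule.sub_mem _ h1 hz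
    have h3 : (v : V ≃ₗᵢ[ℝ] V) z - z ∈ movedSpace (v : V ≃ₗᵢ[ℝ] V) :=
      CarterAux.sub_mem_movedSpace _ z
    have h4 : (v : V ≃ₗᵢ[ℝ] V) z - z
        ∈ movedSpace (u : V ≃ₗᵢ[ℝ] V) ⊓ movedSpace (v : V ≃ₗᵢ[ℝ] V) := ⟨h2, h3⟩
    rw [hinf, Submodule.mem_bot, sub_eq_zero] at h4
    exact h4
  -- orthogonality of the roots
  have horth : (inner ℝ α α' : ℝ) = 0 := by
    have hαfix : α ∈ fixedSpace (v : V ≃ₗᵢ[ℝ] V) :=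
      CarterAux.mem_fixedSpace.2 (hfixv α hαu)
    have hperp : α ∈ (movedSpace (v : V ≃ₗᵢ[ℝ] V))ᗮ := by
      rw [CarterAux.movedSpace_orthogonal]; exact hαfix
    have := (Submodule.mem_orthogonal _ α).1 hperp α' hα'v
    rwa [real_inner_comm] at this
  have hG : (t : V ≃ₗᵢ[ℝ] V) * (t' : V ≃ₗᵢ[ℝ] V) = (t' : V ≃ₗᵢ[ℝ] V) * (t : V ≃ₗᵢ[ℝ] V) := by
    rw [htα, ht'α]
    exact CarterAux.sref_comm horth
  have : t * t' = t' * t := by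
    apply Subtype.ext
    rw [Subgroup.coe_mul, Subgroup.coe_mul, hG]
  exact this
end

section
/- Let W be the universal Coxeter group on three generators s, t, u (no relations between distinct generators). Then {s, t, tut} is a simple system for W, so X = ⟨s, tut⟩ is a parabolic subgroup in the sense of dual Coxeter theory, but X is not conjugate in W to any of the three standard rank-2 parabolic subgroups ⟨s,t⟩, ⟨s,u⟩, ⟨t,u⟩. -/
/-- The Coxeter matrix of the universal Coxeter group on three generators:
no relation between distinct generators (`0` encodes `∞`). -/
def universalMatrix3 : CoxeterMatrix (Fin 3) where
  M := Matrix.of fun i j => if i = j then 1 else 0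
  isSymm := by unfold Matrix.IsSymm; aesop
  diagonal := by simp
  off_diagonal := by simp

/-- Any family of involutions is liftable for the universal Coxeter matrix. -/
lemma universalMatrix3_isLiftable {G : Type*} [Monoid G] (f : Fin 3 → G)
    (h : ∀ i, f i * f i = 1) : universalMatrix3.IsLiftable f := by
  intro i i'
  rcases eq_or_ne i i' with rfl | hne
  · rw [universalMatrix3.diagonal i, pow_one, h]
  · have h0 : universalMatrix3 i i' = 0 := by
      show (if i = i' then 1 else 0) = 0
      simp [hne]
    rw [h0, pow_zero]

/-- Transporting a conjugation identity along a homomorphism. -/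
lemma map_conj_closure_eq {W G : Type*} [Group W] [Group G] (π : W →* G) (g : W)
    (K : Subgroup W) (S : Set W)
    (h : Subgroup.map (MulAut.conj g).toMonoidHom K = Subgroup.closure S) :
    Subgroup.map (MulAut.conj (π g)).toMonoidHom (Subgroup.map π K)
      = Subgroup.closure (π '' S) := by
  rw [← MonoidHom.map_closure, ← h, Subgroup.map_map, Subgroup.map_map]
  congr 1
  ext x
  simp [MulAut.conj, mul_assoc]

/-- A conjugate of a cyclic group of order ≤ 2 cannot be generated by two distinct
nontrivial elements witnessing elements other than a single involution. -/
lemma conj_closure_singleton_ne {G : Type*} [Group G] (h x p q : G) (hx : x * x = 1)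
    (hp : p ≠ 1) (hq : q ≠ 1) (hpq : p ≠ q) :
    Subgroup.map (MulAut.conj h).toMonoidHom (Subgroup.closure {x})
      ≠ Subgroup.closure {p, q} := by
  intro E
  have hxinv : x⁻¹ = x := inv_eq_of_mul_eq_one_left hx
  set A : Subgroup G :=
    { carrier := {1, x}
      one_mem' := Or.inl rfl
      mul_mem' := by
        rintro y z (rfl | rfl) (rfl | rfl) <;>
          simp_all [Set.mem_insert_iff, hx]
      inv_mem' := by
        rintro y (rfl | rfl) <;> simp_all [Set.mem_insert_iff, hxinv] } with hA
  have hcl : Subgroup.closure ({x} : Set G) ≤ A := by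
    apply (Subgroup.closure_le _).2
    intro y hy
    rw [Set.mem_singleton_iff] at hy
    exact hy ▸ Or.inr rfl
  have hmem : ∀ r ∈ Subgroup.closure ({p, q} : Set G), r = 1 ∨ r = h * x * h⁻¹ := by
    intro r hr
    rw [← E] at hr
    obtain ⟨y, hy, rfl⟩ := hr
    have h1 : y = 1 ∨ y = x := by
      have hy1 : y ∈ ({1, x} : Set G) := hcl hy
      simpa [Set.mem_insert_iff] using hy1
    rcases h1 with rfl | rfl <;> simp [MulAut.conj]
  have hp' := hmem p (Subgroup.subset_closure (Set.mem_insert _ _))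
  have hq' := hmem q (Subgroup.subset_closure (Set.mem_insert_of_mem _ rfl))
  rcases hp' with h1 | h1
  · exact hp h1
  rcases hq' with h2 | h2
  · exact hq h2
  exact hpq (h1.trans h2.symm)


/-- The images of the three generators in `S₃` used to distinguish the subgroups. -/
def fG3 : Fin 3 → Equiv.Perm (Fin 3) := ![Equiv.swap 1 2, Equiv.swap 0 1, Equiv.swap 0 2]

open Subgroup in
/-- Let `W` be the universal Coxeter group on three generators `s, t, u`. Then
`{s, t, tut}` is a simple system for `W` (so `X = ⟨s, tut⟩` is a parabolic subgroup in
the dual sense), but `X` is not conjugate in `W` to any of the three standard rank-2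
parabolic subgroups `⟨s,t⟩`, `⟨s,u⟩`, `⟨t,u⟩`. -/
theorem universal_parabolic_not_conjugate_standard
    {W : Type*} [Group W] (cs : CoxeterSystem universalMatrix3 W)
    (s t u : W) (hs : s = cs.simple 0) (ht : t = cs.simple 1) (hu : u = cs.simple 2) :
    (∃ cs' : CoxeterSystem universalMatrix3 W,
      cs'.simple 0 = s ∧ cs'.simple 1 = t ∧ cs'.simple 2 = t * u * t) ∧
    ∀ g : W,
      Subgroup.map (MulAut.conj g).toMonoidHom (closure {s, t * u * t}) ∉
        ({closure {s, t}, closure {s, u}, closure {t, u}} : Set (Subgroup W)) := by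
  subst hs ht hu
  constructor
  · -- Part 1: `{s, t, tut}` is a simple system.
    set f : Fin 3 → W :=
      ![cs.simple 0, cs.simple 1, cs.simple 1 * cs.simple 2 * cs.simple 1] with hfdef
    have hinv : ∀ i, f i * f i = 1 := by
      intro i
      fin_cases i
      · exact cs.simple_mul_simple_self 0
      · exact cs.simple_mul_simple_self 1
      · show (cs.simple 1 * cs.simple 2 * cs.simple 1) *
            (cs.simple 1 * cs.simple 2 * cs.simple 1) = 1
        simp [mul_assoc, cs.simple_mul_simple_cancel_left, cs.simple_mul_simple_self]
    set φ : W →* W := cs.lift ⟨f, universalMatrix3_isLiftable f hinv⟩ with hφdef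
    have hφ : ∀ i, φ (cs.simple i) = f i := fun i => cs.lift_apply_simple _ i
    have hφφ : φ.comp φ = MonoidHom.id W := by
      apply cs.ext_simple
      intro i
      simp only [MonoidHom.comp_apply, MonoidHom.id_apply]
      fin_cases i
      · rw [hφ]
        exact hφ 0
      · rw [hφ]
        exact hφ 1
      · rw [hφ]
        show φ (cs.simple 1 * cs.simple 2 * cs.simple 1) = cs.simple 2
        rw [map_mul, map_mul, hφ, hφ]
        show cs.simple 1 * (cs.simple 1 * cs.simple 2 * cs.simple 1) * cs.simple 1
            = cs.simple 2
        simp [mul_assoc, cs.simple_mul_simple_cancel_left,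
          cs.simple_mul_simple_cancel_right, cs.simple_mul_simple_self]
    have hli : Function.LeftInverse φ φ := fun w => DFunLike.congr_fun hφφ w
    let e : W ≃* W :=
      { toFun := φ, invFun := φ, left_inv := hli, right_inv := hli,
        map_mul' := map_mul φ }
    refine ⟨cs.map e, ?_, ?_, ?_⟩
    · exact hφ 0
    · exact hφ 1
    · exact hφ 2
  · -- Part 2: not conjugate to the standard rank-2 parabolics.
    intro g hg
    have hGinv : ∀ i, fG3 i * fG3 i = 1 := by decide
    set π : W →* Equiv.Perm (Fin 3) :=
      cs.lift ⟨fG3, universalMatrix3_isLiftable fG3 hGinv⟩ with hπdef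
    have hπ : ∀ i, π (cs.simple i) = fG3 i := fun i => cs.lift_apply_simple _ i
    have hπ0 : π (cs.simple 0) = Equiv.swap 1 2 := hπ 0
    have hπ1 : π (cs.simple 1) = Equiv.swap 0 1 := hπ 1
    have hπ2 : π (cs.simple 2) = Equiv.swap 0 2 := hπ 2
    have hπtut : π (cs.simple 1 * cs.simple 2 * cs.simple 1) = Equiv.swap 1 2 := by
      rw [map_mul, map_mul, hπ1, hπ2]
      decide
    simp only [Set.mem_insert_iff, Set.mem_singleton_iff] at hg
    rcases hg with h | h | h <;>
    · have h' := map_conj_closure_eq π g _ _ h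
      rw [MonoidHom.map_closure, Set.image_pair, Set.image_pair, hπ0, hπtut] at h'
      try rw [hπ1] at h'
      try rw [hπ2] at h'
      rw [Set.pair_eq_singleton] at h'
      refine conj_closure_singleton_ne (π g) _ _ _ ?_ ?_ ?_ ?_ h' <;> decide
end

section
/- Let W be a finite real reflection group on V and w ∈ W a quasi-Coxeter element, i.e., some T-reduced expression of w generates W. Then w has no nonzero fixed vector in V: V^w = 0, equivalently ℓ_T(w) = dim V. -/
set_option linter.unusedSectionVars false
set_option maxHeartbeats 1000000
open RealInnerProductSpace Submodule

variable {V : Type*} [NormedAddCommGroup V] [InnerProductSpace ℝ V] [FiniteDimensional ℝ V]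

section Aux

variable [DecidableEq V]


variable {V : Type*} [NormedAddCommGroup V] [InnerProductSpace ℝ V] [FiniteDimensional ℝ V]





lemma refl_apply {α : V} (hα : ‖α‖ = 1) (v : V) :
    (reflection (ℝ ∙ α)ᗮ : V ≃ₗᵢ[ℝ] V) v = v - (2 * ⟪α, v⟫) • α := by
  have h := starProjection_add_starProjection_orthogonal (K := ℝ ∙ α) v
  have h2 : ((ℝ ∙ α).starProjection v : V) = ⟪α, v⟫ • α := by
    rw [starProjection_unit_singleton ℝ hα v]
  have h3 : ((ℝ ∙ α)ᗮ.starProjection v : V) = v - ⟪α, v⟫ • α := by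
    rw [← h2]; exact eq_sub_of_add_eq' h
  rw [reflection_apply, h3, two_smul, two_mul, add_smul]
  abel

lemma inv_apply_eq_symm (g : V ≃ₗᵢ[ℝ] V) (v : V) : g⁻¹ v = g.symm v := rfl

lemma refl_conj (g : V ≃ₗᵢ[ℝ] V) {α : V} (hα : ‖α‖ = 1) :
    g * reflection (ℝ ∙ α)ᗮ * g⁻¹ = (reflection (ℝ ∙ (g α))ᗮ : V ≃ₗᵢ[ℝ] V) := by
  ext v
  have hga : ‖g α‖ = 1 := by rw [g.norm_map]; exact hα
  rw [refl_apply hga]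
  simp only [LinearIsometryEquiv.coe_mul, Function.comp_apply]
  rw [refl_apply hα]
  have h1 : ⟪α, g⁻¹ v⟫ = ⟪g α, v⟫ := by
    rw [inv_apply_eq_symm]
    conv_rhs => rw [← g.apply_symm_apply v]
    rw [LinearIsometryEquiv.inner_map_map]
  rw [map_sub, map_smul, h1, inv_apply_eq_symm, g.apply_symm_apply]




lemma refl_sq (α : V) : (reflection (ℝ ∙ α)ᗮ : V ≃ₗᵢ[ℝ] V) * reflection (ℝ ∙ α)ᗮ = 1 := reflection_mul_reflection _

lemma refl_inv (α : V) : (reflection (ℝ ∙ α)ᗮ : V ≃ₗᵢ[ℝ] V)⁻¹ = reflection (ℝ ∙ α)ᗮ := by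
  rw [inv_eq_iff_mul_eq_one]; exact refl_sq α

lemma refl_congr {α β : V} (h : (ℝ ∙ α) = (ℝ ∙ β)) : (reflection (ℝ ∙ α)ᗮ : V ≃ₗᵢ[ℝ] V) = reflection (ℝ ∙ β)ᗮ := by
  simp only [h]

lemma refl_neg (α : V) : (reflection (ℝ ∙ (-α))ᗮ : V ≃ₗᵢ[ℝ] V) = reflection (ℝ ∙ α)ᗮ :=
  refl_congr (Submodule.span_singleton_eq_span_singleton.mpr ⟨⟨-1, -1, by norm_num, by norm_num⟩, by simp⟩)

lemma refl_smul {c : ℝ} (hc : c ≠ 0) (α : V) : (reflection (ℝ ∙ (c • α))ᗮ : V ≃ₗᵢ[ℝ] V) = reflection (ℝ ∙ α)ᗮ :=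
  refl_congr (Submodule.span_singleton_smul_eq (IsUnit.mk0 c hc) α)

lemma refl_root (α : V) : (reflection (ℝ ∙ α)ᗮ : V ≃ₗᵢ[ℝ] V) α = -α := reflection_orthogonalComplement_singleton_eq_neg α

lemma refl_fix {α v : V} (hv : ⟪α, v⟫ = 0) : (reflection (ℝ ∙ α)ᗮ : V ≃ₗᵢ[ℝ] V) v = v := by
  apply reflection_mem_subspace_eq_self
  exact Submodule.mem_orthogonal_singleton_iff_inner_left.mpr (by rw [real_inner_comm]; exact hv)

lemma mem_fixedSpace {f : V ≃ₗᵢ[ℝ] V} {v : V} :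
    v ∈ fixedSpace f ↔ f v = v := by
  simp [fixedSpace, LinearMap.mem_ker, sub_eq_zero]



lemma exists_generic (U : Submodule ℝ V) (S : Finset V)
    (hS : ∀ α ∈ S, ∃ u ∈ U, ⟪α, u⟫ ≠ 0) :
    ∃ x ∈ U, ∀ α ∈ S, ⟪α, x⟫ ≠ 0 := by
  classical
  induction S using Finset.induction_on with
  | empty => exact ⟨0, U.zero_mem, by simp⟩
  | @insert β S' hβ ih =>
    obtain ⟨x, hxU, hx⟩ := ih (fun α hα => hS α (Finset.mem_insert_of_mem hα))
    obtain ⟨y, hyU, hy⟩ := hS β (Finset.mem_insert_self β S')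
    set Bad : Finset ℝ := (insert β S').image (fun α => -⟪α, x⟫ / ⟪α, y⟫) with hBad
    obtain ⟨t, ht⟩ := Infinite.exists_notMem_finset Bad
    refine ⟨x + t • y, U.add_mem hxU (U.smul_mem t hyU), ?_⟩
    intro α hα
    rw [inner_add_right, real_inner_smul_right]
    by_cases hαy : ⟪α, y⟫ = 0
    · have hαS' : α ∈ S' := by
        rcases Finset.mem_insert.mp hα with rfl | h
        · exact absurd hαy hy
        · exact h
      rw [hαy]
      simpa using hx α hαS'
    · intro hzero
      apply ht
      rw [hBad]
      apply Finset.mem_image.mpr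
      refine ⟨α, hα, ?_⟩
      field_simp
      linarith


variable [DecidableEq V]

/-- nonnegative cone generated by a finite set -/
def cone (Δ : Finset V) : Set V :=
  {v | ∃ c : V → ℝ, (∀ δ ∈ Δ, 0 ≤ c δ) ∧ v = ∑ δ ∈ Δ, c δ • δ}

lemma cone_self {Δ : Finset V} {β : V} (hβ : β ∈ Δ) : β ∈ cone Δ := by
  refine ⟨fun δ => if δ = β then 1 else 0, fun δ _ => by positivity, ?_⟩
  have : ∀ δ ∈ Δ, (if δ = β then (1:ℝ) else 0) • δ = (if δ = β then δ else 0) := by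
    intro δ _; split <;> simp
  rw [Finset.sum_congr rfl this, Finset.sum_ite_eq' Δ β (fun δ => δ)]
  simp [hβ]

lemma cone_subst {Δ : Finset V} {β : V} (hβ : β ∈ Δ) (h : β ∈ cone (Δ.erase β)) :
    cone Δ ⊆ cone (Δ.erase β) := by
  rintro v ⟨c, hc, rfl⟩
  obtain ⟨d, hd, hdeq⟩ := h
  refine ⟨fun δ => c δ + c β * d δ, fun δ hδ => add_nonneg (hc δ (Finset.mem_of_mem_erase hδ))
    (mul_nonneg (hc β hβ) (hd δ hδ)), ?_⟩
  rw [← Finset.add_sum_erase Δ (fun δ => c δ • δ) hβ]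
  rw [Finset.sum_congr rfl (fun δ _ => add_smul (c δ) (c β * d δ) δ), Finset.sum_add_distrib]
  rw [Finset.sum_congr (rfl : Δ.erase β = Δ.erase β) (fun δ _ => mul_smul (c β) (d δ) δ)]
  rw [← Finset.smul_sum, ← hdeq]
  exact add_comm _ _



variable (x : V) (Φ : Finset V)

/-- the positive roots -/
noncomputable def Pos : Finset V := Φ.filter (fun α => 0 < ⟪x, α⟫)

lemma Pos_subset : Pos x Φ ⊆ Φ := Finset.filter_subset _ _

lemma mem_Pos {α : V} : α ∈ Pos x Φ ↔ α ∈ Φ ∧ 0 < ⟪x, α⟫ := Finset.mem_filter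

lemma exists_simple :
    ∃ Δ : Finset V, Δ ⊆ Pos x Φ ∧ (∀ β ∈ Pos x Φ, β ∈ cone Δ) ∧
      ∀ Δ' ⊆ Pos x Φ, (∀ β ∈ Pos x Φ, β ∈ cone Δ') → Δ.card ≤ Δ'.card := by
  classical
  set F := (Pos x Φ).powerset.filter (fun Δ' => ∀ β ∈ Pos x Φ, β ∈ cone Δ')
  have hne : F.Nonempty := ⟨Pos x Φ, by
    simp only [F, Finset.mem_filter, Finset.mem_powerset]
    exact ⟨le_refl _, fun β hβ => cone_self hβ⟩⟩
  obtain ⟨Δ, hΔF, hmin⟩ := F.exists_min_image Finset.card hne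
  simp only [F, Finset.mem_filter, Finset.mem_powerset] at hΔF
  refine ⟨Δ, hΔF.1, hΔF.2, fun Δ' hΔ'1 hΔ'2 => hmin Δ' ?_⟩
  simp only [F, Finset.mem_filter, Finset.mem_powerset]
  exact ⟨hΔ'1, hΔ'2⟩

variable {x} {Φ}

lemma key_erase {Δ : Finset V} (hΔP : Δ ⊆ Pos x Φ) {μ ν : V} (hμ : μ ∈ Δ) (hν : ν ∈ Δ)
    (hne : ν ≠ μ) {r q : ℝ} (hq : 0 < q) {g : V → ℝ} (hg : ∀ δ ∈ Δ, 0 ≤ g δ)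
    (heq : r • μ = q • ν + ∑ δ ∈ Δ, g δ • δ) : μ ∈ cone (Δ.erase μ) := by
  have hxδ : ∀ δ ∈ Δ, 0 < ⟪x, δ⟫ := fun δ hδ => ((mem_Pos x Φ).mp (hΔP hδ)).2
  set T := ∑ δ ∈ Δ.erase μ, g δ • δ with hT
  have hsplit : ∑ δ ∈ Δ, g δ • δ = g μ • μ + T := (Finset.add_sum_erase Δ (fun δ => g δ • δ) hμ).symm
  have heq2 : (r - g μ) • μ = q • ν + T := by
    rw [sub_smul]; rw [hsplit] at heq; rw [heq]; abel
  have hxT : 0 ≤ ⟪x, T⟫ := by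
    rw [hT, inner_sum]
    refine Finset.sum_nonneg (fun δ hδ => ?_)
    rw [real_inner_smul_right]
    exact mul_nonneg (hg δ (Finset.mem_of_mem_erase hδ)) (le_of_lt (hxδ δ (Finset.mem_of_mem_erase hδ)))
  have hrg : 0 < r - g μ := by
    have h1 : (r - g μ) * ⟪x, μ⟫ = q * ⟪x, ν⟫ + ⟪x, T⟫ := by
      rw [← real_inner_smul_right, heq2, inner_add_right, real_inner_smul_right]
    have h2 : 0 < (r - g μ) * ⟪x, μ⟫ := by
      rw [h1]
      have := mul_pos hq (hxδ ν hν)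
      linarith
    nlinarith [hxδ μ hμ]
  have hμeq : μ = (r - g μ)⁻¹ • (q • ν + T) := by
    rw [← heq2, smul_smul, inv_mul_cancel₀ (ne_of_gt hrg), one_smul]
  refine ⟨fun δ => (r - g μ)⁻¹ * (g δ + if δ = ν then q else 0), ?_, ?_⟩
  · intro δ hδ
    refine mul_nonneg (inv_nonneg.mpr (le_of_lt hrg)) (add_nonneg (hg δ (Finset.mem_of_mem_erase hδ)) ?_)
    split <;> [exact le_of_lt hq; exact le_refl 0]
  · have hνe : ν ∈ Δ.erase μ := Finset.mem_erase.mpr ⟨hne, hν⟩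
    have hsum : ∑ δ ∈ Δ.erase μ, ((r - g μ)⁻¹ * (g δ + if δ = ν then q else 0)) • δ
        = (r - g μ)⁻¹ • (T + q • ν) := by
      rw [Finset.sum_congr rfl (fun δ _ => mul_smul ((r - g μ)⁻¹) (g δ + if δ = ν then q else 0) δ)]
      rw [← Finset.smul_sum]
      congr 1
      rw [Finset.sum_congr rfl (fun δ _ => add_smul (g δ) (if δ = ν then q else 0) δ),
        Finset.sum_add_distrib]
      congr 1
      have : ∀ δ ∈ Δ.erase μ, (if δ = ν then q else 0) • δ = (if δ = ν then q • δ else 0) := by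
        intro δ _; split <;> simp
      rw [Finset.sum_congr rfl this, Finset.sum_ite_eq' (Δ.erase μ) ν (fun δ => q • δ), if_pos hνe]
    rw [hsum, add_comm]
    exact hμeq


lemma min_contra {Δ : Finset V} (hΔP : Δ ⊆ Pos x Φ)
    (hPcone : ∀ β ∈ Pos x Φ, β ∈ cone Δ)
    (hmin : ∀ Δ' ⊆ Pos x Φ, (∀ β ∈ Pos x Φ, β ∈ cone Δ') → Δ.card ≤ Δ'.card)
    {μ : V} (hμ : μ ∈ Δ) (h : μ ∈ cone (Δ.erase μ)) : False := by
  have h1 : ∀ β ∈ Pos x Φ, β ∈ cone (Δ.erase μ) :=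
    fun β hβ => cone_subst hμ h (hPcone β hβ)
  have h2 := hmin (Δ.erase μ) ((Finset.erase_subset μ Δ).trans hΔP) h1
  exact absurd h2 (not_le.mpr (Finset.card_erase_lt_of_mem hμ))

lemma obtuse (hunit : ∀ α ∈ Φ, ‖α‖ = 1) (hsym : ∀ α ∈ Φ, -α ∈ Φ)
    (hclo : ∀ α ∈ Φ, ∀ β ∈ Φ, (reflection (ℝ ∙ α)ᗮ : V ≃ₗᵢ[ℝ] V) β ∈ Φ)
    (hx : ∀ α ∈ Φ, ⟪x, α⟫ ≠ 0)
    {Δ : Finset V} (hΔP : Δ ⊆ Pos x Φ)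
    (hPcone : ∀ β ∈ Pos x Φ, β ∈ cone Δ)
    (hmin : ∀ Δ' ⊆ Pos x Φ, (∀ β ∈ Pos x Φ, β ∈ cone Δ') → Δ.card ≤ Δ'.card)
    {α β : V} (hα : α ∈ Δ) (hβ : β ∈ Δ) (hne : α ≠ β) : ⟪α, β⟫ ≤ 0 := by
  by_contra hpos
  push_neg at hpos
  have hαΦ : α ∈ Φ := Pos_subset x Φ (hΔP hα)
  have hβΦ : β ∈ Φ := Pos_subset x Φ (hΔP hβ)
  set c : ℝ := 2 * ⟪α, β⟫ with hc
  have hcpos : 0 < c := by positivity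
  set γ : V := β - c • α with hγ
  have hγΦ : γ ∈ Φ := by
    have := hclo α hαΦ β hβΦ
    rwa [refl_apply (hunit α hαΦ) β] at this
  rcases (hx γ hγΦ).lt_or_gt with hneg | hposγ
  · -- ⟪x,γ⟫ < 0 : use -γ = c•α - β ∈ Pos
    have hmγ : -γ ∈ Pos x Φ := (mem_Pos x Φ).mpr ⟨hsym γ hγΦ, by rw [inner_neg_right]; linarith⟩
    obtain ⟨g, hg, hgeq⟩ := hPcone (-γ) hmγ
    have heq : c • α = (1:ℝ) • β + ∑ δ ∈ Δ, g δ • δ := by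
      rw [← hgeq, one_smul, hγ]; abel
    exact min_contra hΔP hPcone hmin hα (key_erase hΔP hα hβ hne.symm one_pos hg heq)
  · -- γ ∈ Pos
    have hγP : γ ∈ Pos x Φ := (mem_Pos x Φ).mpr ⟨hγΦ, hposγ⟩
    obtain ⟨g, hg, hgeq⟩ := hPcone γ hγP
    have heq : (1:ℝ) • β = c • α + ∑ δ ∈ Δ, g δ • δ := by
      rw [← hgeq, one_smul, hγ]; abel
    exact min_contra hΔP hPcone hmin hβ (key_erase hΔP hβ hα hne hcpos hg heq)

lemma indep_coeffs (hunit : ∀ α ∈ Φ, ‖α‖ = 1) (hsym : ∀ α ∈ Φ, -α ∈ Φ)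
    (hclo : ∀ α ∈ Φ, ∀ β ∈ Φ, (reflection (ℝ ∙ α)ᗮ : V ≃ₗᵢ[ℝ] V) β ∈ Φ)
    (hx : ∀ α ∈ Φ, ⟪x, α⟫ ≠ 0)
    {Δ : Finset V} (hΔP : Δ ⊆ Pos x Φ)
    (hPcone : ∀ β ∈ Pos x Φ, β ∈ cone Δ)
    (hmin : ∀ Δ' ⊆ Pos x Φ, (∀ β ∈ Pos x Φ, β ∈ cone Δ') → Δ.card ≤ Δ'.card)
    {f : V → ℝ} (hf : ∑ δ ∈ Δ, f δ • δ = 0) : ∀ δ ∈ Δ, f δ = 0 := by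
  classical
  have hxδ : ∀ δ ∈ Δ, 0 < ⟪x, δ⟫ := fun δ hδ => ((mem_Pos x Φ).mp (hΔP hδ)).2
  set Pp := Δ.filter (fun δ => 0 < f δ) with hPp
  set Np := Δ.filter (fun δ => ¬ 0 < f δ) with hNp
  have hsplit : (∑ δ ∈ Pp, f δ • δ) + (∑ δ ∈ Np, f δ • δ) = 0 := by
    rw [hPp, hNp, Finset.sum_filter_add_sum_filter_not Δ (fun δ => 0 < f δ) (fun δ => f δ • δ)]
    exact hf
  have hEq : (∑ δ ∈ Pp, f δ • δ) = ∑ δ ∈ Np, (-(f δ)) • δ := by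
    have h1 : ∑ δ ∈ Np, (-(f δ)) • δ = -∑ δ ∈ Np, f δ • δ := by
      rw [← Finset.sum_neg_distrib]
      exact Finset.sum_congr rfl (fun δ _ => neg_smul (f δ) δ)
    rw [h1, eq_neg_iff_add_eq_zero]
    exact hsplit
  have hobt : ∀ δ ∈ Pp, ∀ δ' ∈ Np, ⟪δ, δ'⟫ ≤ 0 := by
    intro δ hδ δ' hδ'
    have h1 := Finset.mem_filter.mp hδ
    have h2 := Finset.mem_filter.mp hδ'
    have hne : δ ≠ δ' := fun h => h2.2 (h ▸ h1.2)
    exact obtuse hunit hsym hclo hx hΔP hPcone hmin h1.1 h2.1 hne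
  have hunn : ⟪(∑ δ ∈ Pp, f δ • δ), (∑ δ ∈ Np, (-(f δ)) • δ)⟫ ≤ 0 := by
    rw [sum_inner]
    refine Finset.sum_nonpos (fun δ hδ => ?_)
    rw [real_inner_smul_left, inner_sum]
    refine mul_nonpos_of_nonneg_of_nonpos (le_of_lt (Finset.mem_filter.mp hδ).2)
      (Finset.sum_nonpos (fun δ' hδ' => ?_))
    rw [real_inner_smul_right]
    exact mul_nonpos_of_nonneg_of_nonpos
      (neg_nonneg.mpr (le_of_not_gt (Finset.mem_filter.mp hδ').2)) (hobt δ hδ δ' hδ')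
  have hSS : ⟪(∑ δ ∈ Pp, f δ • δ), (∑ δ ∈ Pp, f δ • δ)⟫ ≤ 0 := by
    have := congrArg (fun z : V => ⟪(∑ δ ∈ Pp, f δ • δ), z⟫) hEq
    rw [this]
    exact hunn
  have hS0 : (∑ δ ∈ Pp, f δ • δ) = 0 :=
    inner_self_eq_zero.mp (le_antisymm hSS real_inner_self_nonneg)
  have hPpe : Pp = ∅ := by
    by_contra hne
    have hpos : 0 < ∑ δ ∈ Pp, f δ * ⟪x, δ⟫ := by
      refine Finset.sum_pos (fun δ hδ => ?_) (Finset.nonempty_of_ne_empty hne)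
      have h1 := Finset.mem_filter.mp hδ
      exact mul_pos h1.2 (hxδ δ h1.1)
    have hz : ∑ δ ∈ Pp, f δ * ⟪x, δ⟫ = 0 := by
      have := congrArg (fun z : V => ⟪x, z⟫) hS0
      simp only [inner_zero_right] at this
      rw [← this, inner_sum]
      exact Finset.sum_congr rfl (fun δ _ => by rw [real_inner_smul_right])
    rw [hz] at hpos
    exact lt_irrefl 0 hpos
  have hfle : ∀ δ ∈ Δ, f δ ≤ 0 := by
    intro δ hδ
    by_contra h
    have : δ ∈ Pp := Finset.mem_filter.mpr ⟨hδ, lt_of_not_ge h⟩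
    rw [hPpe] at this
    exact absurd this (Finset.notMem_empty δ)
  have hsum0 : ∑ δ ∈ Δ, f δ * ⟪x, δ⟫ = 0 := by
    have := congrArg (fun z : V => ⟪x, z⟫) hf
    simp only [inner_zero_right] at this
    rw [← this, inner_sum]
    exact Finset.sum_congr rfl (fun δ _ => by rw [real_inner_smul_right])
  intro δ hδ
  have hterm : f δ * ⟪x, δ⟫ = 0 :=
    (Finset.sum_eq_zero_iff_of_nonpos (fun δ' hδ' =>
      mul_nonpos_of_nonpos_of_nonneg (hfle δ' hδ') (le_of_lt (hxδ δ' hδ')))).mp hsum0 δ hδ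
  rcases mul_eq_zero.mp hterm with h | h
  · exact h
  · exact absurd h (ne_of_gt (hxδ δ hδ))

lemma coeff_single (hunit : ∀ α ∈ Φ, ‖α‖ = 1) (hsym : ∀ α ∈ Φ, -α ∈ Φ)
    (hclo : ∀ α ∈ Φ, ∀ β ∈ Φ, (reflection (ℝ ∙ α)ᗮ : V ≃ₗᵢ[ℝ] V) β ∈ Φ)
    (hx : ∀ α ∈ Φ, ⟪x, α⟫ ≠ 0)
    {Δ : Finset V} (hΔP : Δ ⊆ Pos x Φ)
    (hPcone : ∀ β ∈ Pos x Φ, β ∈ cone Δ)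
    (hmin : ∀ Δ' ⊆ Pos x Φ, (∀ β ∈ Pos x Φ, β ∈ cone Δ') → Δ.card ≤ Δ'.card)
    {e : V → ℝ} {cc : ℝ} {α : V} (hα : α ∈ Δ)
    (heq : ∑ δ ∈ Δ, e δ • δ = cc • α) : ∀ δ ∈ Δ, δ ≠ α → e δ = 0 := by
  classical
  have hf : ∑ δ ∈ Δ, (e δ - if δ = α then cc else 0) • δ = 0 := by
    rw [Finset.sum_congr rfl (fun δ _ => sub_smul (e δ) (if δ = α then cc else 0) δ),
      Finset.sum_sub_distrib, heq]
    have : ∀ δ ∈ Δ, (if δ = α then cc else 0) • δ = (if δ = α then cc • δ else 0) := by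
      intro δ _; split <;> simp
    rw [Finset.sum_congr rfl this, Finset.sum_ite_eq' Δ α (fun δ => cc • δ), if_pos hα, sub_self]
  intro δ hδ hne
  have := indep_coeffs hunit hsym hclo hx hΔP hPcone hmin hf δ hδ
  simpa [hne] using this

lemma refl_pos_of_ne (hunit : ∀ α ∈ Φ, ‖α‖ = 1) (hsym : ∀ α ∈ Φ, -α ∈ Φ)
    (hclo : ∀ α ∈ Φ, ∀ β ∈ Φ, (reflection (ℝ ∙ α)ᗮ : V ≃ₗᵢ[ℝ] V) β ∈ Φ)
    (hx : ∀ α ∈ Φ, ⟪x, α⟫ ≠ 0)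
    {Δ : Finset V} (hΔP : Δ ⊆ Pos x Φ)
    (hPcone : ∀ β ∈ Pos x Φ, β ∈ cone Δ)
    (hmin : ∀ Δ' ⊆ Pos x Φ, (∀ β ∈ Pos x Φ, β ∈ cone Δ') → Δ.card ≤ Δ'.card)
    {α β : V} (hα : α ∈ Δ) (hβ : β ∈ Pos x Φ) (hne : β ≠ α) :
    (reflection (ℝ ∙ α)ᗮ : V ≃ₗᵢ[ℝ] V) β ∈ Pos x Φ := by
  classical
  have hαP : α ∈ Pos x Φ := hΔP hα
  have hαΦ : α ∈ Φ := Pos_subset x Φ hαP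
  have hβΦ : β ∈ Φ := Pos_subset x Φ hβ
  have hxα : 0 < ⟪x, α⟫ := ((mem_Pos x Φ).mp hαP).2
  have hxβ : 0 < ⟪x, β⟫ := ((mem_Pos x Φ).mp hβ).2
  have hγform : (reflection (ℝ ∙ α)ᗮ : V ≃ₗᵢ[ℝ] V) β = β - (2 * ⟪α, β⟫) • α :=
    refl_apply (hunit α hαΦ) β
  set c : ℝ := 2 * ⟪α, β⟫ with hc
  set γ : V := β - c • α with hγ
  have hγΦ : γ ∈ Φ := by rw [← hγform]; exact hclo α hαΦ β hβΦ
  rw [hγform]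
  rcases (hx γ hγΦ).lt_or_gt with hneg | hposγ
  · exfalso
    have hxγ : ⟪x, γ⟫ = ⟪x, β⟫ - c * ⟪x, α⟫ := by
      rw [hγ, inner_sub_right, real_inner_smul_right]
    rcases le_or_gt c 0 with hcle | hcpos
    · nlinarith
    · -- c > 0 : derive β = α, contradiction
      have hmγ : -γ ∈ Pos x Φ := (mem_Pos x Φ).mpr ⟨hsym γ hγΦ, by rw [inner_neg_right]; linarith⟩
      obtain ⟨g, hg, hgeq⟩ := hPcone (-γ) hmγ
      obtain ⟨b, hb, hbeq⟩ := hPcone β hβ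
      have heq : ∑ δ ∈ Δ, (b δ + g δ) • δ = c • α := by
        rw [Finset.sum_congr rfl (fun δ _ => add_smul (b δ) (g δ) δ), Finset.sum_add_distrib,
          ← hbeq, ← hgeq]
        rw [hγ]; abel
      have hzero : ∀ δ ∈ Δ, δ ≠ α → b δ + g δ = 0 :=
        coeff_single hunit hsym hclo hx hΔP hPcone hmin hα heq
      have hbzero : ∀ δ ∈ Δ, δ ≠ α → b δ = 0 := by
        intro δ hδ hne'
        have h1 := hzero δ hδ hne'
        have h2 := hb δ hδ
        have h3 := hg δ hδ
        linarith
      have hβα : β = b α • α := by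
        rw [hbeq]
        rw [Finset.sum_eq_single_of_mem α hα (fun δ hδ hne' => by rw [hbzero δ hδ hne', zero_smul])]
      have hnorm : ‖β‖ = 1 := hunit β hβΦ
      have hnormα : ‖α‖ = 1 := hunit α hαΦ
      have hbα : b α = 1 := by
        have h1 : ‖β‖ = |b α| * ‖α‖ := by rw [hβα, norm_smul, Real.norm_eq_abs]
        have h2 : |b α| = b α := abs_of_nonneg (hb α hα)
        rw [hnorm, hnormα, h2] at h1
        linarith
      rw [hbα, one_smul] at hβα
      exact hne hβα
  · exact (mem_Pos x Φ).mpr ⟨hγΦ, hposγ⟩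

lemma prod_refl_mem_Φ (hclo : ∀ α ∈ Φ, ∀ β ∈ Φ, (reflection (ℝ ∙ α)ᗮ : V ≃ₗᵢ[ℝ] V) β ∈ Φ) :
    ∀ (L : List V), (∀ δ ∈ L, δ ∈ Φ) → ∀ β ∈ Φ,
      (L.map (fun δ => (reflection (ℝ ∙ δ)ᗮ : V ≃ₗᵢ[ℝ] V))).prod β ∈ Φ := by
  intro L
  induction L with
  | nil => intro _ β hβ; simpa using hβ
  | cons δ L' ih =>
    intro hL β hβ
    have h1 : (((δ :: L').map (fun δ => (reflection (ℝ ∙ δ)ᗮ : V ≃ₗᵢ[ℝ] V))).prod) β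
        = (reflection (ℝ ∙ δ)ᗮ : V ≃ₗᵢ[ℝ] V) ((L'.map (fun δ => (reflection (ℝ ∙ δ)ᗮ : V ≃ₗᵢ[ℝ] V))).prod β) := by
      rw [List.map_cons, List.prod_cons, LinearIsometryEquiv.coe_mul, Function.comp_apply]
    rw [h1]
    exact hclo δ (hL δ (List.mem_cons_self)) _
      (ih (fun δ' hδ' => hL δ' (List.mem_cons_of_mem δ hδ')) β hβ)

lemma prod_refl_inv : ∀ (L : List V),
    ((L.map (fun δ => (reflection (ℝ ∙ δ)ᗮ : V ≃ₗᵢ[ℝ] V))).prod)⁻¹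
      = ((L.reverse.map (fun δ => (reflection (ℝ ∙ δ)ᗮ : V ≃ₗᵢ[ℝ] V))).prod) := by
  intro L
  induction L with
  | nil => simp
  | cons δ L' ih =>
    rw [List.map_cons, List.prod_cons, mul_inv_rev, ih, List.reverse_cons, List.map_append,
      List.prod_append, List.map_cons, List.map_nil, List.prod_cons, List.prod_nil, mul_one,
      refl_inv]

lemma word_of_mem_closure {Δ : Finset V} {w : V ≃ₗᵢ[ℝ] V}
    (hw : w ∈ Subgroup.closure {g : V ≃ₗᵢ[ℝ] V | ∃ δ ∈ Δ, g = reflection (ℝ ∙ δ)ᗮ}) :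
    ∃ L : List V, (∀ δ ∈ L, δ ∈ Δ) ∧
      (L.map (fun δ => (reflection (ℝ ∙ δ)ᗮ : V ≃ₗᵢ[ℝ] V))).prod = w := by
  induction hw using Subgroup.closure_induction with
  | mem g hg =>
    obtain ⟨δ, hδ, rfl⟩ := hg
    exact ⟨[δ], by simpa using hδ, by simp⟩
  | one => exact ⟨[], by simp, by simp⟩
  | mul g g' _ _ ihg ihg' =>
    obtain ⟨L1, hL1, hL1p⟩ := ihg
    obtain ⟨L2, hL2, hL2p⟩ := ihg'
    refine ⟨L1 ++ L2, ?_, by rw [List.map_append, List.prod_append, hL1p, hL2p]⟩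
    intro δ hδ
    rcases List.mem_append.mp hδ with h | h
    · exact hL1 δ h
    · exact hL2 δ h
  | inv g _ ihg =>
    obtain ⟨L1, hL1, hL1p⟩ := ihg
    refine ⟨L1.reverse, fun δ hδ => hL1 δ (List.mem_reverse.mp hδ), ?_⟩
    rw [← prod_refl_inv, hL1p]

lemma exists_conj (hunit : ∀ α ∈ Φ, ‖α‖ = 1) (hsym : ∀ α ∈ Φ, -α ∈ Φ)
    (hclo : ∀ α ∈ Φ, ∀ β ∈ Φ, (reflection (ℝ ∙ α)ᗮ : V ≃ₗᵢ[ℝ] V) β ∈ Φ)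
    (hx : ∀ α ∈ Φ, ⟪x, α⟫ ≠ 0)
    {Δ : Finset V} (hΔP : Δ ⊆ Pos x Φ)
    (hPcone : ∀ β ∈ Pos x Φ, β ∈ cone Δ)
    (hmin : ∀ Δ' ⊆ Pos x Φ, (∀ β ∈ Pos x Φ, β ∈ cone Δ') → Δ.card ≤ Δ'.card) :
    ∀ β ∈ Pos x Φ, ∃ g ∈ Subgroup.closure {g : V ≃ₗᵢ[ℝ] V | ∃ δ ∈ Δ, g = reflection (ℝ ∙ δ)ᗮ},
      ∃ δ ∈ Δ, g δ = β := by
  classical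
  by_contra hcon
  push_neg at hcon
  obtain ⟨β₀, hβ₀P, hβ₀⟩ := hcon
  set Bad := (Pos x Φ).filter (fun β => ¬ ∃ g ∈ Subgroup.closure
      {g : V ≃ₗᵢ[ℝ] V | ∃ δ ∈ Δ, g = reflection (ℝ ∙ δ)ᗮ}, ∃ δ ∈ Δ, g δ = β) with hBad
  have hne : Bad.Nonempty := ⟨β₀, Finset.mem_filter.mpr ⟨hβ₀P, by
    intro ⟨g, hg, δ, hδ, hgδ⟩; exact hβ₀ g hg δ hδ hgδ⟩⟩
  obtain ⟨β, hβBad, hβmin⟩ := Bad.exists_min_image (fun β => ⟪x, β⟫) hne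
  have hβP : β ∈ Pos x Φ := (Finset.mem_filter.mp hβBad).1
  have hβn : ¬ ∃ g ∈ Subgroup.closure {g : V ≃ₗᵢ[ℝ] V | ∃ δ ∈ Δ, g = reflection (ℝ ∙ δ)ᗮ},
      ∃ δ ∈ Δ, g δ = β := (Finset.mem_filter.mp hβBad).2
  have hβΔ : β ∉ Δ := by
    intro h
    exact hβn ⟨1, Subgroup.one_mem _, β, h, rfl⟩
  have hβΦ : β ∈ Φ := Pos_subset x Φ hβP
  obtain ⟨b, hb, hbeq⟩ := hPcone β hβP
  have hββ : 0 < ⟪β, β⟫ := by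
    rw [real_inner_self_eq_norm_sq, hunit β hβΦ]; norm_num
  have hex : ∃ δ ∈ Δ, 0 < b δ * ⟪β, δ⟫ := by
    by_contra h
    push_neg at h
    have h2 : ⟪β, β⟫ = ∑ δ ∈ Δ, b δ * ⟪β, δ⟫ := by
      have h3 := congrArg (fun z : V => ⟪β, z⟫) hbeq
      rw [h3, inner_sum]
      exact Finset.sum_congr rfl (fun δ _ => by rw [real_inner_smul_right])
    have h4 : ⟪β, β⟫ ≤ 0 := by
      rw [h2]
      exact Finset.sum_nonpos (fun δ hδ => le_of_not_gt (fun hlt => (not_lt.mpr (h δ hδ)) hlt))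
    linarith
  obtain ⟨δ, hδΔ, hδpos⟩ := hex
  have hβδ : 0 < ⟪β, δ⟫ := by
    rcases (hb δ hδΔ).eq_or_lt with h | h
    · exfalso; rw [← h, zero_mul] at hδpos; exact lt_irrefl 0 hδpos
    · nlinarith
  have hneβδ : β ≠ δ := fun h => hβΔ (h ▸ hδΔ)
  set γ := (reflection (ℝ ∙ δ)ᗮ : V ≃ₗᵢ[ℝ] V) β with hγ
  have hγP : γ ∈ Pos x Φ := refl_pos_of_ne hunit hsym hclo hx hΔP hPcone hmin hδΔ hβP hneβδ
  have hxγ : ⟪x, γ⟫ < ⟪x, β⟫ := by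
    rw [hγ, refl_apply (hunit δ (Pos_subset x Φ (hΔP hδΔ))) β, inner_sub_right,
      real_inner_smul_right]
    have hxδ : 0 < ⟪x, δ⟫ := ((mem_Pos x Φ).mp (hΔP hδΔ)).2
    have : 0 < ⟪δ, β⟫ := by rw [real_inner_comm]; exact hβδ
    nlinarith
  have hγBad : γ ∉ Bad := by
    intro h
    exact absurd (hβmin γ h) (not_le.mpr hxγ)
  have hγex : ∃ g ∈ Subgroup.closure {g : V ≃ₗᵢ[ℝ] V | ∃ δ ∈ Δ, g = reflection (ℝ ∙ δ)ᗮ},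
      ∃ δ' ∈ Δ, g δ' = γ := by
    by_contra h
    exact hγBad (Finset.mem_filter.mpr ⟨hγP, h⟩)
  obtain ⟨g, hg, δ', hδ', hgδ'⟩ := hγex
  apply hβn
  refine ⟨(reflection (ℝ ∙ δ)ᗮ : V ≃ₗᵢ[ℝ] V) * g,
    Subgroup.mul_mem _ (Subgroup.subset_closure ⟨δ, hδΔ, rfl⟩) hg, δ', hδ', ?_⟩
  rw [LinearIsometryEquiv.coe_mul, Function.comp_apply, hgδ', hγ, reflection_reflection]

lemma refl_mem_closure_simple (hunit : ∀ α ∈ Φ, ‖α‖ = 1) (hsym : ∀ α ∈ Φ, -α ∈ Φ)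
    (hclo : ∀ α ∈ Φ, ∀ β ∈ Φ, (reflection (ℝ ∙ α)ᗮ : V ≃ₗᵢ[ℝ] V) β ∈ Φ)
    (hx : ∀ α ∈ Φ, ⟪x, α⟫ ≠ 0)
    {Δ : Finset V} (hΔP : Δ ⊆ Pos x Φ)
    (hPcone : ∀ β ∈ Pos x Φ, β ∈ cone Δ)
    (hmin : ∀ Δ' ⊆ Pos x Φ, (∀ β ∈ Pos x Φ, β ∈ cone Δ') → Δ.card ≤ Δ'.card) :
    ∀ α ∈ Φ, (reflection (ℝ ∙ α)ᗮ : V ≃ₗᵢ[ℝ] V) ∈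
      Subgroup.closure {g : V ≃ₗᵢ[ℝ] V | ∃ δ ∈ Δ, g = reflection (ℝ ∙ δ)ᗮ} := by
  have key : ∀ β ∈ Pos x Φ, (reflection (ℝ ∙ β)ᗮ : V ≃ₗᵢ[ℝ] V) ∈
      Subgroup.closure {g : V ≃ₗᵢ[ℝ] V | ∃ δ ∈ Δ, g = reflection (ℝ ∙ δ)ᗮ} := by
    intro β hβ
    obtain ⟨g, hg, δ, hδ, hgδ⟩ := exists_conj hunit hsym hclo hx hΔP hPcone hmin β hβ
    have hδu : ‖δ‖ = 1 := hunit δ (Pos_subset x Φ (hΔP hδ))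
    have : (reflection (ℝ ∙ β)ᗮ : V ≃ₗᵢ[ℝ] V) = g * reflection (ℝ ∙ δ)ᗮ * g⁻¹ := by
      rw [refl_conj g hδu, hgδ]
    rw [this]
    exact Subgroup.mul_mem _ (Subgroup.mul_mem _ hg (Subgroup.subset_closure ⟨δ, hδ, rfl⟩))
      (Subgroup.inv_mem _ hg)
  intro α hα
  rcases (hx α hα).lt_or_gt with hneg | hpos
  · have h1 : -α ∈ Pos x Φ := (mem_Pos x Φ).mpr ⟨hsym α hα, by rw [inner_neg_right]; linarith⟩
    have h2 := key (-α) h1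
    rwa [refl_neg α] at h2
  · exact key α ((mem_Pos x Φ).mpr ⟨hα, hpos⟩)

lemma descent (hunit : ∀ α ∈ Φ, ‖α‖ = 1) (hsym : ∀ α ∈ Φ, -α ∈ Φ)
    (hclo : ∀ α ∈ Φ, ∀ β ∈ Φ, (reflection (ℝ ∙ α)ᗮ : V ≃ₗᵢ[ℝ] V) β ∈ Φ)
    (hx : ∀ α ∈ Φ, ⟪x, α⟫ ≠ 0)
    {Δ : Finset V} (hΔP : Δ ⊆ Pos x Φ)
    (hPcone : ∀ β ∈ Pos x Φ, β ∈ cone Δ)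
    (hmin : ∀ Δ' ⊆ Pos x Φ, (∀ β ∈ Pos x Φ, β ∈ cone Δ') → Δ.card ≤ Δ'.card) :
    ∀ (m : ℕ) (L : List V) (hL : L ≠ []), L.length = m → (∀ δ ∈ L, δ ∈ Δ) →
    (∀ L' : List V, (∀ δ ∈ L', δ ∈ Δ) →
      (L'.map (fun δ => (reflection (ℝ ∙ δ)ᗮ : V ≃ₗᵢ[ℝ] V))).prod
        = (L.map (fun δ => (reflection (ℝ ∙ δ)ᗮ : V ≃ₗᵢ[ℝ] V))).prod → L.length ≤ L'.length) →
    ⟪x, (L.map (fun δ => (reflection (ℝ ∙ δ)ᗮ : V ≃ₗᵢ[ℝ] V))).prod (L.getLast hL)⟫ < 0 := by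
  have hΔΦ : ∀ δ ∈ Δ, δ ∈ Φ := fun δ hδ => Pos_subset x Φ (hΔP hδ)
  intro m
  induction m using Nat.strong_induction_on with
  | _ m ih =>
    intro L hL hlen hLΔ hLmin
    match L, hL with
    | δ₁ :: L', hL2 =>
      have hδ₁Δ : δ₁ ∈ Δ := hLΔ δ₁ (List.mem_cons_self)
      have hδ₁Φ : δ₁ ∈ Φ := hΔΦ δ₁ hδ₁Δ
      rcases eq_or_ne L' [] with rfl | hL'ne
      · -- base case : single reflection
        simp only [List.map_cons, List.map_nil, List.prod_cons, List.prod_nil, mul_one,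
          List.getLast_singleton]
        rw [refl_root δ₁, inner_neg_right]
        have : 0 < ⟪x, δ₁⟫ := ((mem_Pos x Φ).mp (hΔP hδ₁Δ)).2
        linarith
      · -- inductive step
        set w' := (L'.map (fun δ => (reflection (ℝ ∙ δ)ᗮ : V ≃ₗᵢ[ℝ] V))).prod with hw'
        have hLget : (δ₁ :: L').getLast hL2 = L'.getLast hL'ne := List.getLast_cons hL'ne
        set α := L'.getLast hL'ne with hα
        have hαΔ : α ∈ Δ := hLΔ α (List.mem_cons_of_mem δ₁ (List.getLast_mem hL'ne))
        have hαΦ : α ∈ Φ := hΔΦ α hαΔ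
        have hL'Δ : ∀ δ ∈ L', δ ∈ Δ := fun δ hδ => hLΔ δ (List.mem_cons_of_mem δ₁ hδ)
        have hL'min : ∀ L'' : List V, (∀ δ ∈ L'', δ ∈ Δ) →
            (L''.map (fun δ => (reflection (ℝ ∙ δ)ᗮ : V ≃ₗᵢ[ℝ] V))).prod = w' →
            L'.length ≤ L''.length := by
          intro L'' hL''Δ hL''p
          have h1 := hLmin (δ₁ :: L'') (by
            intro δ hδ
            rcases List.mem_cons.mp hδ with rfl | h
            · exact hδ₁Δ
            · exact hL''Δ δ h) (by
            rw [List.map_cons, List.prod_cons, hL''p, List.map_cons, List.prod_cons])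
          simpa using h1
        have hIH := ih L'.length (by rw [← hlen]; simp) L' hL'ne rfl hL'Δ hL'min
        have hw'αΦ : w' α ∈ Φ := prod_refl_mem_Φ hclo L' (fun δ hδ => hΔΦ δ (hL'Δ δ hδ)) α hαΦ
        have hprodcons : ((δ₁ :: L').map (fun δ => (reflection (ℝ ∙ δ)ᗮ : V ≃ₗᵢ[ℝ] V))).prod
            = reflection (ℝ ∙ δ₁)ᗮ * w' := by
          rw [List.map_cons, List.prod_cons, hw']
        rcases eq_or_ne (w' α) (-δ₁) with heq | hneq
        · -- contradiction with minimality
          exfalso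
          have hconj : (reflection (ℝ ∙ (w' α))ᗮ : V ≃ₗᵢ[ℝ] V) = w' * reflection (ℝ ∙ α)ᗮ * w'⁻¹ :=
            (refl_conj w' (hunit α hαΦ)).symm
          have hδ₁eq : (reflection (ℝ ∙ δ₁)ᗮ : V ≃ₗᵢ[ℝ] V) = w' * reflection (ℝ ∙ α)ᗮ * w'⁻¹ := by
            rw [← hconj, heq, refl_neg]
          have hweq : (reflection (ℝ ∙ δ₁)ᗮ : V ≃ₗᵢ[ℝ] V) * w' = w' * reflection (ℝ ∙ α)ᗮ := by
            rw [hδ₁eq]; group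
          -- decompose L' = L'' ++ [α]
          have hdecomp : L'.dropLast ++ [α] = L' := List.dropLast_append_getLast hL'ne
          have hw'decomp : w' = (L'.dropLast.map (fun δ => (reflection (ℝ ∙ δ)ᗮ : V ≃ₗᵢ[ℝ] V))).prod
              * reflection (ℝ ∙ α)ᗮ := by
            rw [hw', ← hdecomp, List.map_append, List.prod_append]
            simp
          have hfinal : ((δ₁ :: L').map (fun δ => (reflection (ℝ ∙ δ)ᗮ : V ≃ₗᵢ[ℝ] V))).prod
              = (L'.dropLast.map (fun δ => (reflection (ℝ ∙ δ)ᗮ : V ≃ₗᵢ[ℝ] V))).prod := by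
            rw [hprodcons, hweq, hw'decomp]
            rw [mul_assoc]
            rw [refl_sq α, mul_one]
          have h2 := hLmin L'.dropLast (fun δ hδ => hL'Δ δ (List.dropLast_subset L' hδ)) hfinal.symm
          rw [List.length_cons, List.length_dropLast] at h2
          omega
        · -- descent
          have hmw'α : -(w' α) ∈ Pos x Φ := (mem_Pos x Φ).mpr ⟨hsym _ hw'αΦ, by
            rw [inner_neg_right]; linarith⟩
          have hne2 : -(w' α) ≠ δ₁ := by
            intro h
            exact hneq (by rw [← h]; simp)
          have h3 : (reflection (ℝ ∙ δ₁)ᗮ : V ≃ₗᵢ[ℝ] V) (-(w' α)) ∈ Pos x Φ :=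
            refl_pos_of_ne hunit hsym hclo hx hΔP hPcone hmin hδ₁Δ hmw'α hne2
          have h4 : 0 < ⟪x, (reflection (ℝ ∙ δ₁)ᗮ : V ≃ₗᵢ[ℝ] V) (-(w' α))⟫ :=
            ((mem_Pos x Φ).mp h3).2
          rw [map_neg, inner_neg_right] at h4
          rw [hLget, hprodcons, LinearIsometryEquiv.coe_mul, Function.comp_apply]
          exact hIH.trans_le (le_of_eq rfl) |>.trans_le (le_refl _) |> (fun _ => by linarith)

theorem stab_generic_eq_one (hunit : ∀ α ∈ Φ, ‖α‖ = 1) (hsym : ∀ α ∈ Φ, -α ∈ Φ)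
    (hclo : ∀ α ∈ Φ, ∀ β ∈ Φ, (reflection (ℝ ∙ α)ᗮ : V ≃ₗᵢ[ℝ] V) β ∈ Φ)
    (hx : ∀ α ∈ Φ, ⟪x, α⟫ ≠ 0) {w : V ≃ₗᵢ[ℝ] V}
    (hw : w ∈ Subgroup.closure {g : V ≃ₗᵢ[ℝ] V | ∃ α ∈ Φ, g = reflection (ℝ ∙ α)ᗮ})
    (hfix : w x = x) : w = 1 := by
  classical
  obtain ⟨Δ, hΔP, hPcone, hmin⟩ := exists_simple x Φ
  have hsub : {g : V ≃ₗᵢ[ℝ] V | ∃ α ∈ Φ, g = reflection (ℝ ∙ α)ᗮ} ⊆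
      ↑(Subgroup.closure {g : V ≃ₗᵢ[ℝ] V | ∃ δ ∈ Δ, g = reflection (ℝ ∙ δ)ᗮ}) := by
    rintro g ⟨α, hα, rfl⟩
    exact refl_mem_closure_simple hunit hsym hclo hx hΔP hPcone hmin α hα
  have hwS : w ∈ Subgroup.closure {g : V ≃ₗᵢ[ℝ] V | ∃ δ ∈ Δ, g = reflection (ℝ ∙ δ)ᗮ} :=
    (Subgroup.closure_le _).mpr hsub hw
  obtain ⟨L, hLΔ, hLp⟩ := word_of_mem_closure hwS
  by_contra hw1
  set lengths := {m : ℕ | ∃ L' : List V, (∀ δ ∈ L', δ ∈ Δ) ∧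
    (L'.map (fun δ => (reflection (ℝ ∙ δ)ᗮ : V ≃ₗᵢ[ℝ] V))).prod = w ∧ L'.length = m} with hlengths
  have hnon : lengths.Nonempty := ⟨L.length, L, hLΔ, hLp, rfl⟩
  obtain ⟨L₀, hL₀Δ, hL₀p, hL₀len⟩ := Nat.sInf_mem hnon
  have hne : L₀ ≠ [] := by
    rintro rfl
    simp only [List.map_nil, List.prod_nil] at hL₀p
    exact hw1 hL₀p.symm
  have hminword : ∀ L'' : List V, (∀ δ ∈ L'', δ ∈ Δ) →
      (L''.map (fun δ => (reflection (ℝ ∙ δ)ᗮ : V ≃ₗᵢ[ℝ] V))).prod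
        = (L₀.map (fun δ => (reflection (ℝ ∙ δ)ᗮ : V ≃ₗᵢ[ℝ] V))).prod →
      L₀.length ≤ L''.length := by
    intro L'' hL''Δ hL''p
    have : L''.length ∈ lengths := ⟨L'', hL''Δ, by rw [hL''p, hL₀p], rfl⟩
    rw [hL₀len]
    exact Nat.sInf_le this
  have hdesc := descent hunit hsym hclo hx hΔP hPcone hmin L₀.length L₀ hne rfl hL₀Δ hminword
  rw [hL₀p] at hdesc
  set γ := L₀.getLast hne with hγ
  have hγΔ : γ ∈ Δ := hL₀Δ γ (List.getLast_mem hne)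
  have hγpos : 0 < ⟪x, γ⟫ := ((mem_Pos x Φ).mp (hΔP hγΔ)).2
  have : ⟪x, w γ⟫ = ⟪x, γ⟫ := by
    conv_lhs => rw [← hfix]
    rw [LinearIsometryEquiv.inner_map_map]
  rw [this] at hdesc
  linarith

section Group

/-- unit roots of reflections belonging to `W` -/
def PhiSet (W : Subgroup (V ≃ₗᵢ[ℝ] V)) : Set V :=
  {α | ‖α‖ = 1 ∧ (reflection (ℝ ∙ α)ᗮ : V ≃ₗᵢ[ℝ] V) ∈ W}

lemma PhiSet_finite (W : Subgroup (V ≃ₗᵢ[ℝ] V)) [Finite W] : (PhiSet W).Finite := by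
  have hsub : PhiSet W ⊆ ⋃ (t : ↥W), {α : V | ‖α‖ = 1 ∧
      (reflection (ℝ ∙ α)ᗮ : V ≃ₗᵢ[ℝ] V) = (t : V ≃ₗᵢ[ℝ] V)} := by
    rintro α ⟨hα1, hα2⟩
    exact Set.mem_iUnion.mpr ⟨⟨_, hα2⟩, hα1, rfl⟩
  refine Set.Finite.subset (Set.finite_iUnion (fun t => ?_)) hsub
  set F := {α : V | ‖α‖ = 1 ∧ (reflection (ℝ ∙ α)ᗮ : V ≃ₗᵢ[ℝ] V) = (t : V ≃ₗᵢ[ℝ] V)} with hF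
  rcases Set.eq_empty_or_nonempty F with h | ⟨α₀, hα₀⟩
  · rw [h]; exact Set.finite_empty
  refine Set.Finite.subset (Set.toFinite ({α₀, -α₀} : Set V)) ?_
  intro β hβ
  have hβα : β ∈ (ℝ ∙ α₀) := by
    have h1 : (reflection (ℝ ∙ β)ᗮ : V ≃ₗᵢ[ℝ] V) = reflection (ℝ ∙ α₀)ᗮ := by
      rw [hβ.2, ← hα₀.2]
    have h2 : (reflection (ℝ ∙ α₀)ᗮ : V ≃ₗᵢ[ℝ] V) β = -β := by
      rw [← h1, refl_root]
    have h3 : 2 • ((ℝ ∙ α₀)ᗮ.starProjection β : V) - β = -β := by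
      rw [← h2, reflection_apply]
    have h4 : ((ℝ ∙ α₀)ᗮ.starProjection β : V) = 0 := by
      rw [two_smul] at h3
      have h5 := sub_eq_iff_eq_add.mp h3
      rw [neg_add_cancel] at h5
      have h6 : (2:ℝ) • ((ℝ ∙ α₀)ᗮ.starProjection β : V) = 0 := by
        rw [two_smul]; exact h5
      rcases smul_eq_zero.mp h6 with h | h
      · norm_num at h
      · exact h
    have h6 : β ∈ ((ℝ ∙ α₀)ᗮ)ᗮ := by
      exact (Submodule.starProjection_apply_eq_zero_iff (K := (ℝ ∙ α₀)ᗮ)).mp h4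
    rwa [Submodule.orthogonal_orthogonal] at h6
  obtain ⟨c, hc⟩ := Submodule.mem_span_singleton.mp hβα
  have hc1 : |c| = 1 := by
    have h1 : ‖β‖ = 1 := hβ.1
    have h2 : ‖α₀‖ = 1 := hα₀.1
    rw [← hc, norm_smul, Real.norm_eq_abs, h2, mul_one] at h1
    exact h1
  rcases abs_eq (by norm_num : (0:ℝ) ≤ 1) |>.mp hc1 with h | h
  · left; rw [← hc, h, one_smul]
  · right; rw [← hc, h]; simp

end Group

noncomputable def PhiFin (W : Subgroup (V ≃ₗᵢ[ℝ] V)) [Finite W] : Finset V :=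
  (PhiSet_finite W).toFinset

lemma mem_PhiFin {W : Subgroup (V ≃ₗᵢ[ℝ] V)} [Finite W] {α : V} :
    α ∈ PhiFin W ↔ ‖α‖ = 1 ∧ (reflection (ℝ ∙ α)ᗮ : V ≃ₗᵢ[ℝ] V) ∈ W := by
  rw [PhiFin, Set.Finite.mem_toFinset]
  rfl

lemma PhiFin_unit {W : Subgroup (V ≃ₗᵢ[ℝ] V)} [Finite W] : ∀ α ∈ PhiFin W, ‖α‖ = 1 :=
  fun _ hα => (mem_PhiFin.mp hα).1

lemma PhiFin_sym {W : Subgroup (V ≃ₗᵢ[ℝ] V)} [Finite W] : ∀ α ∈ PhiFin W, -α ∈ PhiFin W := by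
  intro α hα
  obtain ⟨h1, h2⟩ := mem_PhiFin.mp hα
  exact mem_PhiFin.mpr ⟨by rw [norm_neg]; exact h1, by rw [refl_neg]; exact h2⟩

lemma PhiFin_clo {W : Subgroup (V ≃ₗᵢ[ℝ] V)} [Finite W] :
    ∀ α ∈ PhiFin W, ∀ β ∈ PhiFin W,
      (reflection (ℝ ∙ α)ᗮ : V ≃ₗᵢ[ℝ] V) β ∈ PhiFin W := by
  intro α hα β hβ
  obtain ⟨hα1, hα2⟩ := mem_PhiFin.mp hα
  obtain ⟨hβ1, hβ2⟩ := mem_PhiFin.mp hβ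
  refine mem_PhiFin.mpr ⟨by rw [LinearIsometryEquiv.norm_map]; exact hβ1, ?_⟩
  have h1 : (reflection (ℝ ∙ ((reflection (ℝ ∙ α)ᗮ : V ≃ₗᵢ[ℝ] V) β))ᗮ : V ≃ₗᵢ[ℝ] V)
      = reflection (ℝ ∙ α)ᗮ * reflection (ℝ ∙ β)ᗮ * (reflection (ℝ ∙ α)ᗮ)⁻¹ :=
    (refl_conj _ hβ1).symm
  rw [h1, refl_inv]
  exact W.mul_mem (W.mul_mem hα2 hβ2) hα2

lemma orthogonal_moved_le_fixed (w : V ≃ₗᵢ[ℝ] V) :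
    (movedSpace w)ᗮ ≤ fixedSpace w := by
  intro z hz
  have h1 : ∀ v : V, ⟪w v - v, z⟫ = 0 := by
    intro v
    refine hz _ ?_
    exact ⟨v, by simp [movedSpace, LinearMap.sub_apply]⟩
  have h2 : ∀ v : V, ⟪v, w⁻¹ z⟫ = ⟪v, z⟫ := by
    intro v
    have h3 : ⟪w v, z⟫ = ⟪v, z⟫ := by
      have := h1 v
      rw [inner_sub_left, sub_eq_zero] at this
      exact this
    rw [← h3]
    calc ⟪v, w⁻¹ z⟫ = ⟪w v, w (w⁻¹ z)⟫ := (LinearIsometryEquiv.inner_map_map w v _).symm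
      _ = ⟪w v, z⟫ := by rw [inv_apply_eq_symm, w.apply_symm_apply]
  have h4 : w⁻¹ z = z := ext_inner_left ℝ (fun v => h2 v)
  have h5 : w z = z := by
    conv_lhs => rw [← h4]
    rw [inv_apply_eq_symm, w.apply_symm_apply]
  exact mem_fixedSpace.mpr h5

lemma fixed_orthogonal_le_moved (w : V ≃ₗᵢ[ℝ] V) :
    (fixedSpace w)ᗮ ≤ movedSpace w := by
  have h1 := Submodule.orthogonal_le (orthogonal_moved_le_fixed w)
  rwa [Submodule.orthogonal_orthogonal] at h1

/-- Brady–Watt : multiplying by a reflection whose root is orthogonal to the whole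
fixed space strictly increases the fixed space. -/
lemma fixed_lt_fixed_refl_mul (w : V ≃ₗᵢ[ℝ] V) {α : V} (hα : ‖α‖ = 1)
    (hFix : fixedSpace w ≤ (ℝ ∙ α)ᗮ) :
    fixedSpace w < fixedSpace ((reflection (ℝ ∙ α)ᗮ : V ≃ₗᵢ[ℝ] V) * w) := by
  have hα0 : α ≠ 0 := by intro h; rw [h, norm_zero] at hα; exact absurd hα (by norm_num)
  have hαFixo : α ∈ (fixedSpace w)ᗮ := by
    intro v hv
    rw [real_inner_comm]
    exact (hFix hv) α (Submodule.mem_span_singleton_self α)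
  have hαmov : α ∈ movedSpace w := fixed_orthogonal_le_moved w hαFixo
  rw [movedSpace] at hαmov
  obtain ⟨y, hy⟩ := hαmov
  have hy' : w y - y = α := by
    have h := hy
    simp only [LinearMap.sub_apply, LinearMap.id_coe, id_eq, LinearEquiv.coe_coe,
      LinearIsometryEquiv.coe_toLinearEquiv] at h
    exact h
  have hwy : w y = y + α := by rw [← hy']; abel
  have hyα : 2 * ⟪y, α⟫ = -1 := by
    have h1 : ‖w y‖ = ‖y‖ := w.norm_map y
    rw [hwy] at h1
    have h2 : ‖y + α‖ ^ 2 = ‖y‖ ^ 2 := by rw [h1]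
    rw [norm_add_sq_real, hα] at h2
    nlinarith
  have hty : (reflection (ℝ ∙ α)ᗮ : V ≃ₗᵢ[ℝ] V) y = y + α := by
    rw [refl_apply hα y, real_inner_comm y α, hyα]
    simp
  have hfixy : ((reflection (ℝ ∙ α)ᗮ : V ≃ₗᵢ[ℝ] V) * w) y = y := by
    rw [LinearIsometryEquiv.coe_mul, Function.comp_apply, hwy, map_add, hty, refl_root]
    abel
  have hle : fixedSpace w ≤ fixedSpace ((reflection (ℝ ∙ α)ᗮ : V ≃ₗᵢ[ℝ] V) * w) := by
    intro v hv
    have h1 : w v = v := mem_fixedSpace.mp hv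
    have h2 : (reflection (ℝ ∙ α)ᗮ : V ≃ₗᵢ[ℝ] V) v = v :=
      reflection_mem_subspace_eq_self (hFix hv)
    exact mem_fixedSpace.mpr (by
      rw [LinearIsometryEquiv.coe_mul, Function.comp_apply, h1, h2])
  refine SetLike.lt_iff_le_and_exists.mpr ⟨hle, y, mem_fixedSpace.mpr hfixy, ?_⟩
  intro hmem
  have := mem_fixedSpace.mp hmem
  rw [hwy] at this
  exact hα0 (by
    have h := left_eq_add.mp this.symm
    exact h)

lemma IsHypReflection.unit_root {f : V ≃ₗᵢ[ℝ] V} (h : IsHypReflection f) :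
    ∃ α : V, ‖α‖ = 1 ∧ f = reflection (ℝ ∙ α)ᗮ := by
  obtain ⟨α, hα0, rfl⟩ := h
  have hn : ‖α‖ ≠ 0 := norm_ne_zero_iff.mpr hα0
  refine ⟨‖α‖⁻¹ • α, ?_, ?_⟩
  · rw [norm_smul, Real.norm_eq_abs, abs_of_nonneg (inv_nonneg.mpr (norm_nonneg α)),
      inv_mul_cancel₀ hn]
  · exact (refl_smul (inv_ne_zero hn) α).symm

lemma master_aux (W : Subgroup (V ≃ₗᵢ[ℝ] V)) [Finite W]
    (hgen : Subgroup.closure {x : W | IsHypReflection (x : V ≃ₗᵢ[ℝ] V)} = ⊤) :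
    ∀ (k : ℕ) (w : W), Module.finrank ℝ V ≤
      Module.finrank ℝ (fixedSpace (w : V ≃ₗᵢ[ℝ] V)) + k →
    ∃ L : List W, (∀ t ∈ L, IsHypReflection (t : V ≃ₗᵢ[ℝ] V)) ∧ L.prod = w ∧ L.length ≤ k := by
  intro k
  induction k with
  | zero =>
    intro w hk
    have h1 : Module.finrank ℝ (fixedSpace (w : V ≃ₗᵢ[ℝ] V)) = Module.finrank ℝ V :=
      le_antisymm (Submodule.finrank_le _) (by simpa using hk)
    have h2 : fixedSpace (w : V ≃ₗᵢ[ℝ] V) = ⊤ := Submodule.eq_top_of_finrank_eq h1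
    have h3 : (w : V ≃ₗᵢ[ℝ] V) = 1 := by
      ext v
      have hv : v ∈ fixedSpace (w : V ≃ₗᵢ[ℝ] V) := h2 ▸ Submodule.mem_top
      simpa using mem_fixedSpace.mp hv
    exact ⟨[], by simp, by rw [List.prod_nil]; exact (Subtype.ext h3).symm, by simp⟩
  | succ k ih =>
    intro w hk
    by_cases hw1 : w = 1
    · exact ⟨[], by simp, by rw [List.prod_nil, hw1], by simp⟩
    by_cases hex : ∃ α ∈ PhiSet W, fixedSpace (w : V ≃ₗᵢ[ℝ] V) ≤ (ℝ ∙ α)ᗮ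
    · obtain ⟨α, ⟨hαu, hαW⟩, hFix⟩ := hex
      set tW : W := ⟨reflection (ℝ ∙ α)ᗮ, hαW⟩ with htW
      have hlt := fixed_lt_fixed_refl_mul (w : V ≃ₗᵢ[ℝ] V) hαu hFix
      have hrank := Submodule.finrank_lt_finrank_of_lt hlt
      have hcoe : ((tW * w : W) : V ≃ₗᵢ[ℝ] V)
          = (reflection (ℝ ∙ α)ᗮ : V ≃ₗᵢ[ℝ] V) * (w : V ≃ₗᵢ[ℝ] V) := rfl
      have hk' : Module.finrank ℝ V ≤
          Module.finrank ℝ (fixedSpace ((tW * w : W) : V ≃ₗᵢ[ℝ] V)) + k := by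
        rw [hcoe]
        omega
      obtain ⟨L', hL'refl, hL'prod, hL'len⟩ := ih (tW * w) hk'
      refine ⟨tW :: L', ?_, ?_, by simpa using hL'len⟩
      · intro t ht
        rcases List.mem_cons.mp ht with rfl | h
        · exact ⟨α, fun h0 => by rw [h0, norm_zero] at hαu; exact absurd hαu (by norm_num), rfl⟩
        · exact hL'refl t h
      · rw [List.prod_cons, hL'prod, ← mul_assoc]
        have htt : tW * tW = 1 := Subtype.ext (refl_sq α)
        rw [htt, one_mul]
    · exfalso
      push_neg at hex
      have hS : ∀ α ∈ PhiFin W, ∃ u ∈ fixedSpace (w : V ≃ₗᵢ[ℝ] V), ⟪α, u⟫ ≠ 0 := by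
        intro α hα
        obtain ⟨hαu, hαW⟩ := mem_PhiFin.mp hα
        obtain ⟨u, huF, hu⟩ := SetLike.not_le_iff_exists.mp (hex α ⟨hαu, hαW⟩)
        refine ⟨u, huF, fun hzero => hu ?_⟩
        intro v hv
        obtain ⟨c, rfl⟩ := Submodule.mem_span_singleton.mp hv
        rw [real_inner_smul_left, hzero, mul_zero]
      obtain ⟨x, hxF, hx⟩ := exists_generic (fixedSpace (w : V ≃ₗᵢ[ℝ] V)) (PhiFin W) hS
      have hx' : ∀ α ∈ PhiFin W, ⟪x, α⟫ ≠ 0 := by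
        intro α hα
        rw [real_inner_comm]
        exact hx α hα
      have h1 : (w : V ≃ₗᵢ[ℝ] V) ∈ Subgroup.map W.subtype ⊤ := ⟨w, Subgroup.mem_top w, rfl⟩
      rw [← hgen, MonoidHom.map_closure] at h1
      have h2 : (W.subtype '' {x : W | IsHypReflection (x : V ≃ₗᵢ[ℝ] V)}) ⊆
          {g : V ≃ₗᵢ[ℝ] V | ∃ α ∈ PhiFin W, g = reflection (ℝ ∙ α)ᗮ} := by
        rintro g ⟨t, ht, rfl⟩
        obtain ⟨α, hαu, heq⟩ := IsHypReflection.unit_root ht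
        have hmem : α ∈ PhiFin W := mem_PhiFin.mpr ⟨hαu, by rw [← heq]; exact t.2⟩
        exact ⟨α, hmem, heq⟩
      have h3 : (w : V ≃ₗᵢ[ℝ] V) ∈ Subgroup.closure
          {g : V ≃ₗᵢ[ℝ] V | ∃ α ∈ PhiFin W, g = reflection (ℝ ∙ α)ᗮ} :=
        Subgroup.closure_mono h2 h1
      have h4 : (w : V ≃ₗᵢ[ℝ] V) x = x := mem_fixedSpace.mp hxF
      have h5 := stab_generic_eq_one PhiFin_unit PhiFin_sym PhiFin_clo hx' h3 h4
      exact hw1 (Subtype.ext h5)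


end Aux

/-- Let `W` be a finite real reflection group acting essentially on `V`, and let `w ∈ W`
be a quasi-Coxeter element, i.e. some `T`-reduced expression of `w` generates `W`. Then
`w` has no nonzero fixed vector in `V`: `V^w = 0`, equivalently `ℓ_T(w) = dim V`. -/
theorem quasiCoxeter_fixedSpace_eq_bot (W : Subgroup (V ≃ₗᵢ[ℝ] V)) [Finite W]
    (hgen : Subgroup.closure {x : W | IsHypReflection (x : V ≃ₗᵢ[ℝ] V)} = ⊤)
    (hess : ∀ v : V, (∀ g : W, (g : V ≃ₗᵢ[ℝ] V) v = v) → v = 0)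
    (w : W) (l : List W)
    (hlT : ∀ t ∈ l, IsHypReflection (t : V ≃ₗᵢ[ℝ] V))
    (hlprod : l.prod = w)
    (hlred : l.length = wordLength {x : W | IsHypReflection (x : V ≃ₗᵢ[ℝ] V)} w)
    (hquasi : Subgroup.closure {x | x ∈ l} = (⊤ : Subgroup W)) :
    fixedSpace (w : V ≃ₗᵢ[ℝ] V) = ⊥ ∧
      wordLength {x : W | IsHypReflection (x : V ≃ₗᵢ[ℝ] V)} w = Module.finrank ℝ V := by
  classical
  have hfle : Module.finrank ℝ (fixedSpace (w : V ≃ₗᵢ[ℝ] V)) ≤ Module.finrank ℝ V :=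
    Submodule.finrank_le _
  -- upper bound on word length via the master theorem
  obtain ⟨L, hLrefl, hLprod, hLlen⟩ := master_aux W hgen
    (Module.finrank ℝ V - Module.finrank ℝ (fixedSpace (w : V ≃ₗᵢ[ℝ] V))) w (by omega)
  have hwl_le : wordLength {x : W | IsHypReflection (x : V ≃ₗᵢ[ℝ] V)} w ≤
      Module.finrank ℝ V - Module.finrank ℝ (fixedSpace (w : V ≃ₗᵢ[ℝ] V)) :=
    le_trans (Nat.sInf_le ⟨L, hLrefl, rfl, hLprod⟩) hLlen
  -- roots of the reduced expression
  set groot : W → V := fun t =>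
    if h : IsHypReflection (t : V ≃ₗᵢ[ℝ] V) then h.choose else 0 with hgroot
  have hgroot_spec : ∀ t ∈ l, (t : V ≃ₗᵢ[ℝ] V) = reflection (ℝ ∙ (groot t))ᗮ := by
    intro t ht
    have h := hlT t ht
    rw [hgroot]
    simp only [dif_pos h]
    exact h.choose_spec.2
  set R : Finset V := (l.map groot).toFinset with hR
  -- the roots span V
  have hspan : Submodule.span ℝ (R : Set V) = ⊤ := by
    rw [← Submodule.orthogonal_eq_bot_iff]
    rw [Submodule.eq_bot_iff]
    intro v hv
    apply hess
    have hfixl : ∀ t ∈ l, (t : V ≃ₗᵢ[ℝ] V) v = v := by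
      intro t ht
      have hroot_mem : groot t ∈ Submodule.span ℝ (R : Set V) := by
        apply Submodule.subset_span
        simp only [hR, Finset.coe_sort_coe, List.coe_toFinset, Set.mem_setOf_eq]
        exact List.mem_map.mpr ⟨t, ht, rfl⟩
      have hperp : ⟪groot t, v⟫ = 0 := hv (groot t) hroot_mem
      rw [hgroot_spec t ht]
      exact refl_fix hperp
    set Stb : Subgroup W :=
      { carrier := {g : W | (g : V ≃ₗᵢ[ℝ] V) v = v}
        one_mem' := by simp
        mul_mem' := by
          intro a b ha hb
          simp only [Set.mem_setOf_eq] at *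
          rw [Subgroup.coe_mul, LinearIsometryEquiv.coe_mul, Function.comp_apply, hb, ha]
        inv_mem' := by
          intro a ha
          simp only [Set.mem_setOf_eq] at *
          conv_lhs => rw [← ha]
          show ((a : V ≃ₗᵢ[ℝ] V))⁻¹ ((a : V ≃ₗᵢ[ℝ] V) v) = v
          rw [inv_apply_eq_symm, LinearIsometryEquiv.symm_apply_apply] } with hStb
    have hStbtop : (⊤ : Subgroup W) ≤ Stb := by
      rw [← hquasi]
      apply Subgroup.closure_le Stb |>.mpr
      intro t ht
      exact hfixl t ht
    intro g
    exact hStbtop (Subgroup.mem_top g)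
  -- hence the expression has length at least dim V
  have hlow : Module.finrank ℝ V ≤ l.length := by
    have h1 : Module.finrank ℝ (Submodule.span ℝ (R : Set V)) = Module.finrank ℝ V := by
      rw [hspan, finrank_top]
    have h2 : Module.finrank ℝ (Submodule.span ℝ (R : Set V)) ≤ R.card :=
      finrank_span_finset_le_card R
    have h3 : R.card ≤ l.length := by
      rw [hR]
      exact le_trans (List.toFinset_card_le _) (by rw [List.length_map])
    omega
  rw [hlred] at hlow
  have hzero : Module.finrank ℝ (fixedSpace (w : V ≃ₗᵢ[ℝ] V)) = 0 := by omega
  constructor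
  · exact Submodule.finrank_eq_zero.mp hzero
  · omega
end
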